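/- arXiv:2207.01915 — 11 statements merged into one kernel-verified Lean document; each statement's English description precedes it below -/
import Mathlib

section
/- Let H be a complex Hilbert space and x, y, e ∈ H with ‖e‖ = 1. Then |⟨x,e⟩·⟨e,y⟩| ≤ (1/2)(‖x‖·‖y‖ + |⟨x,y⟩|) (Buzano's inequality). -/
theorem stmt3 {H : Type*} [NormedAddCommGroup H] [InnerProductSpace ℂ H]
    (x y e : H) (he : ‖e‖ = 1) :
    ‖(inner ℂ x e : ℂ) * (inner ℂ e y : ℂ)‖ ≤ (1 / 2) * (‖x‖ * ‖y‖ + ‖(inner ℂ x y : ℂ)‖) := by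
  set c : ℂ := inner ℂ e y with hc
  have key : (2 : ℂ) * (inner ℂ x e * inner ℂ e y) - inner ℂ x y
      = inner ℂ x ((2 : ℂ) • c • e - y) := by
    rw [inner_sub_right, inner_smul_right, inner_smul_right]
    ring
  have hnorm : ‖(2 : ℂ) • c • e - y‖ = ‖y‖ := by
    have h2 : ‖(2 : ℂ) • c • e - y‖ ^ 2 = ‖y‖ ^ 2 := by
      have := norm_sub_sq (𝕜 := ℂ) ((2 : ℂ) • c • e) y
      rw [this]
      have hce : ‖(2 : ℂ) • c • e‖ = 2 * ‖c‖ := by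
        simp [norm_smul, he]
      rw [hce, inner_smul_left, inner_smul_left, hc]
      simp only [map_mul, Complex.conj_ofNat, RingHom.id_apply]
      have hre : RCLike.re ((2 : ℂ) * ((starRingEnd ℂ) (inner ℂ e y) * (inner ℂ e y : ℂ)))
          = 2 * ‖(inner ℂ e y : ℂ)‖ ^ 2 := by
        set z := (inner ℂ e y : ℂ)
        have : (starRingEnd ℂ) z * z = (‖z‖ : ℂ) ^ 2 := by
          rw [← Complex.normSq_eq_conj_mul_self]
          norm_cast
          simp [Complex.normSq_eq_norm_sq]
        rw [this]
        norm_cast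
      rw [hre]
      ring
    have := congrArg Real.sqrt h2
    simpa [Real.sqrt_sq, norm_nonneg] using this
  have cs : ‖(inner ℂ x ((2 : ℂ) • c • e - y) : ℂ)‖ ≤ ‖x‖ * ‖y‖ := by
    calc ‖(inner ℂ x ((2 : ℂ) • c • e - y) : ℂ)‖ ≤ ‖x‖ * ‖(2 : ℂ) • c • e - y‖ :=
          norm_inner_le_norm x _
      _ = ‖x‖ * ‖y‖ := by rw [hnorm]
  have tri : ‖(2 : ℂ) * (inner ℂ x e * inner ℂ e y)‖
      ≤ ‖(2 : ℂ) * (inner ℂ x e * inner ℂ e y) - inner ℂ x y‖ + ‖(inner ℂ x y : ℂ)‖ := by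
    simpa using norm_add_le ((2 : ℂ) * (inner ℂ x e * inner ℂ e y) - inner ℂ x y) (inner ℂ x y)
  rw [key] at tri
  have h2 : ‖(2 : ℂ) * (inner ℂ x e * inner ℂ e y)‖ = 2 * ‖(inner ℂ x e : ℂ) * inner ℂ e y‖ := by
    rw [norm_mul]; norm_num
  linarith [tri.trans (add_le_add_left cs _)]
end

section
/- Let A be a positive bounded operator on a complex Hilbert space H and r ≥ 1 a real number. Then for every unit vector x ∈ H, ⟨Ax,x⟩^r ≤ ⟨A^r x, x⟩ (Hölder–McCarthy inequality). -/
/-- The numerical radius of a bounded operator on a complex Hilbert space. -/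
noncomputable def numRad {H : Type*} [NormedAddCommGroup H] [InnerProductSpace ℂ H]
    (A : H →L[ℂ] H) : ℝ :=
  ⨆ x : {x : H // ‖x‖ = 1}, ‖(inner ℂ (A x.1) x.1 : ℂ)‖

/-- The modulus `|A| = (A*A)^{1/2}`, via continuous functional calculus. -/
noncomputable def absOp {H : Type*} [NormedAddCommGroup H] [InnerProductSpace ℂ H]
    [CompleteSpace H] (A : H →L[ℂ] H) : H →L[ℂ] H :=
  cfc Real.sqrt (ContinuousLinearMap.adjoint A * A)

lemma tangent_rpow {c t r : ℝ} (hc : 0 ≤ c) (ht : 0 ≤ t) (hr : 1 ≤ r) :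
    c ^ r + r * c ^ (r - 1) * (t - c) ≤ t ^ r := by
  rcases hc.eq_or_lt with hc0 | hc0
  · rcases hr.eq_or_lt with hr1 | hr1
    · simp [← hc0, ← hr1, Real.rpow_one]
    · rw [← hc0, Real.zero_rpow (by positivity), Real.zero_rpow (by linarith)]
      simpa using Real.rpow_nonneg ht r
  · have hs : -1 ≤ t / c - 1 := by
      have : 0 ≤ t / c := div_nonneg ht hc0.le
      linarith
    have hb := one_add_mul_self_le_rpow_one_add hs hr
    have hcr : 0 < c ^ r := Real.rpow_pos_of_pos hc0 r
    have h1 : (1 : ℝ) + (t / c - 1) = t / c := by ring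
    rw [h1] at hb
    have hb2 : c ^ r * (1 + r * (t / c - 1)) ≤ c ^ r * (t / c) ^ r := by
      exact mul_le_mul_of_nonneg_left hb hcr.le
    rw [Real.div_rpow ht hc0.le] at hb2
    have hcr1 : c ^ (r - 1) = c ^ r / c := by
      rw [Real.rpow_sub hc0, Real.rpow_one]
    calc c ^ r + r * c ^ (r - 1) * (t - c)
        = c ^ r * (1 + r * (t / c - 1)) := by rw [hcr1]; field_simp
      _ ≤ c ^ r * (t ^ r / c ^ r) := hb2
      _ = t ^ r := by field_simp

variable {H : Type*} [NormedAddCommGroup H] [InnerProductSpace ℂ H] [CompleteSpace H]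

theorem stmt4 (A : H →L[ℂ] H) (hA : 0 ≤ A) (r : ℝ) (hr : 1 ≤ r)
    (x : H) (hx : ‖x‖ = 1) :
    ((inner ℂ (A x) x : ℂ).re) ^ r ≤ ((inner ℂ ((cfc (fun t : ℝ => t ^ r) A) x) x : ℂ)).re := by
  set c : ℝ := (inner ℂ (A x) x : ℂ).re with hc_def
  have hApos : A.IsPositive := (ContinuousLinearMap.nonneg_iff_isPositive A).mp hA
  have hc : 0 ≤ c := hApos.re_inner_nonneg_left x
  have hsa : IsSelfAdjoint A := hApos.isSelfAdjoint
  have hcont : Continuous (fun t : ℝ => t ^ r) := Real.continuous_rpow_const (by linarith)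
  set k : ℝ := r * c ^ (r - 1) with hk_def
  have key : cfc (fun t : ℝ => (c ^ r - k * c) + k * t) A ≤ cfc (fun t : ℝ => t ^ r) A := by
    refine cfc_mono (fun t ht => ?_) (by fun_prop) hcont.continuousOn
    have ht0 : 0 ≤ t := spectrum_nonneg_of_nonneg hA ht
    have := tangent_rpow hc ht0 hr
    rw [hk_def]; linarith [tangent_rpow hc ht0 hr]
  have haff : cfc (fun t : ℝ => (c ^ r - k * c) + k * t) A
      = (c ^ r - k * c) • (1 : H →L[ℂ] H) + k • A := by
    rw [cfc_add _ _ _ (by fun_prop) (by fun_prop), cfc_const _ _ hsa,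
      cfc_const_mul_id _ _ hsa, Algebra.algebraMap_eq_smul_one]
  rw [haff] at key
  have hpos := ((ContinuousLinearMap.le_def _ _).mp key).re_inner_nonneg_left x
  have hxx : (inner ℂ x x : ℂ) = 1 := by
    rw [inner_self_eq_norm_sq_to_K, hx]; norm_num
  have h1 : (inner ℂ (((c ^ r - k * c)) • x) x : ℂ) = ((c ^ r - k * c : ℝ) : ℂ) := by
    rw [RCLike.real_smul_eq_coe_smul (K := ℂ), inner_smul_left, hxx]; simp [Complex.conj_ofReal]
  have h2 : (inner ℂ (k • A x) x : ℂ) = (k : ℂ) * inner ℂ (A x) x := by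
    rw [RCLike.real_smul_eq_coe_smul (K := ℂ), inner_smul_left]; simp [Complex.conj_ofReal]
  simp only [ContinuousLinearMap.sub_apply, ContinuousLinearMap.add_apply,
    ContinuousLinearMap.smul_apply, ContinuousLinearMap.one_apply,
    inner_sub_left, inner_add_left, h1, h2, map_sub] at hpos
  have : RCLike.re ((inner ℂ ((cfc (fun t : ℝ => t ^ r) A) x) x : ℂ)) =
      ((inner ℂ ((cfc (fun t : ℝ => t ^ r) A) x) x : ℂ)).re := rfl
  rw [this] at hpos
  have hre : (((c ^ r - k * c : ℝ) : ℂ) + (k : ℂ) * inner ℂ (A x) x).re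
      = (c ^ r - k * c) + k * c := by
    simp [Complex.add_re, Complex.mul_re, hc_def]
  rw [show RCLike.re (((c ^ r - k * c : ℝ) : ℂ) + (k : ℂ) * inner ℂ (A x) x)
      = ((((c ^ r - k * c : ℝ) : ℂ) + (k : ℂ) * inner ℂ (A x) x)).re from rfl, hre] at hpos
  linarith
end

section
/- Let A be a positive (self-adjoint, nonnegative) bounded operator on a complex Hilbert space H and φ a convex continuous function on [0,∞) containing the spectrum of A. Then for every unit vector x ∈ H, φ(⟨Ax,x⟩) ≤ ⟨φ(A)x,x⟩ (operator Jensen inequality). -/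
variable {H : Type*} [NormedAddCommGroup H] [InnerProductSpace ℂ H] [CompleteSpace H]

/-- A convex function on `[0, ∞)` admits a subgradient at any interior point. -/
lemma exists_subgradient_aux (φ : ℝ → ℝ) (hconv : ConvexOn ℝ (Set.Ici 0) φ) {t₀ : ℝ}
    (ht₀ : 0 < t₀) : ∃ c : ℝ, ∀ t ∈ Set.Ici (0:ℝ), φ t₀ + c * (t - t₀) ≤ φ t := by
  set S : Set ℝ := (fun s => (φ t₀ - φ s) / (t₀ - s)) '' Set.Ico 0 t₀ with hS
  have hne : S.Nonempty := ⟨_, ⟨0, ⟨le_refl 0, ht₀⟩, rfl⟩⟩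
  have hub : ∀ y ∈ S, y ≤ (φ (t₀ + 1) - φ t₀) / (t₀ + 1 - t₀) := by
    rintro y ⟨s, hs, rfl⟩
    exact hconv.slope_mono_adjacent hs.1 (by simp; linarith) hs.2 (lt_add_one t₀)
  have hbdd : BddAbove S := ⟨_, hub⟩
  refine ⟨sSup S, fun t ht => ?_⟩
  rcases lt_trichotomy t t₀ with h | h | h
  · have hc : (φ t₀ - φ t) / (t₀ - t) ≤ sSup S := le_csSup hbdd ⟨t, ⟨ht, h⟩, rfl⟩
    rw [div_le_iff₀ (by linarith)] at hc
    nlinarith [hc]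
  · subst h; simp
  · have hc : sSup S ≤ (φ t - φ t₀) / (t - t₀) := by
      refine csSup_le hne ?_
      rintro y ⟨s, hs, rfl⟩
      exact hconv.slope_mono_adjacent hs.1 ht hs.2 h
    rw [le_div_iff₀ (by linarith)] at hc
    nlinarith [hc]

/-- If `x` is in the kernel of a selfadjoint operator `A`, then `cfcHom` applied to `x`
acts by scalar multiplication by the value at `0`. -/
lemma cfcHom_apply_of_ker_aux (A : H →L[ℂ] H) (ha : IsSelfAdjoint A) (x : H)
    (hAx : A x = 0) (h0 : (0:ℝ) ∈ spectrum ℝ A)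
    (g : C(spectrum ℝ A, ℝ)) :
    cfcHom ha g x = g ⟨0, h0⟩ • x := by
  induction g using ContinuousMap.induction_on_of_compact with
  | const r =>
    have : (ContinuousMap.const (spectrum ℝ A) r) = algebraMap ℝ C(spectrum ℝ A, ℝ) r := rfl
    rw [this, AlgHomClass.commutes, Algebra.algebraMap_eq_smul_one]
    simp
  | id =>
    rw [cfcHom_id ha]
    simp [hAx]
  | star_id =>
    rw [star_trivial, cfcHom_id ha]
    simp [hAx]
  | add f g hf hg =>
    rw [map_add, ContinuousLinearMap.add_apply, hf, hg]
    simp [add_smul]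
  | mul f g hf hg =>
    rw [map_mul, ContinuousLinearMap.mul_apply, hg,
      ContinuousLinearMap.map_smul_of_tower, hf]
    simp [smul_smul, mul_comm]
  | frequently f hf =>
    have hcl : IsClosed {g : C(spectrum ℝ A, ℝ) | cfcHom ha g x = g ⟨0, h0⟩ • x} := by
      apply isClosed_eq
      · exact (ContinuousLinearMap.apply ℂ H x).continuous.comp
          (cfcHom_isClosedEmbedding ha).continuous
      · exact (continuous_eval_const (F := C(spectrum ℝ A, ℝ)) _).smul continuous_const
    have hmem : f ∈ closure {g : C(spectrum ℝ A, ℝ) | cfcHom ha g x = g ⟨0, h0⟩ • x} :=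
      mem_closure_iff_frequently.mpr hf
    rw [hcl.closure_eq] at hmem
    exact hmem

lemma cfc_apply_of_ker_aux (A : H →L[ℂ] H) (ha : IsSelfAdjoint A) (x : H)
    (hAx : A x = 0) (h0 : (0:ℝ) ∈ spectrum ℝ A) (f : ℝ → ℝ)
    (hf : ContinuousOn f (spectrum ℝ A)) :
    cfc f A x = f 0 • x := by
  rw [cfc_apply f A ha hf, cfcHom_apply_of_ker_aux A ha x hAx h0]
  rfl

lemma inner_re_nonneg_of_nonneg_aux (B : H →L[ℂ] H) (hB : 0 ≤ B) (y : H) :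
    0 ≤ (inner ℂ (B y) y : ℂ).re := by
  rw [ContinuousLinearMap.nonneg_iff_isPositive] at hB
  exact (Complex.nonneg_iff.mp (hB.inner_nonneg_left y)).1

lemma inner_re_smul_aux (v x : H) (c : ℝ) :
    (inner ℂ (c • v) x : ℂ).re = c * (inner ℂ v x : ℂ).re := by
  rw [RCLike.real_smul_eq_coe_smul (K := ℂ), inner_smul_left]
  simp

theorem stmt5 (A : H →L[ℂ] H) (hA : 0 ≤ A) (φ : ℝ → ℝ)
    (hconv : ConvexOn ℝ (Set.Ici 0) φ) (hcont : ContinuousOn φ (Set.Ici 0))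
    (hspec : spectrum ℝ A ⊆ Set.Ici 0) (x : H) (hx : ‖x‖ = 1) :
    φ ((inner ℂ (A x) x : ℂ).re) ≤ ((inner ℂ ((cfc φ A) x) x : ℂ)).re := by
  have ha : IsSelfAdjoint A := IsSelfAdjoint.of_nonneg hA
  have hφcont : ContinuousOn φ (spectrum ℝ A) := hcont.mono hspec
  set t₀ : ℝ := (inner ℂ (A x) x : ℂ).re with ht₀
  have ht₀0 : 0 ≤ t₀ := inner_re_nonneg_of_nonneg_aux A hA x
  have hxx : (inner ℂ x x : ℂ) = 1 := by
    rw [inner_self_eq_norm_sq_to_K, hx]; norm_num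
  rcases ht₀0.lt_or_eq with hpos | heq
  · -- interior case: use a subgradient of φ at t₀
    obtain ⟨c, hc⟩ := exists_subgradient_aux φ hconv hpos
    set b : ℝ := φ t₀ - c * t₀ with hb
    have haff : cfc (fun t => c * t + b) A = c • A + algebraMap ℝ (H →L[ℂ] H) b := by
      rw [cfc_add (a := A) (fun t => c * t) (fun _ => b) (by fun_prop) (by fun_prop),
        cfc_const_mul_id c A ha, cfc_const b A ha]
    have hle : c • A + algebraMap ℝ (H →L[ℂ] H) b ≤ cfc φ A := by
      rw [← haff]
      refine cfc_mono (fun s hs => ?_) (by fun_prop) hφcont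
      have := hc s (hspec hs)
      nlinarith [this]
    have hnn : 0 ≤ cfc φ A - (c • A + algebraMap ℝ (H →L[ℂ] H) b) := sub_nonneg.mpr hle
    have h0' := inner_re_nonneg_of_nonneg_aux _ hnn x
    have hexp : (inner ℂ ((cfc φ A - (c • A + algebraMap ℝ (H →L[ℂ] H) b)) x) x : ℂ).re
        = (inner ℂ ((cfc φ A) x) x : ℂ).re - (c * t₀ + b) := by
      rw [ContinuousLinearMap.sub_apply, ContinuousLinearMap.add_apply, inner_sub_left,
        inner_add_left, Algebra.algebraMap_eq_smul_one, ContinuousLinearMap.smul_apply,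
        ContinuousLinearMap.smul_apply, ContinuousLinearMap.one_apply]
      rw [Complex.sub_re, Complex.add_re, inner_re_smul_aux, inner_re_smul_aux, hxx]
      simp [ht₀]
    rw [hexp] at h0'
    have : φ t₀ = c * t₀ + b := by rw [hb]; ring
    linarith [h0']
  · -- boundary case: ⟨Ax, x⟩ = 0 forces A x = 0
    have hB : A x = 0 := by
      set B : H →L[ℂ] H := cfc Real.sqrt A with hBdef
      have hBsa : IsSelfAdjoint B := cfc_predicate Real.sqrt A
      have hBB : B * B = A := by
        rw [hBdef, ← cfc_mul (a := A) Real.sqrt Real.sqrt (by fun_prop) (by fun_prop)]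
        calc cfc (fun t => Real.sqrt t * Real.sqrt t) A
            = cfc (fun t : ℝ => t) A := by
              refine cfc_congr (fun t ht => ?_)
              exact Real.mul_self_sqrt (hspec ht)
          _ = A := cfc_id' ℝ A
      have hsym := ContinuousLinearMap.isSelfAdjoint_iff_isSymmetric.mp hBsa
      have hinner : (inner ℂ (A x) x : ℂ).re = ‖B x‖ ^ 2 := by
        rw [← hBB, ContinuousLinearMap.mul_apply]
        rw [show (inner ℂ (B (B x)) x : ℂ) = inner ℂ (B x) (B x) from hsym (B x) x]
        rw [inner_self_eq_norm_sq_to_K]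
        norm_cast
      have hBx : B x = 0 := by
        have : ‖B x‖ ^ 2 = 0 := by rw [← hinner, ← ht₀, ← heq]
        simpa using this
      rw [← hBB, ContinuousLinearMap.mul_apply, hBx, map_zero]
    have h0spec : (0:ℝ) ∈ spectrum ℝ A := by
      rw [spectrum.zero_mem_iff]
      rintro ⟨u, hu⟩
      have h1 : (↑u⁻¹ * A : H →L[ℂ] H) x = ((1 : H →L[ℂ] H)) x := by
        rw [← hu, Units.inv_mul]
      rw [ContinuousLinearMap.mul_apply, hB, map_zero, ContinuousLinearMap.one_apply] at h1
      have : ‖x‖ = 0 := by rw [← h1]; simp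
      rw [hx] at this
      norm_num at this
    rw [← heq, cfc_apply_of_ker_aux A ha x hB h0spec φ hφcont, inner_re_smul_aux]
    rw [hxx]
    simp
end

section
/- Let A be a bounded linear operator on a complex Hilbert space H, and let f, g : [0,∞) → [0,∞) be continuous functions with f(t)g(t) = t for all t ≥ 0. Then for all x, y ∈ H, |⟨Ax,y⟩| ≤ ‖f(|A|)x‖ · ‖g(|A*|)y‖ (Kittaneh's mixed Cauchy–Schwarz inequality). -/
variable {H : Type*} [NormedAddCommGroup H] [InnerProductSpace ℂ H] [CompleteSpace H]


lemma pow_intertwine (A : H →L[ℂ] H) (n : ℕ) :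
    A * (star A * A) ^ n = (A * star A) ^ n * A := by
  induction n with
  | zero => simp
  | succ n ih =>
    have h1 : (star A * A) ^ (n + 1) = star A * A * (star A * A) ^ n := pow_succ' _ _
    have h2 : (A * star A) ^ (n + 1) = A * star A * (A * star A) ^ n := pow_succ' _ _
    rw [h1, h2, ← mul_assoc, ← mul_assoc, mul_assoc (A * star A), ih, ← mul_assoc]

lemma poly_intertwine (A : H →L[ℂ] H) (q : Polynomial ℝ) :
    A * Polynomial.aeval (star A * A) q = Polynomial.aeval (A * star A) q * A := by
  induction q using Polynomial.induction_on with
  | C r => simp [Polynomial.aeval_C, Algebra.algebraMap_eq_smul_one, smul_mul_assoc,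
      mul_smul_comm]
  | add p q hp hq => simp [mul_add, add_mul, hp, hq]
  | monomial n r ih =>
    simp only [map_mul, map_pow, Polynomial.aeval_C, Polynomial.aeval_X,
      Algebra.algebraMap_eq_smul_one, smul_mul_assoc, one_mul, mul_smul_comm]
    rw [pow_intertwine]

lemma cfc_intertwine (A : H →L[ℂ] H) (h : ℝ → ℝ) (hh : Continuous h) :
    A * cfc h (star A * A) = cfc h (A * star A) * A := by
  set P := star A * A with hPdef
  set Q := A * star A with hQdef
  have hP : IsSelfAdjoint P := .star_mul_self A
  have hQ : IsSelfAdjoint Q := by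
    exact IsSelfAdjoint.mul_star_self A
  set M : ℝ := max (‖P‖ * ‖(1 : H →L[ℂ] H)‖) (‖Q‖ * ‖(1 : H →L[ℂ] H)‖) with hM
  have hsP : spectrum ℝ P ⊆ Set.Icc (-M) M := by
    intro t ht
    have := spectrum.norm_le_norm_mul_of_mem ht
    rw [Real.norm_eq_abs] at this
    exact Set.mem_Icc.mpr (abs_le.mp (this.trans (le_max_left _ _)))
  have hsQ : spectrum ℝ Q ⊆ Set.Icc (-M) M := by
    intro t ht
    have := spectrum.norm_le_norm_mul_of_mem ht
    rw [Real.norm_eq_abs] at this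
    exact Set.mem_Icc.mpr (abs_le.mp (this.trans (le_max_right _ _)))
  set s : Set ℝ := Set.Icc (-M) M with hs
  set φ : C(s, ℝ) := ContinuousMap.restrict s ⟨h, hh⟩ with hφ
  have hmem : φ ∈ closure ((polynomialFunctions s : Set C(s, ℝ))) := by
    have : φ ∈ (polynomialFunctions s).topologicalClosure := by
      rw [polynomialFunctions_closure_eq_top (-M) M]; trivial
    exact this
  obtain ⟨u, hu_mem, hu_tend⟩ := mem_closure_iff_seq_limit.mp hmem
  refine sub_eq_zero.mp (norm_le_zero_iff.mp ?_)
  refine le_of_forall_pos_le_add (fun ε hε => ?_)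
  rw [zero_add]
  -- choose n with ‖u n - φ‖ small
  have htend : Filter.Tendsto (fun n => ‖u n - φ‖) Filter.atTop (nhds 0) := by
    have := hu_tend
    rw [Metric.tendsto_atTop] at this ⊢
    intro δ hδ
    obtain ⟨N, hN⟩ := this δ hδ
    exact ⟨N, fun n hn => by
      rw [Real.dist_eq, sub_zero, abs_of_nonneg (norm_nonneg _), ← dist_eq_norm]; exact hN n hn⟩
  have hε' : 0 < ε / (2 * ‖A‖ + 1) := by positivity
  obtain ⟨n, hN⟩ := Metric.tendsto_atTop.mp htend (ε / (2 * ‖A‖ + 1)) hε'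
  have hn : ‖u n - φ‖ < ε / (2 * ‖A‖ + 1) := by
    have := hN n le_rfl
    rwa [Real.dist_eq, sub_zero, abs_of_nonneg (norm_nonneg _)] at this
  have hmem' := hu_mem n
  rw [polynomialFunctions_coe] at hmem'
  obtain ⟨q, hq⟩ := hmem'
  have hqev : ∀ t ∈ s, |q.eval t - h t| ≤ ε / (2 * ‖A‖ + 1) := by
    intro t ht
    have h1 : |(u n - φ) ⟨t, ht⟩| ≤ ‖u n - φ‖ := (u n - φ).norm_coe_le_norm ⟨t, ht⟩
    have : ‖u n - φ‖ < ε / (2 * ‖A‖ + 1) := hn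
    have h2 : (u n - φ) ⟨t, ht⟩ = q.eval t - h t := by
      simp [← hq, hφ]
    rw [h2] at h1
    exact h1.trans this.le
  -- now estimate
  have hcb : ∀ (R : H →L[ℂ] H), IsSelfAdjoint R → spectrum ℝ R ⊆ s →
      ‖cfc h R - cfc q.eval R‖ ≤ ε / (2 * ‖A‖ + 1) := by
    intro R hR hsR
    rw [← cfc_sub h q.eval R (hh.continuousOn) (q.continuous_aeval.continuousOn)]
    refine norm_cfc_le hε'.le (fun t ht => ?_)
    rw [Real.norm_eq_abs, abs_sub_comm]
    exact hqev t (hsR ht)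
  have key : A * Polynomial.aeval P q = Polynomial.aeval Q q * A := poly_intertwine A q
  have e1 : A * cfc h P - cfc h Q * A
      = A * (cfc h P - cfc q.eval P) - (cfc h Q - cfc q.eval Q) * A := by
    rw [mul_sub, sub_mul, cfc_polynomial q P hP, cfc_polynomial q Q hQ, key]
    abel
  rw [e1]
  calc ‖A * (cfc h P - cfc q.eval P) - (cfc h Q - cfc q.eval Q) * A‖
      ≤ ‖A * (cfc h P - cfc q.eval P)‖ + ‖(cfc h Q - cfc q.eval Q) * A‖ := norm_sub_le _ _
    _ ≤ ‖A‖ * (ε / (2 * ‖A‖ + 1)) + (ε / (2 * ‖A‖ + 1)) * ‖A‖ := by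
        refine add_le_add ?_ ?_
        · exact (norm_mul_le _ _).trans (by
            apply mul_le_mul_of_nonneg_left (hcb P hP hsP) (norm_nonneg A))
        · exact (norm_mul_le _ _).trans (by
            apply mul_le_mul_of_nonneg_right (hcb Q hQ hsQ) (norm_nonneg A))
    _ ≤ ε := by
        have h1 : (0:ℝ) < 2 * ‖A‖ + 1 := by positivity
        have h2 : ‖A‖ * (ε / (2 * ‖A‖ + 1)) + (ε / (2 * ‖A‖ + 1)) * ‖A‖
            = (2 * ‖A‖) * (ε / (2 * ‖A‖ + 1)) := by ring
        rw [h2]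
        calc (2 * ‖A‖) * (ε / (2 * ‖A‖ + 1))
            ≤ (2 * ‖A‖ + 1) * (ε / (2 * ‖A‖ + 1)) := by
              apply mul_le_mul_of_nonneg_right (by linarith) (by positivity)
          _ = ε := by field_simp

lemma norm_apply_eq_kittaneh (A : H →L[ℂ] H) (z : H) :
    ‖A z‖ = ‖cfc Real.sqrt (star A * A) z‖ := by
  set P := star A * A with hPdef
  have hPsa : IsSelfAdjoint P := .star_mul_self A
  set B := cfc Real.sqrt P with hBdef
  have hBsa : IsSelfAdjoint B := cfc_predicate Real.sqrt P
  have hBB : B * B = P := by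
    rw [hBdef, ← cfc_mul Real.sqrt Real.sqrt P Real.continuous_sqrt.continuousOn
      Real.continuous_sqrt.continuousOn]
    have he : (spectrum ℝ P).EqOn (fun t => Real.sqrt t * Real.sqrt t) id := fun t ht =>
      Real.mul_self_sqrt (spectrum_nonneg_of_nonneg (star_mul_self_nonneg A) ht)
    rw [cfc_congr he, cfc_id ℝ P hPsa]
  have h1 : (inner ℂ (A z) (A z) : ℂ) = inner ℂ z (P z) := by
    rw [hPdef, ContinuousLinearMap.mul_apply]
    exact (ContinuousLinearMap.adjoint_inner_right A z (A z)).symm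
  have h2 : (inner ℂ (B z) (B z) : ℂ) = inner ℂ z (P z) := by
    conv_rhs => rw [← hBB]
    rw [ContinuousLinearMap.mul_apply]
    have hBadj : ContinuousLinearMap.adjoint B = B := hBsa
    calc (inner ℂ (B z) (B z) : ℂ) = inner ℂ (ContinuousLinearMap.adjoint B z) (B z) := by
          rw [hBadj]
      _ = inner ℂ z (B (B z)) := ContinuousLinearMap.adjoint_inner_left B (B z) z
  have h3 : (‖A z‖ : ℝ)^2 = (‖B z‖ : ℝ)^2 := by
    have hre := congrArg (RCLike.re (K := ℂ)) (h1.trans h2.symm)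
    rwa [inner_self_eq_norm_sq, inner_self_eq_norm_sq] at hre
  calc ‖A z‖ = Real.sqrt (‖A z‖ ^ 2) := (Real.sqrt_sq (norm_nonneg _)).symm
    _ = Real.sqrt (‖B z‖ ^ 2) := by rw [h3]
    _ = ‖B z‖ := Real.sqrt_sq (norm_nonneg _)

set_option maxHeartbeats 2000000 in
theorem stmt6 (A : H →L[ℂ] H) (f g : ℝ → ℝ)
    (hfc : ContinuousOn f (Set.Ici 0)) (hgc : ContinuousOn g (Set.Ici 0))
    (hf0 : ∀ t : ℝ, 0 ≤ t → 0 ≤ f t) (hg0 : ∀ t : ℝ, 0 ≤ t → 0 ≤ g t)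
    (hfg : ∀ t : ℝ, 0 ≤ t → f t * g t = t) (x y : H) :
    ‖(inner ℂ (A x) y : ℂ)‖ ≤
      ‖(cfc f (absOp A)) x‖ * ‖(cfc g (absOp (ContinuousLinearMap.adjoint A))) y‖ := by
  set P := star A * A with hPdef
  set Q := A * star A with hQdef
  have hPsa : IsSelfAdjoint P := .star_mul_self A
  have hQsa : IsSelfAdjoint Q := .mul_star_self A
  have hPsp : ∀ t ∈ spectrum ℝ P, 0 ≤ t := fun t ht =>
    spectrum_nonneg_of_nonneg (star_mul_self_nonneg A) ht
  have hQsp : ∀ t ∈ spectrum ℝ Q, 0 ≤ t := fun t ht =>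
    spectrum_nonneg_of_nonneg (mul_star_self_nonneg A) ht
  set Fc : ℝ → ℝ := fun t => f (Real.sqrt t) with hFcdef
  set Gc : ℝ → ℝ := fun t => g (Real.sqrt t) with hGcdef
  have hFcont : Continuous Fc :=
    hfc.comp_continuous Real.continuous_sqrt (fun t => Real.sqrt_nonneg t)
  have hGcont : Continuous Gc :=
    hgc.comp_continuous Real.continuous_sqrt (fun t => Real.sqrt_nonneg t)
  -- rewrite the goal
  have himP : ∀ t ∈ Real.sqrt '' spectrum ℝ P, (0:ℝ) ≤ t := by
    rintro t ⟨u, hu, rfl⟩; exact Real.sqrt_nonneg u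
  have himQ : ∀ t ∈ Real.sqrt '' spectrum ℝ Q, (0:ℝ) ≤ t := by
    rintro t ⟨u, hu, rfl⟩; exact Real.sqrt_nonneg u
  have hLf : cfc f (absOp A) = cfc Fc P := by
    have : absOp A = cfc Real.sqrt P := rfl
    rw [this, ← cfc_comp' f Real.sqrt P (hfc.mono himP) Real.continuous_sqrt.continuousOn hPsa]
  have hLg : cfc g (absOp (ContinuousLinearMap.adjoint A)) = cfc Gc Q := by
    have h0 : absOp (ContinuousLinearMap.adjoint A) = cfc Real.sqrt Q := by
      rw [absOp, ContinuousLinearMap.adjoint_adjoint]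
      rfl
    rw [h0, ← cfc_comp' g Real.sqrt Q (hgc.mono himQ) Real.continuous_sqrt.continuousOn hQsa]
  rw [hLf, hLg]
  -- norm transfer lemmas
  have hnA : ∀ z, ‖A z‖ = ‖cfc Real.sqrt P z‖ := norm_apply_eq_kittaneh A
  have hnAs : ∀ z, ‖(star A) z‖ = ‖cfc Real.sqrt Q z‖ := by
    intro z
    have := norm_apply_eq_kittaneh (star A) z
    rwa [star_star] at this
  -- the main estimate for a given ε
  have main : ∀ ε : ℝ, 0 < ε →
      ‖(inner ℂ (A x) y : ℂ)‖ ≤ ‖cfc Fc P x‖ * ‖cfc Gc Q y‖ + Real.sqrt ε * (‖x‖ * ‖y‖) := by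
    intro ε hε
    set N : ℝ → ℝ := fun t => max t 0 with hNdef
    have hNcont : Continuous N := continuous_id.max continuous_const
    have hNnn : ∀ t, 0 ≤ N t := fun t => le_max_right t 0
    have hden : ∀ t, N t + ε ≠ 0 := fun t =>
      (add_pos_of_nonneg_of_pos (hNnn t) hε).ne'
    set mE : ℝ → ℝ := fun t => N t / (N t + ε) with hmEdef
    set rE : ℝ → ℝ := fun t => ε / (N t + ε) with hrEdef
    set kE : ℝ → ℝ := fun t => Gc t * Real.sqrt t / (N t + ε) with hkEdef
    have hmEc : Continuous mE := hNcont.div (hNcont.add continuous_const) hden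
    have hrEc : Continuous rE := continuous_const.div (hNcont.add continuous_const) hden
    have hkEc : Continuous kE :=
      (hGcont.mul Real.continuous_sqrt).div (hNcont.add continuous_const) hden
    -- split the identity
    have hsplit : cfc mE P + cfc rE P = 1 := by
      rw [← cfc_add P mE rE hmEc.continuousOn hrEc.continuousOn]
      have he : (fun t => mE t + rE t) = fun _ => (1:ℝ) := funext fun t => by
        rw [hmEdef, hrEdef]
        field_simp
        exact div_self (hden t)
      rw [he, ← Pi.one_def, cfc_one ℝ P hPsa]
    have hxsplit : cfc mE P x + cfc rE P x = x := by
      have := congrArg (fun T : H →L[ℂ] H => T x) hsplit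
      simpa using this
    have hdecomp : (inner ℂ (A x) y : ℂ)
        = inner ℂ (A (cfc mE P x)) y + inner ℂ (A (cfc rE P x)) y := by
      conv_lhs => rw [← hxsplit]
      rw [map_add, inner_add_left]
    -- term 1
    have h1 : A * cfc mE P = cfc kE Q * (A * cfc Fc P) := by
      have e1 : cfc mE P = cfc kE P * cfc Fc P := by
        rw [← cfc_mul kE Fc P hkEc.continuousOn hFcont.continuousOn]
        apply cfc_congr
        intro t ht
        have h0 := hPsp t ht
        have hNt : N t = t := max_eq_left h0
        show N t / (N t + ε) = Gc t * Real.sqrt t / (N t + ε) * Fc t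
        rw [hNt]
        have he5 : Gc t * Real.sqrt t / (t + ε) * Fc t
            = (Fc t * Gc t) * Real.sqrt t / (t + ε) := by ring
        rw [he5]
        have he6 : Fc t * Gc t = Real.sqrt t := hfg (Real.sqrt t) (Real.sqrt_nonneg t)
        rw [he6, Real.mul_self_sqrt h0]
      rw [e1, ← mul_assoc, cfc_intertwine A kE hkEc, mul_assoc]
    have hterm1 : ‖(inner ℂ (A (cfc mE P x)) y : ℂ)‖ ≤ ‖cfc Fc P x‖ * ‖cfc Gc Q y‖ := by
      have hx1 : A (cfc mE P x) = cfc kE Q (A (cfc Fc P x)) := by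
        have := congrArg (fun T : H →L[ℂ] H => T x) h1
        simpa [ContinuousLinearMap.mul_apply] using this
      have hk_sa : IsSelfAdjoint (cfc kE Q) := cfc_predicate kE Q
      have hk_adj : ContinuousLinearMap.adjoint (cfc kE Q) = cfc kE Q := hk_sa
      have hmove : (inner ℂ (A (cfc mE P x)) y : ℂ)
          = inner ℂ (cfc Fc P x) ((star A) (cfc kE Q y)) := by
        rw [hx1]
        calc (inner ℂ (cfc kE Q (A (cfc Fc P x))) y : ℂ)
            = inner ℂ (ContinuousLinearMap.adjoint (cfc kE Q) (A (cfc Fc P x))) y := by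
              rw [hk_adj]
          _ = inner ℂ (A (cfc Fc P x)) (cfc kE Q y) :=
              ContinuousLinearMap.adjoint_inner_left (cfc kE Q) y (A (cfc Fc P x))
          _ = inner ℂ (cfc Fc P x) ((star A) (cfc kE Q y)) :=
              (ContinuousLinearMap.adjoint_inner_right A (cfc Fc P x) (cfc kE Q y)).symm
      rw [hmove]
      refine (norm_inner_le_norm _ _).trans ?_
      have hnorm2 : ‖(star A) (cfc kE Q y)‖ ≤ ‖cfc Gc Q y‖ := by
        rw [hnAs]
        have e2 : cfc Real.sqrt Q (cfc kE Q y) = cfc mE Q (cfc Gc Q y) := by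
          have e3 : cfc Real.sqrt Q * cfc kE Q = cfc mE Q * cfc Gc Q := by
            rw [← cfc_mul Real.sqrt kE Q Real.continuous_sqrt.continuousOn hkEc.continuousOn,
              ← cfc_mul mE Gc Q hmEc.continuousOn hGcont.continuousOn]
            apply cfc_congr
            intro t ht
            have h0 := hQsp t ht
            have hNt : N t = t := max_eq_left h0
            show Real.sqrt t * (Gc t * Real.sqrt t / (N t + ε)) = N t / (N t + ε) * Gc t
            rw [hNt]
            have he7 : Real.sqrt t * (Gc t * Real.sqrt t / (t + ε))
                = (Real.sqrt t * Real.sqrt t) / (t + ε) * Gc t := by ring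
            rw [he7, Real.mul_self_sqrt h0]
          have := congrArg (fun T : H →L[ℂ] H => T y) e3
          simpa [ContinuousLinearMap.mul_apply] using this
        rw [e2]
        calc ‖cfc mE Q (cfc Gc Q y)‖ ≤ ‖cfc mE Q‖ * ‖cfc Gc Q y‖ :=
              (cfc mE Q).le_opNorm _
          _ ≤ 1 * ‖cfc Gc Q y‖ := by
              apply mul_le_mul_of_nonneg_right _ (norm_nonneg _)
              refine norm_cfc_le zero_le_one (fun t ht => ?_)
              rw [Real.norm_eq_abs]
              show |N t / (N t + ε)| ≤ 1
              rw [abs_of_nonneg (div_nonneg (hNnn t) (add_pos_of_nonneg_of_pos (hNnn t) hε).le)]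
              rw [div_le_one (add_pos_of_nonneg_of_pos (hNnn t) hε)]
              linarith
          _ = ‖cfc Gc Q y‖ := one_mul _
      exact mul_le_mul_of_nonneg_left hnorm2 (norm_nonneg _)
    -- term 2
    have hterm2 : ‖(inner ℂ (A (cfc rE P x)) y : ℂ)‖ ≤ Real.sqrt ε * (‖x‖ * ‖y‖) := by
      refine (norm_inner_le_norm _ _).trans ?_
      have e4 : ‖A (cfc rE P x)‖ = ‖cfc (fun t => Real.sqrt t * rE t) P x‖ := by
        have e5 : cfc (fun t => Real.sqrt t * rE t) P = cfc Real.sqrt P * cfc rE P :=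
          cfc_mul Real.sqrt rE P Real.continuous_sqrt.continuousOn hrEc.continuousOn
        rw [e5, ContinuousLinearMap.mul_apply, hnA]
      rw [e4]
      have e6 : ‖cfc (fun t => Real.sqrt t * rE t) P x‖ ≤ Real.sqrt ε * ‖x‖ := by
        refine ((cfc (fun t => Real.sqrt t * rE t) P).le_opNorm x).trans ?_
        apply mul_le_mul_of_nonneg_right _ (norm_nonneg x)
        refine norm_cfc_le (Real.sqrt_nonneg ε) (fun t ht => ?_)
        have h0 := hPsp t ht
        have hNt : N t = t := max_eq_left h0
        rw [Real.norm_eq_abs]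
        show |Real.sqrt t * (ε / (N t + ε))| ≤ Real.sqrt ε
        rw [hNt]
        have hpos : (0:ℝ) < t + ε := by positivity
        rw [abs_of_nonneg (by positivity)]
        have he8 : Real.sqrt t * (ε / (t + ε)) = (Real.sqrt t * ε) / (t + ε) := by ring
        rw [he8, div_le_iff₀ hpos]
        have hst := Real.sqrt_nonneg t
        have hse := Real.sqrt_nonneg ε
        have h2 : 2 * (Real.sqrt t * Real.sqrt ε) ≤ t + ε := by
          nlinarith [sq_nonneg (Real.sqrt t - Real.sqrt ε), Real.sq_sqrt h0, Real.sq_sqrt hε.le]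
        have h4 : Real.sqrt t * Real.sqrt ε ≤ t + ε := by nlinarith [mul_nonneg hst hse]
        have h3 : Real.sqrt t * ε = (Real.sqrt t * Real.sqrt ε) * Real.sqrt ε := by
          rw [mul_assoc, Real.mul_self_sqrt hε.le]
        rw [h3]
        exact (mul_le_mul_of_nonneg_right h4 hse).trans (le_of_eq (mul_comm _ _))
      have e7 : ‖cfc (fun t => Real.sqrt t * rE t) P x‖ * ‖y‖ ≤ Real.sqrt ε * ‖x‖ * ‖y‖ :=
        mul_le_mul_of_nonneg_right e6 (norm_nonneg y)
      exact e7.trans (le_of_eq (by ring))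
    rw [hdecomp]
    exact (norm_add_le _ _).trans (add_le_add hterm1 hterm2)
  -- conclude
  refine le_of_forall_pos_le_add (fun δ hδ => ?_)
  set c : ℝ := ‖x‖ * ‖y‖ + 1 with hcdef
  have hc : 0 < c := by positivity
  have hε : (0:ℝ) < (δ / c) ^ 2 := by positivity
  have hkey := main ((δ / c) ^ 2) hε
  have hsq : Real.sqrt ((δ / c) ^ 2) = δ / c := Real.sqrt_sq (by positivity)
  rw [hsq] at hkey
  refine hkey.trans ?_
  have : δ / c * (‖x‖ * ‖y‖) ≤ δ := by
    rw [div_mul_eq_mul_div, div_le_iff₀ hc]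
    have hxy : ‖x‖ * ‖y‖ ≤ c := by rw [hcdef]; linarith
    nlinarith [hδ.le]
  linarith
end

section
/- Let A be a bounded operator on a complex Hilbert space H and α ∈ [0,1]. Then for all x, y ∈ H, |⟨Ax,y⟩|² ≤ ⟨|A|^{2α}x,x⟩ · ⟨|A*|^{2(1−α)}y,y⟩ (Kato's inequality). -/
open ContinuousLinearMap Polynomial
set_option maxHeartbeats 1000000

variable {H : Type*} [NormedAddCommGroup H] [InnerProductSpace ℂ H] [CompleteSpace H]

section Aux

lemma kato_cont_rpow_const {c : ℝ} (hc : 0 ≤ c) : Continuous fun t : ℝ => t ^ c :=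
  continuous_iff_continuousAt.mpr fun x => Real.continuousAt_rpow_const x c (Or.inr hc)

lemma kato_rpow_add_le {t e p : ℝ} (ht : 0 ≤ t) (he : 0 ≤ e) (hp : 0 ≤ p) (hp1 : p ≤ 1) :
    (t + e) ^ p ≤ t ^ p + e ^ p := by
  lift t to NNReal using ht
  lift e to NNReal using he
  have := NNReal.rpow_add_le_add_rpow t e hp hp1
  exact_mod_cast this

lemma kato_intertwine_pow (A : H →L[ℂ] H) (n : ℕ) :
    A * (adjoint A * A)^n = (A * adjoint A)^n * A := by
  induction n with
  | zero => simp
  | succ n ih =>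
    rw [pow_succ, ← mul_assoc, ih, pow_succ]
    simp only [mul_assoc]

lemma kato_intertwine_aeval (A : H →L[ℂ] H) (p : ℝ[X]) :
    A * aeval (adjoint A * A) p = aeval (A * adjoint A) p * A := by
  induction p using Polynomial.induction_on with
  | C r => simp [Algebra.algebraMap_eq_smul_one, mul_smul_comm, smul_mul_assoc]
  | add p q hp hq => simp [mul_add, add_mul, hp, hq]
  | monomial n r _ =>
    simp only [map_mul, aeval_C, map_pow, aeval_X, Algebra.algebraMap_eq_smul_one,
      smul_mul_assoc, one_mul, mul_smul_comm]
    rw [kato_intertwine_pow]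

lemma kato_spec_sub [Nontrivial H] (B : H →L[ℂ] H) (hB : 0 ≤ B) :
    spectrum ℝ B ⊆ Set.Icc 0 ‖B‖ := fun t ht =>
  ⟨spectrum_nonneg_of_nonneg hB ht,
    (le_abs_self t).trans (by simpa using spectrum.norm_le_norm_of_mem ht)⟩

lemma kato_adj_mul_self_nonneg (A : H →L[ℂ] H) : 0 ≤ adjoint A * A := by
  simpa [star_eq_adjoint] using star_mul_self_nonneg A

lemma kato_self_mul_adj_nonneg (A : H →L[ℂ] H) : 0 ≤ A * adjoint A := by
  simpa [star_eq_adjoint, adjoint_adjoint] using star_mul_self_nonneg (adjoint A)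

lemma kato_adj_mul_self_sa (A : H →L[ℂ] H) : IsSelfAdjoint (adjoint A * A) :=
  (kato_adj_mul_self_nonneg A).isSelfAdjoint

lemma kato_self_mul_adj_sa (A : H →L[ℂ] H) : IsSelfAdjoint (A * adjoint A) :=
  (kato_self_mul_adj_nonneg A).isSelfAdjoint

lemma kato_intertwine_cfc [Nontrivial H] (A : H →L[ℂ] H) (h : ℝ → ℝ) (hh : Continuous h) :
    A * cfc h (adjoint A * A) = cfc h (A * adjoint A) * A := by
  set S := adjoint A * A with hS
  set T := A * adjoint A with hT
  have hSp : 0 ≤ S := kato_adj_mul_self_nonneg A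
  have hTp : 0 ≤ T := kato_self_mul_adj_nonneg A
  set M : ℝ := max ‖S‖ ‖T‖ with hM
  have hSsub : spectrum ℝ S ⊆ Set.Icc 0 M :=
    (kato_spec_sub S hSp).trans (Set.Icc_subset_Icc le_rfl (le_max_left _ _))
  have hTsub : spectrum ℝ T ⊆ Set.Icc 0 M :=
    (kato_spec_sub T hTp).trans (Set.Icc_subset_Icc le_rfl (le_max_right _ _))
  have key : ∀ δ : ℝ, 0 < δ → ‖A * cfc h S - cfc h T * A‖ ≤ 2 * ‖A‖ * δ := by
    intro δ hδ
    obtain ⟨p, hp⟩ := exists_polynomial_near_of_continuousOn 0 M h hh.continuousOn δ hδ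
    have hcS : A * cfc p.eval S = cfc p.eval T * A := by
      rw [cfc_polynomial (ha := kato_adj_mul_self_sa A),
        cfc_polynomial (ha := kato_self_mul_adj_sa A), kato_intertwine_aeval]
    have e1 : ‖cfc h S - cfc p.eval S‖ ≤ δ := by
      rw [← cfc_sub _ _ S hh.continuousOn p.continuous.continuousOn]
      exact norm_cfc_le hδ.le fun t ht => by
        simpa [abs_sub_comm] using (hp t (hSsub ht)).le
    have e2 : ‖cfc h T - cfc p.eval T‖ ≤ δ := by
      rw [← cfc_sub _ _ T hh.continuousOn p.continuous.continuousOn]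
      exact norm_cfc_le hδ.le fun t ht => by
        simpa [abs_sub_comm] using (hp t (hTsub ht)).le
    calc ‖A * cfc h S - cfc h T * A‖
        = ‖A * (cfc h S - cfc p.eval S) - (cfc h T - cfc p.eval T) * A‖ := by
          rw [mul_sub, sub_mul, hcS]; abel_nf
      _ ≤ ‖A * (cfc h S - cfc p.eval S)‖ + ‖(cfc h T - cfc p.eval T) * A‖ := norm_sub_le _ _
      _ ≤ ‖A‖ * δ + δ * ‖A‖ := by
          refine add_le_add ((norm_mul_le _ _).trans ?_) ((norm_mul_le _ _).trans ?_)
          · exact mul_le_mul_of_nonneg_left e1 (norm_nonneg _)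
          · exact mul_le_mul_of_nonneg_right e2 (norm_nonneg _)
      _ = 2 * ‖A‖ * δ := by ring
  rw [← sub_eq_zero, ← norm_le_zero_iff]
  have h0 : Filter.Tendsto (fun δ : ℝ => 2 * ‖A‖ * δ) (nhdsWithin 0 (Set.Ioi 0)) (nhds 0) := by
    have hc : Continuous (fun δ : ℝ => 2 * ‖A‖ * δ) := continuous_const.mul continuous_id
    have := hc.tendsto (0:ℝ)
    simpa using this.mono_left nhdsWithin_le_nhds
  exact ge_of_tendsto h0 (Filter.eventually_of_mem self_mem_nhdsWithin fun δ hδ => key δ hδ)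

lemma kato_form_nonneg {B : H →L[ℂ] H} (hB : 0 ≤ B) (v : H) :
    0 ≤ (inner ℂ (B v) v : ℂ).re := by
  have := ((nonneg_iff_isPositive B).mp hB).inner_nonneg_left v
  exact (Complex.nonneg_iff.mp this).1

lemma kato_form_mono {B C : H →L[ℂ] H} (h : B ≤ C) (v : H) :
    (inner ℂ (B v) v : ℂ).re ≤ (inner ℂ (C v) v : ℂ).re := by
  have h' := ((le_def B C).mp h).inner_nonneg_left v
  simp only [ContinuousLinearMap.sub_apply, inner_sub_left, map_sub] at h'
  have h'' : (0:ℝ) ≤ (inner ℂ (C v) v : ℂ).re - (inner ℂ (B v) v : ℂ).re := by simpa using (Complex.nonneg_iff.mp h').1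
  linarith

lemma kato_sq_norm_eq_form {P : H →L[ℂ] H} (hP : IsSelfAdjoint P) (v : H) :
    ‖P v‖ ^ 2 = (inner ℂ ((P * P) v) v : ℂ).re := by
  have hP' : adjoint P = P := by rw [← star_eq_adjoint]; exact hP.star_eq
  have : (inner ℂ ((P * P) v) v : ℂ) = inner ℂ (P v) (P v) := by
    rw [ContinuousLinearMap.mul_apply]
    calc (inner ℂ (P (P v)) v : ℂ) = inner ℂ ((adjoint P) (P v)) v := by rw [hP']
      _ = inner ℂ (P v) (P v) := adjoint_inner_left P v (P v)
  rw [this, ← inner_self_eq_norm_sq (𝕜 := ℂ) (P v)]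
  rfl

lemma kato_habs_gen (B : H →L[ℂ] H) (c : ℝ) (hc : 0 ≤ c) :
    cfc (fun t : ℝ => t ^ (2 * c)) (absOp B) = cfc (fun t : ℝ => t ^ c) (adjoint B * B) := by
  rw [absOp, ← cfc_comp (fun t : ℝ => t ^ (2 * c)) Real.sqrt (adjoint B * B)
    (kato_adj_mul_self_sa B)
    ((kato_cont_rpow_const (by positivity)).continuousOn)
    (Real.continuous_sqrt.continuousOn)]
  refine cfc_congr fun t ht => ?_
  have ht0 : 0 ≤ t := spectrum_nonneg_of_nonneg (kato_adj_mul_self_nonneg B) ht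
  simp only [Function.comp_apply]
  rw [Real.sqrt_eq_rpow, ← Real.rpow_mul ht0, show (1/2 : ℝ) * (2 * c) = c by ring]

lemma kato_re_inner_smul (r : ℝ) (v : H) : (inner ℂ (r • v) v : ℂ).re = r * ‖v‖ ^ 2 := by
  have hx : r • v = (r : ℂ) • v := by
    rw [← smul_one_smul ℂ r v, Complex.real_smul, mul_one]
  rw [hx, inner_smul_left, inner_self_eq_norm_sq_to_K, Complex.conj_ofReal]
  norm_cast
  simp [Complex.mul_re]
  exact Or.inl (by rw [← Complex.ofReal_pow]; exact Complex.ofReal_re _)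

end Aux

theorem stmt7 (A : H →L[ℂ] H) (α : ℝ) (hα : α ∈ Set.Icc (0 : ℝ) 1) (x y : H) :
    ‖(inner ℂ (A x) y : ℂ)‖ ^ 2 ≤
      ((inner ℂ ((cfc (fun t : ℝ => t ^ (2 * α)) (absOp A)) x) x : ℂ)).re *
        ((inner ℂ ((cfc (fun t : ℝ => t ^ (2 * (1 - α)))
          (absOp (ContinuousLinearMap.adjoint A))) y) y : ℂ)).re := by
  obtain ⟨hα0, hα1⟩ := hα
  rcases subsingleton_or_nontrivial H with hH | hH
  · have hz : ∀ v : H, v = 0 := fun v => Subsingleton.elim v 0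
    rw [hz (A x), hz x, hz y]
    simp
  -- rewrite both cfc's
  have h1m : (0:ℝ) ≤ 1 - α := by linarith
  rw [kato_habs_gen A α hα0, kato_habs_gen (adjoint A) (1 - α) h1m, adjoint_adjoint]
  set S := adjoint A * A with hS
  set T := A * adjoint A with hT
  have hSsa : IsSelfAdjoint S := kato_adj_mul_self_sa A
  have hTsa : IsSelfAdjoint T := kato_self_mul_adj_sa A
  have hSpos : 0 ≤ S := kato_adj_mul_self_nonneg A
  have hTpos : 0 ≤ T := kato_self_mul_adj_nonneg A
  set Cx : ℝ := (inner ℂ ((cfc (fun t : ℝ => t ^ α) S) x) x : ℂ).re with hCx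
  set Dy : ℝ := (inner ℂ ((cfc (fun t : ℝ => t ^ (1 - α)) T) y) y : ℂ).re with hDy
  have hDy0 : 0 ≤ Dy := by
    refine kato_form_nonneg (cfc_nonneg fun t ht => Real.rpow_nonneg ?_ _) y
    exact spectrum_nonneg_of_nonneg hTpos ht
  have hCx0 : 0 ≤ Cx := by
    refine kato_form_nonneg (cfc_nonneg fun t ht => Real.rpow_nonneg ?_ _) x
    exact spectrum_nonneg_of_nonneg hSpos ht
  rcases eq_or_lt_of_le hα0 with hα0' | hαpos
  · -- α = 0 case
    subst hα0'
    have e1 : cfc (fun t : ℝ => t ^ (0:ℝ)) S = 1 := by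
      rw [show (fun t : ℝ => t ^ (0:ℝ)) = fun _ : ℝ => (1:ℝ) by
        funext t; exact Real.rpow_zero t]
      rw [cfc_const 1 S hSsa, map_one]
    have e2 : cfc (fun t : ℝ => t ^ (1 - (0:ℝ))) T = T := by
      have : (spectrum ℝ T).EqOn (fun t : ℝ => t ^ (1 - (0:ℝ))) id := fun t _ => by
        simp [Real.rpow_one]
      rw [cfc_congr this, cfc_id ℝ T hTsa]
    rw [hCx, hDy, e1, e2]
    have hinner : (inner ℂ (A x) y : ℂ) = inner ℂ x (adjoint A y) := (adjoint_inner_right A x y).symm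
    have hT' : (inner ℂ (T y) y : ℂ) = inner ℂ (adjoint A y) (adjoint A y) := by
      have h1 : T y = A (adjoint A y) := rfl
      rw [h1]
      exact (adjoint_inner_right A (adjoint A y) y).symm
    calc ‖(inner ℂ (A x) y : ℂ)‖ ^ 2 ≤ (‖x‖ * ‖adjoint A y‖) ^ 2 := by
          rw [hinner]; exact pow_le_pow_left₀ (norm_nonneg _) (norm_inner_le_norm x _) 2
      _ = ((inner ℂ ((1 : H →L[ℂ] H) x) x : ℂ)).re * ((inner ℂ (T y) y : ℂ)).re := by
          rw [hT', mul_pow]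
          simp only [ContinuousLinearMap.one_apply]
          rw [← inner_self_eq_norm_sq (𝕜 := ℂ) x, ← inner_self_eq_norm_sq (𝕜 := ℂ) (adjoint A y)]
          rfl
  · -- 0 < α
    have key : ∀ ε : ℝ, 0 < ε →
        ‖(inner ℂ (A x) y : ℂ)‖ ^ 2 ≤ (Cx + ε ^ α * ‖x‖ ^ 2) * Dy := by
      intro ε hε
      set b : ℝ → ℝ := fun t => max t 0 + ε with hb
      have hbc : Continuous b := (continuous_id.max continuous_const).add continuous_const
      have hbpos : ∀ t, 0 < b t := fun t => by
        have : (0:ℝ) ≤ max t 0 := le_max_right t 0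
        simp only [hb]; linarith
      have hp1c : Continuous fun t => b t ^ (α/2) :=
        hbc.rpow_const fun t => Or.inl (hbpos t).ne'
      have hp2c : Continuous fun t => b t ^ (-(α/2)) :=
        hbc.rpow_const fun t => Or.inl (hbpos t).ne'
      have hnegc : Continuous fun t => b t ^ (-α) :=
        hbc.rpow_const fun t => Or.inl (hbpos t).ne'
      set P : H →L[ℂ] H := cfc (fun t => b t ^ (α/2)) S with hP
      set Q : H →L[ℂ] H := cfc (fun t => b t ^ (-(α/2))) S with hQ
      have hPsa : IsSelfAdjoint P := cfc_predicate _ _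
      have hQsa : IsSelfAdjoint Q := cfc_predicate _ _
      have hQP : Q * P = 1 := by
        rw [hQ, hP, ← cfc_mul _ _ S hp2c.continuousOn hp1c.continuousOn]
        rw [show (fun t => b t ^ (-(α/2)) * b t ^ (α/2)) = fun _ : ℝ => (1:ℝ) by
          funext t
          rw [← Real.rpow_add (hbpos t)]
          norm_num]
        rw [cfc_const 1 S hSsa, map_one]
      have hA : A = (A * Q) * P := by rw [mul_assoc, hQP, mul_one]
      -- Cauchy-Schwarz
      have hadj : adjoint (A * Q) = Q * adjoint A := by
        rw [← star_eq_adjoint, star_mul, hQsa.star_eq, star_eq_adjoint]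
      have hcs : ‖(inner ℂ (A x) y : ℂ)‖ ≤ ‖P x‖ * ‖Q (adjoint A y)‖ := by
        have : (inner ℂ (A x) y : ℂ) = inner ℂ (P x) ((Q * adjoint A) y) := by
          conv_lhs => rw [hA]
          rw [ContinuousLinearMap.mul_apply, ← adjoint_inner_right (A * Q) (P x) y, hadj]
        rw [this, ContinuousLinearMap.mul_apply]
        exact norm_inner_le_norm _ _
      -- bound 1
      have hPP : P * P = cfc (fun t => b t ^ α) S := by
        rw [hP, ← cfc_mul _ _ S hp1c.continuousOn hp1c.continuousOn]
        refine cfc_congr fun t _ => ?_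
        rw [← Real.rpow_add (hbpos t), show α/2 + α/2 = α by ring]
      have hb1 : ‖P x‖ ^ 2 ≤ Cx + ε ^ α * ‖x‖ ^ 2 := by
        rw [kato_sq_norm_eq_form hPsa x, hPP]
        have hmono : cfc (fun t => b t ^ α) S ≤ cfc (fun t => t ^ α + ε ^ α) S := by
          refine cfc_mono (fun t ht => ?_) (hbc.rpow_const fun t =>
            Or.inl (hbpos t).ne').continuousOn
            (((kato_cont_rpow_const hα0).add continuous_const).continuousOn)
          have ht0 : 0 ≤ t := spectrum_nonneg_of_nonneg hSpos ht
          have : b t = t + ε := by simp [hb, max_eq_left ht0]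
          rw [this]
          exact kato_rpow_add_le ht0 hε.le hα0 hα1
        refine (kato_form_mono hmono x).trans ?_
        have hsplit : cfc (fun t : ℝ => t ^ α + ε ^ α) S
            = cfc (fun t : ℝ => t ^ α) S + algebraMap ℝ (H →L[ℂ] H) (ε ^ α) := by
          rw [cfc_add S _ _ ((kato_cont_rpow_const hα0).continuousOn) continuous_const.continuousOn,
            cfc_const _ S hSsa]
        rw [hsplit]
        simp only [add_apply, inner_add_left, Complex.add_re, Algebra.algebraMap_eq_smul_one,
          smul_apply, ContinuousLinearMap.one_apply]
        have h := kato_re_inner_smul (ε ^ α) x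
        rw [hCx]
        linarith
      -- bound 2
      have hQQ : Q * Q = cfc (fun t => b t ^ (-α)) S := by
        rw [hQ, ← cfc_mul _ _ S hp2c.continuousOn hp2c.continuousOn]
        refine cfc_congr fun t _ => ?_
        rw [← Real.rpow_add (hbpos t), show -(α/2) + -(α/2) = -α by ring]
      have hb2 : ‖Q (adjoint A y)‖ ^ 2 ≤ Dy := by
        rw [kato_sq_norm_eq_form hQsa (adjoint A y)]
        have hform : (inner ℂ ((Q * Q) (adjoint A y)) (adjoint A y) : ℂ)
            = inner ℂ ((A * (Q * Q) * adjoint A) y) y := by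
          rw [adjoint_inner_right A ((Q * Q) (adjoint A y)) y]
          simp only [ContinuousLinearMap.mul_apply]
        rw [hform]
        have hprod : cfc (fun t => b t ^ (-α) * t) T = cfc (fun t => b t ^ (-α)) T * T := by
          rw [cfc_mul (fun t => b t ^ (-α)) (fun t : ℝ => t) T hnegc.continuousOn
            continuousOn_id, cfc_id' ℝ T hTsa]
        have hAQ : A * (Q * Q) * adjoint A = cfc (fun t => b t ^ (-α) * t) T := by
          rw [hQQ, kato_intertwine_cfc A _ hnegc, mul_assoc, hprod]
        rw [hAQ]
        have hmono : cfc (fun t => b t ^ (-α) * t) T ≤ cfc (fun t : ℝ => t ^ (1 - α)) T := by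
          refine cfc_mono (fun t ht => ?_) (hnegc.mul continuous_id).continuousOn
            ((kato_cont_rpow_const h1m).continuousOn)
          have ht0 : 0 ≤ t := spectrum_nonneg_of_nonneg hTpos ht
          have hbt : b t = t + ε := by simp [hb, max_eq_left ht0]
          rcases eq_or_lt_of_le ht0 with h0 | htpos
          · rw [← h0]
            simp only [mul_zero]
            exact Real.rpow_nonneg le_rfl _
          · rw [hbt]
            have h1 : (t + ε) ^ (-α) ≤ t ^ (-α) :=
              Real.rpow_le_rpow_of_nonpos htpos (by linarith) (by linarith)
            calc (t + ε) ^ (-α) * t ≤ t ^ (-α) * t :=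
                  mul_le_mul_of_nonneg_right h1 ht0
              _ = t ^ (1 - α) := by
                  nth_rewrite 2 [← Real.rpow_one t]
                  rw [← Real.rpow_add htpos, show -α + 1 = 1 - α by ring]
        exact (kato_form_mono hmono y).trans (by rw [hDy])
      calc ‖(inner ℂ (A x) y : ℂ)‖ ^ 2 ≤ (‖P x‖ * ‖Q (adjoint A y)‖) ^ 2 :=
            pow_le_pow_left₀ (norm_nonneg _) hcs 2
        _ = ‖P x‖ ^ 2 * ‖Q (adjoint A y)‖ ^ 2 := mul_pow _ _ _
        _ ≤ (Cx + ε ^ α * ‖x‖ ^ 2) * Dy := by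
            refine mul_le_mul hb1 hb2 (sq_nonneg _) ?_
            exact (sq_nonneg _).trans hb1
    -- take the limit ε → 0⁺
    have htend : Filter.Tendsto (fun ε : ℝ => (Cx + ε ^ α * ‖x‖ ^ 2) * Dy)
        (nhdsWithin 0 (Set.Ioi 0)) (nhds (Cx * Dy)) := by
      have h1 : Filter.Tendsto (fun ε : ℝ => ε ^ α) (nhdsWithin 0 (Set.Ioi 0)) (nhds 0) := by
        have hc := (Real.continuousAt_rpow_const 0 α (Or.inr hα0)).tendsto
        rw [Real.zero_rpow hαpos.ne'] at hc
        exact hc.mono_left nhdsWithin_le_nhds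
      have h2 : Filter.Tendsto (fun ε : ℝ => (Cx + ε ^ α * ‖x‖ ^ 2) * Dy)
          (nhdsWithin 0 (Set.Ioi 0)) (nhds ((Cx + 0 * ‖x‖ ^ 2) * Dy)) :=
        ((tendsto_const_nhds.add (h1.mul tendsto_const_nhds)).mul tendsto_const_nhds)
      simpa using h2
    exact ge_of_tendsto htend
      (Filter.eventually_of_mem self_mem_nhdsWithin fun ε hε => key ε hε)
end

section
/- Let A ∈ B(H) and let φ, ψ be mutually complementary Orlicz functions (i.e., uv ≤ φ(u)+ψ(v) for all u,v ≥ 0). Then w(A)² ≤ ‖φ(|A|) + ψ(|A*|)‖, where w denotes the numerical radius. -/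
/-- An Orlicz function: convex, continuous, non-decreasing on `[0, ∞)`,
vanishing at `0`, positive on `(0, ∞)`, and tending to infinity. -/
def IsOrliczFunction (φ : ℝ → ℝ) : Prop :=
  ConvexOn ℝ (Set.Ici 0) φ ∧ ContinuousOn φ (Set.Ici 0) ∧ MonotoneOn φ (Set.Ici 0) ∧
    φ 0 = 0 ∧ (∀ u : ℝ, 0 < u → 0 < φ u) ∧ Filter.Tendsto φ Filter.atTop Filter.atTop

variable {H : Type*} [NormedAddCommGroup H] [InnerProductSpace ℂ H] [CompleteSpace H]

open ContinuousLinearMap in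
lemma aux_spec_Icc [Nontrivial H] {T : H →L[ℂ] H} (hT : 0 ≤ T) :
    spectrum ℝ T ⊆ Set.Icc 0 ‖T‖ := fun t ht =>
  ⟨spectrum_nonneg_of_nonneg hT ht,
    le_trans (le_abs_self t) (Real.norm_eq_abs t ▸ spectrum.norm_le_norm_of_mem ht)⟩

open ContinuousLinearMap in
/-- Commutation `a · f(a*a) = f(aa*) · a` for continuous `f`, via Weierstrass approximation. -/
lemma aux_comm [Nontrivial H] (a : H →L[ℂ] H) {f : ℝ → ℝ} (hf : Continuous f) :
    a * cfc f (star a * a) = cfc f (a * star a) * a := by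
  set b := star a * a with hbdef
  set c := a * star a with hcdef
  have hb0 : (0 : H →L[ℂ] H) ≤ b := star_mul_self_nonneg a
  have hc0 : (0 : H →L[ℂ] H) ≤ c := mul_star_self_nonneg a
  have hbsa : IsSelfAdjoint b := IsSelfAdjoint.star_mul_self a
  have hcsa : IsSelfAdjoint c := IsSelfAdjoint.mul_star_self a
  set M := max ‖b‖ ‖c‖ with hM
  have hspb : spectrum ℝ b ⊆ Set.Icc 0 M :=
    (aux_spec_Icc hb0).trans (Set.Icc_subset_Icc le_rfl (le_max_left _ _))
  have hspc : spectrum ℝ c ⊆ Set.Icc 0 M :=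
    (aux_spec_Icc hc0).trans (Set.Icc_subset_Icc le_rfl (le_max_right _ _))
  have hab : a * b = c * a := by rw [hbdef, hcdef, mul_assoc]
  have hpow : ∀ n : ℕ, a * b ^ n = c ^ n * a := by
    intro n
    induction n with
    | zero => simp
    | succ n ih =>
      rw [pow_succ, ← mul_assoc, ih, mul_assoc, hab, ← mul_assoc, ← pow_succ]
  have hpoly : ∀ p : Polynomial ℝ, a * (Polynomial.aeval b) p = (Polynomial.aeval c) p * a := by
    intro p
    induction p using Polynomial.induction_on with
    | C r =>
      simp [Polynomial.aeval_C, Algebra.algebraMap_eq_smul_one]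
    | add p q hp hq => simp [map_add, mul_add, add_mul, hp, hq]
    | monomial n r ih =>
      simp only [map_mul, Polynomial.aeval_C, map_pow, Polynomial.aeval_X]
      rw [← mul_assoc, ← Algebra.commutes, mul_assoc, hpow, ← mul_assoc]
  have key : ∀ ε : ℝ, 0 < ε → ‖a * cfc f b - cfc f c * a‖ ≤ 2 * ‖a‖ * ε := by
    intro ε hε
    obtain ⟨P, hP⟩ := exists_polynomial_near_of_continuousOn 0 M f hf.continuousOn ε hε
    have h1 : ‖cfc f b - cfc P.eval b‖ ≤ ε := by
      rw [← cfc_sub f P.eval b hf.continuousOn (Polynomial.continuous P).continuousOn]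
      refine norm_cfc_le hε.le fun t ht => ?_
      have := hP t (hspb ht)
      rw [Real.norm_eq_abs, abs_sub_comm]
      exact this.le
    have h2 : ‖cfc f c - cfc P.eval c‖ ≤ ε := by
      rw [← cfc_sub f P.eval c hf.continuousOn (Polynomial.continuous P).continuousOn]
      refine norm_cfc_le hε.le fun t ht => ?_
      have := hP t (hspc ht)
      rw [Real.norm_eq_abs, abs_sub_comm]
      exact this.le
    have h3 : a * cfc P.eval b = cfc P.eval c * a := by
      rw [cfc_polynomial P b hbsa, cfc_polynomial P c hcsa]
      exact hpoly P
    calc ‖a * cfc f b - cfc f c * a‖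
        = ‖a * (cfc f b - cfc P.eval b) + (cfc P.eval c - cfc f c) * a
            + (a * cfc P.eval b - cfc P.eval c * a)‖ := by congr 1; noncomm_ring
      _ ≤ ‖a * (cfc f b - cfc P.eval b) + (cfc P.eval c - cfc f c) * a‖
            + ‖a * cfc P.eval b - cfc P.eval c * a‖ := norm_add_le _ _
      _ ≤ ‖a * (cfc f b - cfc P.eval b)‖ + ‖(cfc P.eval c - cfc f c) * a‖ + 0 := by
          rw [h3, sub_self, norm_zero]
          exact add_le_add_left (norm_add_le _ _) 0
      _ ≤ ‖a‖ * ε + ε * ‖a‖ + 0 := by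
          have e1 : ‖a * (cfc f b - cfc P.eval b)‖ ≤ ‖a‖ * ε :=
            (norm_mul_le _ _).trans (mul_le_mul_of_nonneg_left h1 (norm_nonneg a))
          have e2 : ‖(cfc P.eval c - cfc f c) * a‖ ≤ ε * ‖a‖ := by
            refine (norm_mul_le _ _).trans ?_
            rw [norm_sub_rev]
            exact mul_le_mul_of_nonneg_right h2 (norm_nonneg a)
          linarith
      _ = 2 * ‖a‖ * ε := by ring
  have hzero : a * cfc f b - cfc f c * a = 0 := by
    by_contra hne
    have hpos : 0 < ‖a * cfc f b - cfc f c * a‖ := norm_pos_iff.mpr hne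
    set D := ‖a * cfc f b - cfc f c * a‖ with hD
    have h := key (D / (2 * ‖a‖ + 1)) (by positivity)
    have h2 : 2 * ‖a‖ * (D / (2 * ‖a‖ + 1)) < D := by
      rw [mul_div_assoc', div_lt_iff₀ (by positivity)]
      nlinarith [norm_nonneg a]
    linarith
  exact sub_eq_zero.mp hzero

open ContinuousLinearMap RCLike in
/-- Operator Jensen inequality for a state given by a unit vector. -/
lemma aux_jensen [Nontrivial H] {T : H →L[ℂ] H} (hT : 0 ≤ T) {φ : ℝ → ℝ}
    (hconv : ConvexOn ℝ (Set.Ici 0) φ) (hcont : ContinuousOn φ (Set.Ici 0))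
    (hmono : MonotoneOn φ (Set.Ici 0)) (hzero : φ 0 = 0)
    {x : H} (hx : ‖x‖ = 1) :
    φ (re (inner ℂ (T x) x : ℂ)) ≤ re (inner ℂ ((cfc φ T) x) x : ℂ) := by
  have hTsa : IsSelfAdjoint T := (nonneg_iff_isPositive T).mp hT |>.isSelfAdjoint
  have hsp : spectrum ℝ T ⊆ Set.Ici 0 := fun t ht => spectrum_nonneg_of_nonneg hT ht
  have hφs : ContinuousOn φ (spectrum ℝ T) := hcont.mono hsp
  have hφ0 : ∀ t : ℝ, 0 ≤ t → 0 ≤ φ t := fun t ht => by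
    rw [← hzero]; exact hmono Set.self_mem_Ici ht ht
  have hcfcφ : (0 : H →L[ℂ] H) ≤ cfc φ T := cfc_nonneg fun t ht => hφ0 t (hsp ht)
  set s := re (inner ℂ (T x) x : ℂ) with hs
  have hs0 : 0 ≤ s := ((nonneg_iff_isPositive T).mp hT).re_inner_nonneg_left x
  rcases eq_or_lt_of_le hs0 with h0 | hpos
  · rw [← h0, hzero]
    exact ((nonneg_iff_isPositive _).mp hcfcφ).re_inner_nonneg_left x
  · set Sl : Set ℝ := (fun t => (φ s - φ t) / (s - t)) '' Set.Ico 0 s with hSl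
    have hne : Sl.Nonempty := ⟨_, ⟨0, ⟨le_rfl, hpos⟩, rfl⟩⟩
    have hbdd : BddAbove Sl := by
      refine ⟨(φ (s + 1) - φ s) / (s + 1 - s), ?_⟩
      rintro - ⟨t, ⟨ht0, hts⟩, rfl⟩
      exact hconv.slope_mono_adjacent (Set.mem_Ici.mpr ht0)
        (Set.mem_Ici.mpr (by linarith)) hts (by linarith)
    set c := sSup Sl with hcdef
    have hub : ∀ t, 0 ≤ t → t < s → (φ s - φ t) / (s - t) ≤ c := fun t ht0 hts =>
      le_csSup hbdd ⟨t, ⟨ht0, hts⟩, rfl⟩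
    have hlb : ∀ u, s < u → c ≤ (φ u - φ s) / (u - s) := by
      intro u hu
      refine csSup_le hne ?_
      rintro - ⟨t, ⟨ht0, hts⟩, rfl⟩
      exact hconv.slope_mono_adjacent (Set.mem_Ici.mpr ht0)
        (Set.mem_Ici.mpr (hs0.trans hu.le)) hts hu
    have hline : ∀ t ∈ spectrum ℝ T, (φ s - c * s) + c * t ≤ φ t := by
      intro t ht
      have ht0 : 0 ≤ t := hsp ht
      rcases lt_trichotomy t s with h | h | h
      · have := hub t ht0 h
        rw [div_le_iff₀ (by linarith)] at this
        nlinarith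
      · rw [h]; linarith
      · have := hlb t h
        rw [le_div_iff₀ (by linarith)] at this
        nlinarith
    have hop : cfc (fun t => (φ s - c * s) + c * t) T ≤ cfc φ T :=
      cfc_mono hline (by fun_prop) hφs
    have haffine : cfc (fun t => (φ s - c * s) + c * t) T
        = algebraMap ℝ (H →L[ℂ] H) (φ s - c * s) + c • T := by
      rw [cfc_const_add (φ s - c * s) (fun t => c * t) T (by fun_prop) hTsa,
        cfc_const_mul_id c T hTsa]
    have hxx : re (inner ℂ x x : ℂ) = 1 := by
      rw [inner_self_eq_norm_sq]; rw [hx]; norm_num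
    have hgx : re (inner ℂ ((cfc (fun t => (φ s - c * s) + c * t) T) x) x : ℂ) = φ s := by
      rw [haffine]
      rw [ContinuousLinearMap.add_apply, inner_add_left, map_add]
      rw [Algebra.algebraMap_eq_smul_one, ContinuousLinearMap.smul_apply,
        ContinuousLinearMap.one_apply, ContinuousLinearMap.smul_apply]
      rw [real_smul_eq_coe_smul (K := ℂ) (φ s - c * s) x, real_smul_eq_coe_smul (K := ℂ) c (T x)]
      rw [inner_smul_left, inner_smul_left]
      simp only [conj_ofReal, re_ofReal_mul]
      rw [hxx, ← hs]
      ring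
    have hposd := ((le_def _ _).mp hop).re_inner_nonneg_left x
    rw [ContinuousLinearMap.sub_apply, inner_sub_left, map_sub] at hposd
    linarith

set_option maxHeartbeats 1000000 in
open ContinuousLinearMap RCLike in
/-- Mixed Schwarz inequality, approximate version. -/
lemma aux_schwarz_eps [Nontrivial H] (a : H →L[ℂ] H) (x : H) {ε : ℝ} (hε : 0 < ε) :
    ‖(inner ℂ (a x) x : ℂ)‖ ^ 2 ≤
      (re (inner ℂ ((cfc Real.sqrt (star a * a)) x) x : ℂ) + ε * ‖x‖ ^ 2) *
        re (inner ℂ ((cfc Real.sqrt (a * star a)) x) x : ℂ) := by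
  set b := star a * a with hbdef
  set c := a * star a with hcdef
  have hbsa : IsSelfAdjoint b := IsSelfAdjoint.star_mul_self a
  have hcsa : IsSelfAdjoint c := IsSelfAdjoint.mul_star_self a
  have hc0 : (0 : H →L[ℂ] H) ≤ c := mul_star_self_nonneg a
  have hspc : spectrum ℝ c ⊆ Set.Ici 0 := fun t ht => spectrum_nonneg_of_nonneg hc0 ht
  set p : ℝ → ℝ := fun t => Real.sqrt (Real.sqrt t + ε) with hpdef
  set q : ℝ → ℝ := fun t => (p t)⁻¹ with hqdef
  have hppos : ∀ t, 0 < p t := fun t => Real.sqrt_pos.mpr (by positivity)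
  have hpc : Continuous p := Real.continuous_sqrt.comp (Real.continuous_sqrt.add continuous_const)
  have hqc : Continuous q := hpc.inv₀ fun t => (hppos t).ne'
  have hpp : ∀ t, p t * p t = Real.sqrt t + ε := fun t => Real.mul_self_sqrt (by positivity)
  have hqq : ∀ t, q t * q t = (Real.sqrt t + ε)⁻¹ := fun t => by
    show (p t)⁻¹ * (p t)⁻¹ = _
    rw [← mul_inv, hpp t]
  have hone : cfc q b * cfc p b = 1 := by
    rw [← cfc_mul q p b hqc.continuousOn hpc.continuousOn,
      cfc_congr (g := fun _ => 1) (fun t _ => inv_mul_cancel₀ (hppos t).ne')]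
    exact cfc_const_one ℝ b
  have hxid : cfc q b (cfc p b x) = x := by
    rw [← ContinuousLinearMap.mul_apply, hone, ContinuousLinearMap.one_apply]
  set u := cfc p b x with hu
  set w := adjoint a x with hw
  have hpsa : IsSelfAdjoint (cfc p b) := cfc_predicate p b
  have hqsa : IsSelfAdjoint (cfc q b) := cfc_predicate q b
  have hadjp : adjoint (cfc p b) = cfc p b := by rw [← star_eq_adjoint]; exact hpsa.star_eq
  have hadjq : adjoint (cfc q b) = cfc q b := by rw [← star_eq_adjoint]; exact hqsa.star_eq
  have h1 : (inner ℂ (a x) x : ℂ) = inner ℂ u (cfc q b w) := by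
    calc (inner ℂ (a x) x : ℂ) = inner ℂ (a (cfc q b u)) x := by rw [hxid]
      _ = inner ℂ (cfc q b u) w := (adjoint_inner_right a (cfc q b u) x).symm
      _ = inner ℂ u (cfc q b w) := by
          have h := adjoint_inner_left (cfc q b) w u
          rw [hadjq] at h
          exact h
  have h2 : ‖(inner ℂ (a x) x : ℂ)‖ ≤ ‖u‖ * ‖cfc q b w‖ := by
    rw [h1]; exact norm_inner_le_norm u (cfc q b w)
  have hmulp : cfc p b * cfc p b = cfc Real.sqrt b + algebraMap ℝ (H →L[ℂ] H) ε := by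
    rw [← cfc_mul p p b hpc.continuousOn hpc.continuousOn]
    calc cfc (fun t => p t * p t) b = cfc (fun t => Real.sqrt t + ε) b :=
          cfc_congr fun t _ => hpp t
      _ = cfc Real.sqrt b + algebraMap ℝ (H →L[ℂ] H) ε :=
          cfc_add_const ε Real.sqrt b Real.continuous_sqrt.continuousOn hbsa
  have hU : ‖u‖ ^ 2 = re (inner ℂ ((cfc Real.sqrt b) x) x : ℂ) + ε * ‖x‖ ^ 2 := by
    rw [← inner_self_eq_norm_sq (𝕜 := ℂ) u]
    have h := adjoint_inner_left (cfc p b) (cfc p b x) x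
    rw [hadjp] at h
    rw [← hu] at h
    rw [h, ← ContinuousLinearMap.mul_apply, hmulp, ContinuousLinearMap.add_apply,
      inner_add_right, map_add, Algebra.algebraMap_eq_smul_one, ContinuousLinearMap.smul_apply,
      ContinuousLinearMap.one_apply, real_smul_eq_coe_smul (K := ℂ) ε x, inner_smul_right,
      re_ofReal_mul, inner_self_eq_norm_sq, inner_re_symm]
  have hq2c : Continuous (fun t : ℝ => (Real.sqrt t + ε)⁻¹) :=
    (Real.continuous_sqrt.add continuous_const).inv₀ fun t => (add_pos_of_nonneg_of_pos (Real.sqrt_nonneg t) hε).ne'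
  have hmulq : cfc q b * cfc q b = cfc (fun t => (Real.sqrt t + ε)⁻¹) b := by
    rw [← cfc_mul q q b hqc.continuousOn hqc.continuousOn]
    exact cfc_congr fun t _ => hqq t
  set h2f : ℝ → ℝ := fun t => (Real.sqrt t + ε)⁻¹ * t with hh2f
  have hcomm : a * cfc (fun t => (Real.sqrt t + ε)⁻¹) b
      = cfc (fun t => (Real.sqrt t + ε)⁻¹) c * a := aux_comm a hq2c
  have hprod : cfc h2f c = cfc (fun t => (Real.sqrt t + ε)⁻¹) c * c := by
    rw [hh2f]
    calc cfc (fun t => (Real.sqrt t + ε)⁻¹ * t) c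
        = cfc (fun t => (Real.sqrt t + ε)⁻¹) c * cfc (fun t : ℝ => t) c :=
          cfc_mul _ _ c hq2c.continuousOn continuous_id.continuousOn
      _ = cfc (fun t => (Real.sqrt t + ε)⁻¹) c * c := by rw [cfc_id' ℝ c hcsa]
  have hVkey : (inner ℂ (cfc q b w) (cfc q b w) : ℂ) = inner ℂ x ((cfc h2f c) x) := by
    have h := adjoint_inner_left (cfc q b) (cfc q b w) w
    rw [hadjq] at h
    rw [h, ← ContinuousLinearMap.mul_apply, hmulq, hw,
      adjoint_inner_left a ((cfc (fun t => (Real.sqrt t + ε)⁻¹) b) (adjoint a x)) x]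
    congr 1
    have e1 : (a * cfc (fun t => (Real.sqrt t + ε)⁻¹) b * adjoint a) x
        = a ((cfc (fun t => (Real.sqrt t + ε)⁻¹) b) ((adjoint a) x)) := by
      rw [ContinuousLinearMap.mul_apply, ContinuousLinearMap.mul_apply]
    rw [← e1, hcomm, mul_assoc, ← star_eq_adjoint, ← hcdef, ← hprod]
  have hmono_op : cfc h2f c ≤ cfc Real.sqrt c := by
    refine cfc_mono (fun t ht => ?_) (hq2c.mul continuous_id).continuousOn
      Real.continuous_sqrt.continuousOn
    have ht0 : (0:ℝ) ≤ t := hspc ht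
    show (Real.sqrt t + ε)⁻¹ * t ≤ Real.sqrt t
    rw [inv_mul_le_iff₀ (by positivity)]
    nlinarith [Real.sq_sqrt ht0, Real.sqrt_nonneg t]
  have hVn : ‖cfc q b w‖ ^ 2 ≤ re (inner ℂ ((cfc Real.sqrt c) x) x : ℂ) := by
    rw [← inner_self_eq_norm_sq (𝕜 := ℂ), hVkey, inner_re_symm]
    have hd := ((le_def _ _).mp hmono_op).re_inner_nonneg_left x
    rw [ContinuousLinearMap.sub_apply, inner_sub_left, map_sub] at hd
    linarith
  calc ‖(inner ℂ (a x) x : ℂ)‖ ^ 2 ≤ (‖u‖ * ‖cfc q b w‖) ^ 2 :=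
        pow_le_pow_left₀ (norm_nonneg _) h2 2
    _ = ‖u‖ ^ 2 * ‖cfc q b w‖ ^ 2 := mul_pow _ _ 2
    _ ≤ ‖u‖ ^ 2 * re (inner ℂ ((cfc Real.sqrt c) x) x : ℂ) :=
        mul_le_mul_of_nonneg_left hVn (sq_nonneg _)
    _ = (re (inner ℂ ((cfc Real.sqrt b) x) x : ℂ) + ε * ‖x‖ ^ 2)
          * re (inner ℂ ((cfc Real.sqrt c) x) x : ℂ) := by rw [hU]

open ContinuousLinearMap RCLike in
/-- Mixed Schwarz inequality. -/
lemma aux_schwarz [Nontrivial H] (a : H →L[ℂ] H) (x : H) :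
    ‖(inner ℂ (a x) x : ℂ)‖ ^ 2 ≤
      re (inner ℂ ((cfc Real.sqrt (star a * a)) x) x : ℂ) *
        re (inner ℂ ((cfc Real.sqrt (a * star a)) x) x : ℂ) := by
  set F1 := re (inner ℂ ((cfc Real.sqrt (star a * a)) x) x : ℂ) with hF1
  set F2 := re (inner ℂ ((cfc Real.sqrt (a * star a)) x) x : ℂ) with hF2
  have hF2n : 0 ≤ F2 := by
    have h0 : (0 : H →L[ℂ] H) ≤ cfc Real.sqrt (a * star a) :=
      cfc_nonneg fun t _ => Real.sqrt_nonneg t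
    exact ((nonneg_iff_isPositive _).mp h0).re_inner_nonneg_left x
  refine le_of_forall_pos_le_add fun δ hδ => ?_
  set ε := δ / (‖x‖ ^ 2 * F2 + 1) with hεdef
  have hεpos : 0 < ε := by positivity
  have h := aux_schwarz_eps a x hεpos
  have hbound : ε * (‖x‖ ^ 2 * F2) ≤ δ := by
    rw [hεdef, div_mul_eq_mul_div, div_le_iff₀ (by positivity)]
    nlinarith [sq_nonneg ‖x‖]
  nlinarith [h]

theorem stmt8 (φ ψ : ℝ → ℝ) (hφ : IsOrliczFunction φ) (hψ : IsOrliczFunction ψ)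
    (hyoung : ∀ u v : ℝ, 0 ≤ u → 0 ≤ v → u * v ≤ φ u + ψ v) (A : H →L[ℂ] H) :
    numRad A ^ 2 ≤ ‖cfc φ (absOp A) + cfc ψ (absOp (ContinuousLinearMap.adjoint A))‖ := by
  obtain hsub | hnt := subsingleton_or_nontrivial H
  · have hE : IsEmpty {x : H // ‖x‖ = 1} := by
      constructor; rintro ⟨z, hz⟩
      rw [Subsingleton.elim z 0, norm_zero] at hz
      exact one_ne_zero hz.symm
    have h0 : numRad A = 0 :=
      le_antisymm (Real.iSup_le (fun z => (hE.elim z)) le_rfl)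
        (Real.iSup_nonneg fun z => norm_nonneg _)
    rw [h0]
    simpa using norm_nonneg _
  · obtain ⟨hφc, hφcont, hφmono, hφ0, hφpos, hφtop⟩ := hφ
    obtain ⟨hψc, hψcont, hψmono, hψ0, hψpos, hψtop⟩ := hψ
    have habs1 : absOp A = cfc Real.sqrt (star A * A) := by
      rw [absOp, ContinuousLinearMap.star_eq_adjoint]
    have habs2 : absOp (ContinuousLinearMap.adjoint A) = cfc Real.sqrt (A * star A) := by
      rw [absOp, ContinuousLinearMap.adjoint_adjoint, ContinuousLinearMap.star_eq_adjoint]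
    set S := cfc φ (absOp A) + cfc ψ (absOp (ContinuousLinearMap.adjoint A)) with hSdef
    set K := ‖S‖ with hK
    have habsA0 : (0 : H →L[ℂ] H) ≤ absOp A := by
      rw [habs1]; exact cfc_nonneg fun t _ => Real.sqrt_nonneg t
    have habsB0 : (0 : H →L[ℂ] H) ≤ absOp (ContinuousLinearMap.adjoint A) := by
      rw [habs2]; exact cfc_nonneg fun t _ => Real.sqrt_nonneg t
    have key : ∀ z : {x : H // ‖x‖ = 1}, ‖(inner ℂ (A z.1) z.1 : ℂ)‖ ^ 2 ≤ K := by
      rintro ⟨z, hz⟩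
      set r1 := RCLike.re (inner ℂ (absOp A z) z : ℂ) with hr1
      set r2 := RCLike.re (inner ℂ (absOp (ContinuousLinearMap.adjoint A) z) z : ℂ) with hr2
      have hr10 : 0 ≤ r1 :=
        ((ContinuousLinearMap.nonneg_iff_isPositive _).mp habsA0).re_inner_nonneg_left z
      have hr20 : 0 ≤ r2 :=
        ((ContinuousLinearMap.nonneg_iff_isPositive _).mp habsB0).re_inner_nonneg_left z
      have hschwarz : ‖(inner ℂ (A z) z : ℂ)‖ ^ 2 ≤ r1 * r2 := by
        have h := aux_schwarz A z
        rw [← habs1, ← habs2] at h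
        exact h
      have hj1 : φ r1 ≤ RCLike.re (inner ℂ ((cfc φ (absOp A)) z) z : ℂ) :=
        aux_jensen habsA0 hφc hφcont hφmono hφ0 hz
      have hj2 : ψ r2 ≤ RCLike.re
          (inner ℂ ((cfc ψ (absOp (ContinuousLinearMap.adjoint A))) z) z : ℂ) :=
        aux_jensen habsB0 hψc hψcont hψmono hψ0 hz
      have hsum : RCLike.re (inner ℂ ((cfc φ (absOp A)) z) z : ℂ)
          + RCLike.re (inner ℂ ((cfc ψ (absOp (ContinuousLinearMap.adjoint A))) z) z : ℂ)
          = RCLike.re (inner ℂ (S z) z : ℂ) := by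
        rw [hSdef, ContinuousLinearMap.add_apply, inner_add_left, map_add]
      have hfin : RCLike.re (inner ℂ (S z) z : ℂ) ≤ K := by
        calc RCLike.re (inner ℂ (S z) z : ℂ) ≤ ‖(inner ℂ (S z) z : ℂ)‖ := RCLike.re_le_norm _
          _ ≤ ‖S z‖ * ‖z‖ := norm_inner_le_norm _ _
          _ ≤ ‖S‖ * ‖z‖ * ‖z‖ :=
              mul_le_mul_of_nonneg_right (S.le_opNorm z) (norm_nonneg z)
          _ = K := by rw [hz]; ring
      have hy := hyoung r1 r2 hr10 hr20
      calc ‖(inner ℂ (A z) z : ℂ)‖ ^ 2 ≤ r1 * r2 := hschwarz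
        _ ≤ φ r1 + ψ r2 := hy
        _ ≤ RCLike.re (inner ℂ (S z) z : ℂ) := by rw [← hsum]; exact add_le_add hj1 hj2
        _ ≤ K := hfin
    have hK0 : 0 ≤ K := norm_nonneg _
    have hsqle : ∀ z : {x : H // ‖x‖ = 1}, ‖(inner ℂ (A z.1) z.1 : ℂ)‖ ≤ Real.sqrt K :=
      fun z => Real.le_sqrt_of_sq_le (key z)
    have h1 : numRad A ≤ Real.sqrt K := Real.iSup_le hsqle (Real.sqrt_nonneg K)
    have h2 : 0 ≤ numRad A := Real.iSup_nonneg fun z => norm_nonneg _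
    calc numRad A ^ 2 ≤ Real.sqrt K ^ 2 := pow_le_pow_left₀ h2 h1 2
      _ = K := Real.sq_sqrt hK0
end

section
/- Let A, B, X ∈ B(H), r ≥ 2, and φ, ψ mutually complementary Orlicz functions. Then w(A*XB)^r ≤ ‖X‖^r · w(φ(|A|^r) + ψ(|B|^r)). -/
variable {H : Type*} [NormedAddCommGroup H] [InnerProductSpace ℂ H] [CompleteSpace H]

open Set ContinuousLinearMap RCLike in
/-- Supporting line for a convex function at an interior point of `[0, ∞)`. -/
theorem aux_supporting_line {f : ℝ → ℝ} (hf : ConvexOn ℝ (Set.Ici 0) f) {t₀ : ℝ}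
    (ht₀ : 0 < t₀) : ∃ a : ℝ, ∀ t, 0 ≤ t → f t₀ + a * (t - t₀) ≤ f t := by
  set S : Set ℝ := (fun t => (f t₀ - f t) / (t₀ - t)) '' (Ico 0 t₀) with hS
  have hne : S.Nonempty := ⟨_, ⟨0, ⟨le_refl 0, ht₀⟩, rfl⟩⟩
  have hbdd : BddAbove S := by
    refine ⟨(f (t₀+1) - f t₀) / (t₀ + 1 - t₀), ?_⟩
    rintro s ⟨t, ⟨ht0, htlt⟩, rfl⟩
    exact hf.slope_mono_adjacent (x := t) (y := t₀) (z := t₀ + 1) ht0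
      (mem_Ici.mpr (by linarith)) htlt (by linarith)
  refine ⟨sSup S, fun t ht => ?_⟩
  rcases lt_trichotomy t t₀ with h | h | h
  · have hle : (f t₀ - f t) / (t₀ - t) ≤ sSup S := le_csSup hbdd ⟨t, ⟨ht, h⟩, rfl⟩
    have hpos : 0 < t₀ - t := by linarith
    rw [div_le_iff₀ hpos] at hle
    nlinarith [hle]
  · simp [h]
  · have hub : sSup S ≤ (f t - f t₀) / (t - t₀) := by
      apply csSup_le hne
      rintro s ⟨u, ⟨hu0, hult⟩, rfl⟩
      exact hf.slope_mono_adjacent (x := u) (y := t₀) (z := t) hu0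
        (mem_Ici.mpr (ht₀.trans h).le) hult h
    have hpos : 0 < t - t₀ := by linarith
    have h2 := (le_div_iff₀ hpos).mp hub
    nlinarith [h2]

open Set ContinuousLinearMap RCLike in
theorem aux_inner_mono {S T : H →L[ℂ] H} (h : S ≤ T) (x : H) :
    re (inner ℂ (S x) x : ℂ) ≤ re (inner ℂ (T x) x : ℂ) := by
  have := ((ContinuousLinearMap.le_def S T).mp h).re_inner_nonneg_left x
  simp only [ContinuousLinearMap.reApplyInnerSelf, ContinuousLinearMap.sub_apply,
    inner_sub_left, map_sub] at this
  linarith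

open Set ContinuousLinearMap RCLike in
theorem aux_re_inner_smul_one (c : ℝ) (x : H) (hx : ‖x‖ = 1) :
    re (inner ℂ ((algebraMap ℝ (H →L[ℂ] H) c) x) x : ℂ) = c := by
  rw [Algebra.algebraMap_eq_smul_one]
  simp only [ContinuousLinearMap.smul_apply, ContinuousLinearMap.one_apply]
  have : c • x = (c : ℂ) • x := by simp
  rw [this, inner_smul_left]
  simp [inner_self_eq_norm_sq, hx]

open Set ContinuousLinearMap RCLike in
/-- Jensen's inequality for states: `f ⟪T x, x⟫ ≤ ⟪f(T) x, x⟫` for positive `T`, unit `x`,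
and `f` convex, continuous and monotone on `[0, ∞)`. -/
theorem aux_op_jensen (T : H →L[ℂ] H) (hT : 0 ≤ T) {f : ℝ → ℝ}
    (hconv : ConvexOn ℝ (Set.Ici 0) f) (hcont : ContinuousOn f (Set.Ici 0))
    (hmono : MonotoneOn f (Set.Ici 0)) (x : H) (hx : ‖x‖ = 1) :
    f (re (inner ℂ (T x) x : ℂ)) ≤ re (inner ℂ (cfc f T x) x : ℂ) := by
  have hsa : IsSelfAdjoint T := hT.isSelfAdjoint
  have hspec : ∀ t ∈ spectrum ℝ T, (0:ℝ) ≤ t := spectrum_nonneg_of_nonneg hT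
  have hfc : ContinuousOn f (spectrum ℝ T) := hcont.mono hspec
  set t₀ : ℝ := re (inner ℂ (T x) x : ℂ) with ht₀def
  have ht₀ : 0 ≤ t₀ := ((ContinuousLinearMap.nonneg_iff_isPositive T).mp hT).re_inner_nonneg_left x
  rcases eq_or_lt_of_le ht₀ with h0 | h0
  · have : cfc (fun _ : ℝ => f 0) T ≤ cfc f T :=
      cfc_mono (fun t ht => hmono (mem_Ici.mpr le_rfl) (hspec t ht) (hspec t ht)) (by fun_prop) hfc
    rw [cfc_const (f 0) T hsa] at this
    calc f t₀ = f 0 := by rw [← h0]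
      _ = re (inner ℂ ((algebraMap ℝ (H →L[ℂ] H) (f 0)) x) x : ℂ) :=
          (aux_re_inner_smul_one _ x hx).symm
      _ ≤ _ := aux_inner_mono this x
  · obtain ⟨a, ha⟩ := aux_supporting_line hconv h0
    have key : cfc (fun t : ℝ => (f t₀ - a * t₀) + a * t) T ≤ cfc f T := by
      apply cfc_mono (fun t ht => by have := ha t (hspec t ht); linarith) (by fun_prop) hfc
    have heq : cfc (fun t : ℝ => (f t₀ - a * t₀) + a * t) T
        = algebraMap ℝ (H →L[ℂ] H) (f t₀ - a * t₀) + a • T := by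
      rw [cfc_const_add _ _ _ (by fun_prop) hsa, cfc_const_mul_id a T hsa]
    rw [heq] at key
    have h1 : re (inner ℂ ((algebraMap ℝ (H →L[ℂ] H) (f t₀ - a * t₀) + a • T) x) x : ℂ)
        = f t₀ := by
      simp only [ContinuousLinearMap.add_apply, inner_add_left, map_add]
      rw [aux_re_inner_smul_one _ x hx]
      have : (a • T) x = (a : ℂ) • (T x) := by simp
      rw [this, inner_smul_left]
      simp only [mul_comm, RCLike.mul_re]
      simp
      have h2 : ((inner ℂ (T x) x : ℂ)).re = t₀ := rfl
      rw [h2]; ring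
    calc f t₀ = _ := h1.symm
      _ ≤ _ := aux_inner_mono key x

open Set ContinuousLinearMap RCLike in
theorem aux_cfc_pow_abs (A : H →L[ℂ] H) {r : ℝ} (hr : 2 ≤ r) :
    cfc (fun t : ℝ => t ^ r) (absOp A) =
      cfc (fun t : ℝ => t ^ (r/2)) (ContinuousLinearMap.adjoint A * A) := by
  have hS : (0 : H →L[ℂ] H) ≤ ContinuousLinearMap.adjoint A * A := by
    simpa [ContinuousLinearMap.star_eq_adjoint] using star_mul_self_nonneg A
  have hsa : IsSelfAdjoint (ContinuousLinearMap.adjoint A * A) := hS.isSelfAdjoint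
  have hspec : ∀ t ∈ spectrum ℝ (ContinuousLinearMap.adjoint A * A), (0:ℝ) ≤ t :=
    spectrum_nonneg_of_nonneg hS
  have hrcont : ContinuousOn (fun t : ℝ => t ^ r) (Set.Ici 0) := fun t ht =>
    (Real.continuousAt_rpow_const t r (Or.inr (by linarith))).continuousWithinAt
  have hcomp := cfc_comp (fun t : ℝ => t ^ r) Real.sqrt
    (ContinuousLinearMap.adjoint A * A) hsa
    (hrcont.mono (by rintro y ⟨t, _, rfl⟩; exact Real.sqrt_nonneg t))
    Real.continuous_sqrt.continuousOn
  rw [absOp, ← hcomp]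
  apply cfc_congr
  intro t ht
  have ht0 : (0:ℝ) ≤ t := hspec t ht
  simp only [Function.comp_apply]
  rw [Real.sqrt_eq_rpow, ← Real.rpow_mul ht0]
  congr 1
  ring

open Set ContinuousLinearMap RCLike in
theorem aux_holder_mccarthy (A : H →L[ℂ] H) {r : ℝ} (hr : 2 ≤ r) (x : H) (hx : ‖x‖ = 1) :
    ‖A x‖ ^ r ≤ re (inner ℂ ((cfc (fun t : ℝ => t ^ r) (absOp A)) x) x : ℂ) := by
  have hS : (0 : H →L[ℂ] H) ≤ ContinuousLinearMap.adjoint A * A := by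
    simpa [ContinuousLinearMap.star_eq_adjoint] using star_mul_self_nonneg A
  have hr2 : (1:ℝ) ≤ r / 2 := by linarith
  have hconv : ConvexOn ℝ (Set.Ici 0) (fun t : ℝ => t ^ (r/2)) := convexOn_rpow hr2
  have hcont : ContinuousOn (fun t : ℝ => t ^ (r/2)) (Set.Ici 0) := fun t ht =>
    (Real.continuousAt_rpow_const t (r/2) (Or.inr (by linarith))).continuousWithinAt
  have hmono : MonotoneOn (fun t : ℝ => t ^ (r/2)) (Set.Ici 0) := fun s hs t _ hst =>
    Real.rpow_le_rpow hs hst (by linarith)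
  have hj := aux_op_jensen (ContinuousLinearMap.adjoint A * A) hS hconv hcont hmono x hx
  have hinner : (inner ℂ ((ContinuousLinearMap.adjoint A * A) x) x : ℂ) = inner ℂ (A x) (A x) := by
    rw [ContinuousLinearMap.mul_apply, ContinuousLinearMap.adjoint_inner_left]
  rw [hinner, inner_self_eq_norm_sq] at hj
  have heq : ((‖A x‖ ^ 2 : ℝ)) ^ (r/2) = ‖A x‖ ^ r := by
    rw [← Real.rpow_natCast (‖A x‖) 2, ← Real.rpow_mul (norm_nonneg _)]
    congr 1
    push_cast
    ring
  rw [heq] at hj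
  rwa [aux_cfc_pow_abs A hr]

theorem aux_numRad_nonneg (S : H →L[ℂ] H) : 0 ≤ numRad S :=
  Real.iSup_nonneg fun _ => norm_nonneg _

theorem aux_le_numRad (S : H →L[ℂ] H) (x : {x : H // ‖x‖ = 1}) :
    ‖(inner ℂ (S x.1) x.1 : ℂ)‖ ≤ numRad S := by
  apply le_ciSup (f := fun x : {x : H // ‖x‖ = 1} => ‖(inner ℂ (S x.1) x.1 : ℂ)‖) ?_ x
  refine ⟨‖S‖, ?_⟩
  rintro y ⟨z, rfl⟩
  calc ‖(inner ℂ (S z.1) z.1 : ℂ)‖ ≤ ‖S z.1‖ * ‖z.1‖ := norm_inner_le_norm _ _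
    _ ≤ (‖S‖ * ‖z.1‖) * ‖z.1‖ := by
        gcongr; exact S.le_opNorm z.1
    _ = ‖S‖ := by rw [z.2]; ring

open Set ContinuousLinearMap RCLike in
theorem stmt9 (A B X : H →L[ℂ] H) (r : ℝ) (hr : 2 ≤ r)
    (φ ψ : ℝ → ℝ) (hφ : IsOrliczFunction φ) (hψ : IsOrliczFunction ψ)
    (hyoung : ∀ u v : ℝ, 0 ≤ u → 0 ≤ v → u * v ≤ φ u + ψ v) :
    numRad (ContinuousLinearMap.adjoint A * X * B) ^ r ≤
      ‖X‖ ^ r * numRad (cfc φ (cfc (fun t : ℝ => t ^ r) (absOp A)) +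
        cfc ψ (cfc (fun t : ℝ => t ^ r) (absOp B))) := by
  obtain ⟨hφconv, hφcont, hφmono, -, -, -⟩ := hφ
  obtain ⟨hψconv, hψcont, hψmono, -, -, -⟩ := hψ
  have hr0 : (0:ℝ) < r := by linarith
  set TA := cfc (fun t : ℝ => t ^ r) (absOp A) with hTA
  set TB := cfc (fun t : ℝ => t ^ r) (absOp B) with hTB
  have hTApos : (0 : H →L[ℂ] H) ≤ TA := by
    rw [hTA, aux_cfc_pow_abs A hr]
    exact cfc_nonneg fun t ht =>
      Real.rpow_nonneg (spectrum_nonneg_of_nonneg (by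
        simpa [ContinuousLinearMap.star_eq_adjoint] using star_mul_self_nonneg A) ht) _
  have hTBpos : (0 : H →L[ℂ] H) ≤ TB := by
    rw [hTB, aux_cfc_pow_abs B hr]
    exact cfc_nonneg fun t ht =>
      Real.rpow_nonneg (spectrum_nonneg_of_nonneg (by
        simpa [ContinuousLinearMap.star_eq_adjoint] using star_mul_self_nonneg B) ht) _
  set W := cfc φ TA + cfc ψ TB with hW
  set K := ‖X‖ ^ r * numRad W with hKdef
  have hWnn : 0 ≤ numRad W := aux_numRad_nonneg W
  have hK : 0 ≤ K := mul_nonneg (Real.rpow_nonneg (norm_nonneg X) r) hWnn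
  -- pointwise bound
  have hterm : ∀ x : {x : H // ‖x‖ = 1},
      ‖(inner ℂ ((ContinuousLinearMap.adjoint A * X * B) x.1) x.1 : ℂ)‖ ^ r ≤ K := by
    rintro ⟨x, hx⟩
    have hval : (inner ℂ ((ContinuousLinearMap.adjoint A * X * B) x) x : ℂ)
        = inner ℂ (X (B x)) (A x) := by
      rw [ContinuousLinearMap.mul_apply, ContinuousLinearMap.mul_apply,
        ContinuousLinearMap.adjoint_inner_left]
    have hb1 : ‖(inner ℂ ((ContinuousLinearMap.adjoint A * X * B) x) x : ℂ)‖
        ≤ ‖X‖ * ‖A x‖ * ‖B x‖ := by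
      rw [hval]
      calc ‖(inner ℂ (X (B x)) (A x) : ℂ)‖ ≤ ‖X (B x)‖ * ‖A x‖ := norm_inner_le_norm _ _
        _ ≤ (‖X‖ * ‖B x‖) * ‖A x‖ := by gcongr; exact X.le_opNorm (B x)
        _ = ‖X‖ * ‖A x‖ * ‖B x‖ := by ring
    have hrpow : ‖(inner ℂ ((ContinuousLinearMap.adjoint A * X * B) x) x : ℂ)‖ ^ r
        ≤ ‖X‖ ^ r * (‖A x‖ ^ r * ‖B x‖ ^ r) := by
      calc ‖(inner ℂ ((ContinuousLinearMap.adjoint A * X * B) x) x : ℂ)‖ ^ r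
          ≤ (‖X‖ * ‖A x‖ * ‖B x‖) ^ r :=
            Real.rpow_le_rpow (norm_nonneg _) hb1 hr0.le
        _ = ‖X‖ ^ r * (‖A x‖ ^ r * ‖B x‖ ^ r) := by
            rw [Real.mul_rpow (by positivity) (norm_nonneg _),
              Real.mul_rpow (norm_nonneg _) (norm_nonneg _), mul_assoc]
    set α := re (inner ℂ (TA x) x : ℂ) with hα
    set β := re (inner ℂ (TB x) x : ℂ) with hβ
    have hα0 : 0 ≤ α := ((ContinuousLinearMap.nonneg_iff_isPositive TA).mp
      hTApos).re_inner_nonneg_left x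
    have hβ0 : 0 ≤ β := ((ContinuousLinearMap.nonneg_iff_isPositive TB).mp
      hTBpos).re_inner_nonneg_left x
    have hAx : ‖A x‖ ^ r ≤ α := aux_holder_mccarthy A hr x hx
    have hBx : ‖B x‖ ^ r ≤ β := aux_holder_mccarthy B hr x hx
    have hprod : ‖A x‖ ^ r * ‖B x‖ ^ r ≤ α * β :=
      mul_le_mul hAx hBx (Real.rpow_nonneg (norm_nonneg _) r) hα0
    have hy : α * β ≤ φ α + ψ β := hyoung α β hα0 hβ0
    have hjφ : φ α ≤ re (inner ℂ ((cfc φ TA) x) x : ℂ) :=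
      aux_op_jensen TA hTApos hφconv hφcont hφmono x hx
    have hjψ : ψ β ≤ re (inner ℂ ((cfc ψ TB) x) x : ℂ) :=
      aux_op_jensen TB hTBpos hψconv hψcont hψmono x hx
    have hWval : re (inner ℂ ((cfc φ TA) x) x : ℂ) + re (inner ℂ ((cfc ψ TB) x) x : ℂ)
        = re (inner ℂ (W x) x : ℂ) := by
      rw [hW]
      simp [ContinuousLinearMap.add_apply, inner_add_left]
    have hWle : re (inner ℂ (W x) x : ℂ) ≤ numRad W :=
      le_trans (RCLike.re_le_norm _) (aux_le_numRad W ⟨x, hx⟩)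
    have hαβW : α * β ≤ numRad W := by
      calc α * β ≤ φ α + ψ β := hy
        _ ≤ re (inner ℂ ((cfc φ TA) x) x : ℂ) + re (inner ℂ ((cfc ψ TB) x) x : ℂ) :=
            add_le_add hjφ hjψ
        _ = re (inner ℂ (W x) x : ℂ) := hWval
        _ ≤ numRad W := hWle
    calc ‖(inner ℂ ((ContinuousLinearMap.adjoint A * X * B) x) x : ℂ)‖ ^ r
        ≤ ‖X‖ ^ r * (‖A x‖ ^ r * ‖B x‖ ^ r) := hrpow
      _ ≤ ‖X‖ ^ r * (α * β) := by
          have h0 : (0:ℝ) ≤ ‖X‖ ^ r := Real.rpow_nonneg (norm_nonneg X) r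
          exact mul_le_mul_of_nonneg_left hprod h0
      _ ≤ ‖X‖ ^ r * numRad W := by
          have h0 : (0:ℝ) ≤ ‖X‖ ^ r := Real.rpow_nonneg (norm_nonneg X) r
          exact mul_le_mul_of_nonneg_left hαβW h0
      _ = K := rfl
  -- conclude via suprema
  have hsup : numRad (ContinuousLinearMap.adjoint A * X * B) ≤ K ^ r⁻¹ := by
    apply Real.iSup_le _ (Real.rpow_nonneg hK _)
    intro x
    have := hterm x
    calc ‖(inner ℂ ((ContinuousLinearMap.adjoint A * X * B) x.1) x.1 : ℂ)‖
        = (‖(inner ℂ ((ContinuousLinearMap.adjoint A * X * B) x.1) x.1 : ℂ)‖ ^ r) ^ r⁻¹ := by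
          rw [Real.rpow_rpow_inv (norm_nonneg _) hr0.ne']
      _ ≤ K ^ r⁻¹ := Real.rpow_le_rpow (Real.rpow_nonneg (norm_nonneg _) r) this
          (by positivity)
  calc numRad (ContinuousLinearMap.adjoint A * X * B) ^ r
      ≤ (K ^ r⁻¹) ^ r :=
        Real.rpow_le_rpow (aux_numRad_nonneg _) hsup hr0.le
    _ = K := Real.rpow_inv_rpow hK hr0.ne'
end

section
/- Let A ∈ B(H) and φ an Orlicz function. Then φ(w(A)) ≤ (1/2)·‖φ(|A|) + φ(|A*|)‖, where w is the numerical radius. -/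
set_option maxHeartbeats 1000000

section Aux

open scoped InnerProductSpace
open RCLike ContinuousLinearMap Polynomial

variable {H : Type*} [NormedAddCommGroup H] [InnerProductSpace ℂ H] [CompleteSpace H]

private theorem my_intertwine [Nontrivial H] (A : H →L[ℂ] H) (f : ℝ → ℝ) (hf : Continuous f) :
    A * cfc f (star A * A) = cfc f (A * star A) * A := by
  set R := star A * A with hRdef
  set L := A * star A with hLdef
  have hR : IsSelfAdjoint R := IsSelfAdjoint.star_mul_self A
  have hL : IsSelfAdjoint L := IsSelfAdjoint.mul_star_self A
  set M : ℝ := max ‖R‖ ‖L‖ with hM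
  have hRspec : spectrum ℝ R ⊆ Set.Icc 0 M := by
    intro x hx
    refine ⟨spectrum_nonneg_of_nonneg (star_mul_self_nonneg A) hx, ?_⟩
    calc x ≤ |x| := le_abs_self x
    _ ≤ ‖R‖ := spectrum.norm_le_norm_of_mem hx
    _ ≤ M := le_max_left _ _
  have hLspec : spectrum ℝ L ⊆ Set.Icc 0 M := by
    intro x hx
    refine ⟨spectrum_nonneg_of_nonneg (mul_star_self_nonneg A) hx, ?_⟩
    calc x ≤ |x| := le_abs_self x
    _ ≤ ‖L‖ := spectrum.norm_le_norm_of_mem hx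
    _ ≤ M := le_max_right _ _
  -- key polynomial fact
  have hpoly : ∀ p : ℝ[X], A * aeval R p = aeval L p * A := by
    intro p
    induction p using Polynomial.induction_on' with
    | add p q hp hq => rw [map_add, map_add, mul_add, add_mul, hp, hq]
    | monomial n c =>
      have key : ∀ m : ℕ, A * R ^ m = L ^ m * A := by
        intro m
        induction m with
        | zero => simp
        | succ m ih =>
          rw [pow_succ, ← mul_assoc, ih, pow_succ]
          simp only [hRdef, hLdef, mul_assoc]
      rw [aeval_monomial, aeval_monomial, ← mul_assoc, ← Algebra.commutes, mul_assoc, key,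
        ← mul_assoc]
  -- approximation
  have happrox : ∀ δ : ℝ, 0 < δ → ∃ p : ℝ[X], ∀ x ∈ Set.Icc (0:ℝ) M, |f x - p.eval x| ≤ δ := by
    intro δ hδ
    have h0M : (0:ℝ) ≤ M := le_trans (norm_nonneg R) (le_max_left _ _)
    set fc : C(Set.Icc (0:ℝ) M, ℝ) := ⟨fun x => f x, hf.comp continuous_subtype_val⟩ with hfc
    have hmem : fc ∈ (polynomialFunctions (Set.Icc (0:ℝ) M)).topologicalClosure := by
      rw [polynomialFunctions_closure_eq_top]
      trivial
    have hmem' : fc ∈ closure ((polynomialFunctions (Set.Icc (0:ℝ) M)) :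
        Set C(Set.Icc (0:ℝ) M, ℝ)) := hmem
    rw [Metric.mem_closure_iff] at hmem'
    obtain ⟨g, hg, hdist⟩ := hmem' δ hδ
    rw [polynomialFunctions_coe] at hg
    obtain ⟨p, rfl⟩ := hg
    refine ⟨p, fun x hx => ?_⟩
    have := ContinuousMap.dist_apply_le_dist (f := fc) (g := p.toContinuousMapOnAlgHom _) ⟨x, hx⟩
    have h2 : dist (fc ⟨x, hx⟩) ((p.toContinuousMapOnAlgHom _) ⟨x, hx⟩) ≤ δ := this.trans hdist.le
    simpa [fc, Real.dist_eq, Polynomial.toContinuousMapOnAlgHom, Polynomial.toContinuousMapOn,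
      Polynomial.toContinuousMap] using h2
  -- now conclude by approximation
  have key : ∀ δ : ℝ, 0 < δ → ‖A * cfc f R - cfc f L * A‖ ≤ 2 * ‖A‖ * δ := by
    intro δ hδ
    obtain ⟨p, hp⟩ := happrox δ hδ
    have hfR : cfc f R = cfc (fun x => p.eval x) R + cfc (fun x => f x - p.eval x) R := by
      rw [← cfc_add R _ _ (by fun_prop) (by fun_prop)]
      exact cfc_congr (fun x _ => by ring)
    have hfL : cfc f L = cfc (fun x => p.eval x) L + cfc (fun x => f x - p.eval x) L := by
      rw [← cfc_add L _ _ (by fun_prop) (by fun_prop)]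
      exact cfc_congr (fun x _ => by ring)
    have hnR : ‖cfc (fun x => f x - p.eval x) R‖ ≤ δ :=
      norm_cfc_le hδ.le (fun x hx => by simpa [Real.norm_eq_abs] using hp x (hRspec hx))
    have hnL : ‖cfc (fun x => f x - p.eval x) L‖ ≤ δ :=
      norm_cfc_le hδ.le (fun x hx => by simpa [Real.norm_eq_abs] using hp x (hLspec hx))
    have hpc : A * cfc (fun x => p.eval x) R = cfc (fun x => p.eval x) L * A := by
      rw [cfc_polynomial p R, cfc_polynomial p L]; exact hpoly p
    calc ‖A * cfc f R - cfc f L * A‖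
        = ‖A * cfc (fun x => f x - p.eval x) R - cfc (fun x => f x - p.eval x) L * A‖ := by
          rw [hfR, hfL]; congr 1; rw [mul_add, add_mul, hpc]; abel
      _ ≤ ‖A * cfc (fun x => f x - p.eval x) R‖ + ‖cfc (fun x => f x - p.eval x) L * A‖ :=
          norm_sub_le _ _
      _ ≤ ‖A‖ * δ + δ * ‖A‖ := by
          gcongr
          · exact le_trans (norm_mul_le _ _) (by gcongr)
          · exact le_trans (norm_mul_le _ _) (by gcongr)
      _ = 2 * ‖A‖ * δ := by ring
  rw [← sub_eq_zero, ← norm_le_zero_iff]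
  refine le_of_forall_pos_le_add (fun ε hε => ?_)
  have h2A : (0:ℝ) < 2 * ‖A‖ + 1 := by positivity
  calc ‖A * cfc f R - cfc f L * A‖ ≤ 2 * ‖A‖ * (ε / (2 * ‖A‖ + 1)) := key _ (by positivity)
    _ ≤ ε := by
        have h1 : 2 * ‖A‖ * (ε / (2 * ‖A‖ + 1)) = (2 * ‖A‖ / (2 * ‖A‖ + 1)) * ε := by ring
        have h2 : 2 * ‖A‖ / (2 * ‖A‖ + 1) ≤ 1 := by
          rw [div_le_one h2A]; linarith
        rw [h1]
        nlinarith [mul_le_mul_of_nonneg_right h2 hε.le]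
    _ ≤ 0 + ε := by linarith

private lemma my_inner_re_mono {S T : H →L[ℂ] H} (h : S ≤ T) (x : H) :
    re ⟪S x, x⟫_ℂ ≤ re ⟪T x, x⟫_ℂ := by
  have h1 := ((ContinuousLinearMap.le_def S T).mp h).inner_nonneg_left x
  rw [ContinuousLinearMap.sub_apply, inner_sub_left] at h1
  have h2 := (RCLike.nonneg_iff.mp h1).1
  rw [map_sub] at h2
  linarith

private lemma my_norm_sq_eq_re_inner {Q : H →L[ℂ] H} (hQ : IsSelfAdjoint Q) (u : H) :
    ‖Q u‖ ^ 2 = re ⟪(Q * Q) u, u⟫_ℂ := by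
  have hadj : ContinuousLinearMap.adjoint Q = Q := by
    rw [← ContinuousLinearMap.star_eq_adjoint]; exact hQ.star_eq
  rw [← inner_self_eq_norm_sq (𝕜 := ℂ), ContinuousLinearMap.mul_apply, ← hadj,
    ContinuousLinearMap.adjoint_inner_left, hadj, inner_re_symm]

private lemma my_absOp_eq (A : H →L[ℂ] H) : absOp A = cfc Real.sqrt (star A * A) := by
  rw [absOp, ContinuousLinearMap.star_eq_adjoint]

private lemma my_absOp_adjoint_eq (A : H →L[ℂ] H) :
    absOp (ContinuousLinearMap.adjoint A) = cfc Real.sqrt (A * star A) := by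
  rw [absOp, adjoint_adjoint, ContinuousLinearMap.star_eq_adjoint]

private lemma my_absOp_nonneg (A : H →L[ℂ] H) : 0 ≤ absOp A := by
  rw [my_absOp_eq]
  exact cfc_nonneg (fun t _ => Real.sqrt_nonneg t)

private lemma my_kato_eps [Nontrivial H] (A : H →L[ℂ] H) (x : H) (ε : ℝ) (hε : 0 < ε) :
    ‖(⟪A x, x⟫_ℂ : ℂ)‖ ^ 2 ≤
      (re ⟪absOp A x, x⟫_ℂ + Real.sqrt ε * ‖x‖ ^ 2) *
        re ⟪absOp (ContinuousLinearMap.adjoint A) x, x⟫_ℂ := by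
  set R := star A * A with hRdef
  set L := A * star A with hLdef
  have hRpos : (0 : H →L[ℂ] H) ≤ R := star_mul_self_nonneg A
  have hLpos : (0 : H →L[ℂ] H) ≤ L := mul_star_self_nonneg A
  have hRsa : IsSelfAdjoint R := IsSelfAdjoint.star_mul_self A
  have hLsa : IsSelfAdjoint L := IsSelfAdjoint.mul_star_self A
  have hRspec : ∀ t ∈ spectrum ℝ R, 0 ≤ t := fun t ht => spectrum_nonneg_of_nonneg hRpos ht
  have hLspec : ∀ t ∈ spectrum ℝ L, 0 ≤ t := fun t ht => spectrum_nonneg_of_nonneg hLpos ht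
  set q : ℝ → ℝ := fun t => Real.sqrt (Real.sqrt (t + ε)) with hqdef
  set h : ℝ → ℝ := fun t => (Real.sqrt (max t 0 + ε))⁻¹ with hhdef
  set b : ℝ → ℝ := fun t => Real.sqrt (t + ε) with hbdef
  have hsqrtpos : ∀ t : ℝ, 0 < Real.sqrt (max t 0 + ε) := by
    intro t
    apply Real.sqrt_pos.mpr
    have := le_max_right t 0
    positivity
  have hqcont : Continuous q := by fun_prop
  have hbcont : Continuous b := by fun_prop
  have hhcont : Continuous h := by
    apply Continuous.inv₀
    · fun_prop
    · exact fun t => (hsqrtpos t).ne'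
  set Q : H →L[ℂ] H := cfc q R with hQdef
  set V : H →L[ℂ] H := cfc h R with hVdef
  have hQ : IsSelfAdjoint Q := cfc_predicate q R
  have hV : IsSelfAdjoint V := cfc_predicate h R
  have e1 : Q * Q = cfc b R := by
    rw [hQdef, ← cfc_mul q q R hqcont.continuousOn hqcont.continuousOn]
    exact cfc_congr (fun t _ => Real.mul_self_sqrt (Real.sqrt_nonneg _))
  have e2 : V * (Q * Q) = 1 := by
    rw [e1, hVdef, ← cfc_mul h b R hhcont.continuousOn hbcont.continuousOn]
    have : cfc (fun t => h t * b t) R = cfc (1 : ℝ → ℝ) R := by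
      apply cfc_congr
      intro t ht
      have ht0 : 0 ≤ t := hRspec t ht
      simp only [hhdef, hbdef, max_eq_left ht0, Pi.one_apply]
      exact inv_mul_cancel₀ (by simpa [max_eq_left ht0] using (hsqrtpos t).ne')
    rw [this, cfc_one (R := ℝ) (a := R) hRsa]
  set U : H →L[ℂ] H := A * V with hUdef
  have hAeq : A = U * (Q * Q) := by rw [hUdef, mul_assoc, e2, mul_one]
  set K : H →L[ℂ] H := U * ((Q * Q) * ContinuousLinearMap.adjoint U) with hKdef
  have hKcfc : K = cfc (fun t => h t * t) L := by
    have hstarU : ContinuousLinearMap.adjoint U = V * star A := by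
      rw [← ContinuousLinearMap.star_eq_adjoint, hUdef, star_mul, hV.star_eq]
    have h1 : V * (cfc b R * V) = cfc h R := by
      rw [hVdef, ← cfc_mul b h R hbcont.continuousOn hhcont.continuousOn,
        ← cfc_mul h (fun x => b x * h x) R hhcont.continuousOn (hbcont.mul hhcont).continuousOn]
      apply cfc_congr
      intro t ht
      have ht0 : 0 ≤ t := hRspec t ht
      have hbh : b t * h t = 1 := by
        simp only [hhdef, hbdef, max_eq_left ht0]
        exact mul_inv_cancel₀ (by simpa [max_eq_left ht0] using (hsqrtpos t).ne')
      show h t * (b t * h t) = h t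
      rw [hbh, mul_one]
    have h2 : K = A * cfc h R * star A := by
      rw [hKdef, hstarU, e1, hUdef]
      rw [show A * V * (cfc b R * (V * star A)) = A * (V * (cfc b R * V)) * star A by
        simp only [mul_assoc]]
      rw [h1]
    have h3 : cfc (fun t => h t * t) L = cfc h L * L := by
      rw [cfc_mul h (fun t : ℝ => t) L hhcont.continuousOn continuous_id.continuousOn,
        cfc_id' (R := ℝ) L hLsa]
    rw [h2, my_intertwine A h hhcont, mul_assoc, ← hLdef, h3]
  have hKle : K ≤ absOp (ContinuousLinearMap.adjoint A) := by
    rw [hKcfc, my_absOp_adjoint_eq, ← hLdef]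
    apply cfc_mono _ ((hhcont.mul continuous_id).continuousOn) Real.continuous_sqrt.continuousOn
    intro t ht
    have ht0 : 0 ≤ t := hLspec t ht
    have hmax : max t 0 = t := max_eq_left ht0
    simp only [hhdef, hmax]
    have h1 : Real.sqrt t * Real.sqrt t = t := Real.mul_self_sqrt ht0
    have h2 : Real.sqrt t ≤ Real.sqrt (t + ε) := Real.sqrt_le_sqrt (by linarith)
    have h3 : 0 < Real.sqrt (t + ε) := by simpa [hmax] using hsqrtpos t
    simp only [Pi.mul_apply, id_eq, hmax]
    rw [inv_mul_le_iff₀ h3]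
    nlinarith [Real.sqrt_nonneg t, mul_le_mul_of_nonneg_right h2 (Real.sqrt_nonneg t)]
  have e4 : Q * Q ≤ absOp A + algebraMap ℝ (H →L[ℂ] H) (Real.sqrt ε) := by
    rw [e1, my_absOp_eq, ← hRdef, ← cfc_const (Real.sqrt ε) R hRsa,
      ← cfc_add R _ _ Real.continuous_sqrt.continuousOn continuousOn_const]
    apply cfc_mono _ hbcont.continuousOn
      (Real.continuous_sqrt.add continuous_const).continuousOn
    intro t ht
    have ht0 : 0 ≤ t := hRspec t ht
    have ha1 : Real.sqrt t ^ 2 = t := Real.sq_sqrt ht0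
    have ha2 : Real.sqrt ε ^ 2 = ε := Real.sq_sqrt hε.le
    have ha3 : 0 ≤ Real.sqrt t * Real.sqrt ε :=
      mul_nonneg (Real.sqrt_nonneg t) (Real.sqrt_nonneg ε)
    have h1 : Real.sqrt (t + ε) ≤ Real.sqrt ((Real.sqrt t + Real.sqrt ε) ^ 2) :=
      Real.sqrt_le_sqrt (by nlinarith)
    rw [Real.sqrt_sq (by positivity)] at h1
    simpa only [hbdef, Pi.add_apply] using h1
  -- inner product estimates
  have hinner : (⟪A x, x⟫_ℂ : ℂ) = ⟪Q x, Q (ContinuousLinearMap.adjoint U x)⟫_ℂ := by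
    have hadjQ : ContinuousLinearMap.adjoint Q = Q := by
      rw [← ContinuousLinearMap.star_eq_adjoint]; exact hQ.star_eq
    conv_lhs => rw [hAeq]
    calc (⟪(U * (Q * Q)) x, x⟫_ℂ : ℂ) = ⟪U (Q (Q x)), x⟫_ℂ := rfl
      _ = ⟪Q (Q x), ContinuousLinearMap.adjoint U x⟫_ℂ := by
          conv_lhs => rw [← adjoint_adjoint U]
          exact ContinuousLinearMap.adjoint_inner_left
            (ContinuousLinearMap.adjoint U) x (Q (Q x))
      _ = ⟪Q x, Q (ContinuousLinearMap.adjoint U x)⟫_ℂ := by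
          have h5 := ContinuousLinearMap.adjoint_inner_left
            Q (ContinuousLinearMap.adjoint U x) (Q x)
          rwa [hadjQ] at h5
  have hCS : ‖(⟪A x, x⟫_ℂ : ℂ)‖ ≤ ‖Q x‖ * ‖Q (ContinuousLinearMap.adjoint U x)‖ := by
    rw [hinner]; exact norm_inner_le_norm _ _
  have hn1 : ‖Q x‖ ^ 2 ≤ re ⟪absOp A x, x⟫_ℂ + Real.sqrt ε * ‖x‖ ^ 2 := by
    rw [my_norm_sq_eq_re_inner hQ]
    refine (my_inner_re_mono e4 x).trans_eq ?_
    rw [ContinuousLinearMap.add_apply, inner_add_left, map_add]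
    congr 1
    rw [Algebra.algebraMap_eq_smul_one, ContinuousLinearMap.smul_apply,
      ContinuousLinearMap.one_apply]
    rw [RCLike.real_smul_eq_coe_smul (K := ℂ), inner_smul_real_left, smul_re,
      inner_self_eq_norm_sq]
  have hn2 : ‖Q (ContinuousLinearMap.adjoint U x)‖ ^ 2 ≤
      re ⟪absOp (ContinuousLinearMap.adjoint A) x, x⟫_ℂ := by
    rw [my_norm_sq_eq_re_inner hQ]
    have heq : (⟪(Q * Q) (ContinuousLinearMap.adjoint U x),
        ContinuousLinearMap.adjoint U x⟫_ℂ : ℂ) = ⟪K x, x⟫_ℂ := by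
      rw [ContinuousLinearMap.adjoint_inner_right]
      rfl
    rw [heq]
    exact my_inner_re_mono hKle x
  have hQx : (0:ℝ) ≤ ‖Q x‖ := norm_nonneg _
  have hQu : (0:ℝ) ≤ ‖Q (ContinuousLinearMap.adjoint U x)‖ := norm_nonneg _
  calc ‖(⟪A x, x⟫_ℂ : ℂ)‖ ^ 2 ≤ (‖Q x‖ * ‖Q (ContinuousLinearMap.adjoint U x)‖) ^ 2 := by
        have := norm_nonneg (⟪A x, x⟫_ℂ : ℂ)
        nlinarith
    _ = ‖Q x‖ ^ 2 * ‖Q (ContinuousLinearMap.adjoint U x)‖ ^ 2 := by ring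
    _ ≤ (re ⟪absOp A x, x⟫_ℂ + Real.sqrt ε * ‖x‖ ^ 2) *
        re ⟪absOp (ContinuousLinearMap.adjoint A) x, x⟫_ℂ := by
        nlinarith [sq_nonneg ‖Q x‖, sq_nonneg ‖Q (ContinuousLinearMap.adjoint U x)‖]

private lemma my_supporting_line {φ : ℝ → ℝ} (hconv : ConvexOn ℝ (Set.Ici 0) φ)
    (hmono : MonotoneOn φ (Set.Ici 0)) (h0 : φ 0 = 0) {t₀ : ℝ} (ht₀ : 0 ≤ t₀) :
    ∃ a b : ℝ, a * t₀ + b = φ t₀ ∧ ∀ s ∈ Set.Ici (0:ℝ), a * s + b ≤ φ s := by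
  rcases eq_or_lt_of_le ht₀ with heq | hpos
  · refine ⟨0, 0, by simp [← heq, h0], fun s hs => ?_⟩
    simp only [zero_mul, zero_add]
    rw [← h0]
    exact hmono Set.self_mem_Ici hs hs
  · set E : Set ℝ := (fun s => (φ t₀ - φ s) / (t₀ - s)) '' (Set.Ico 0 t₀) with hE
    have hEne : E.Nonempty := ⟨_, ⟨0, ⟨le_refl 0, hpos⟩, rfl⟩⟩
    have hEbdd : BddAbove E := by
      refine ⟨(φ (t₀ + 1) - φ t₀) / (t₀ + 1 - t₀), ?_⟩
      rintro - ⟨s, ⟨hs0, hst⟩, rfl⟩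
      exact hconv.slope_mono_adjacent hs0 (by positivity : (0:ℝ) ≤ t₀ + 1) hst (by linarith)
    set a : ℝ := sSup E with ha
    refine ⟨a, φ t₀ - a * t₀, by ring, fun s hs => ?_⟩
    rcases lt_trichotomy s t₀ with hlt | heq | hgt
    · have hmem : (φ t₀ - φ s) / (t₀ - s) ∈ E := ⟨s, ⟨hs, hlt⟩, rfl⟩
      have h1 : (φ t₀ - φ s) / (t₀ - s) ≤ a := le_csSup hEbdd hmem
      rw [div_le_iff₀ (by linarith)] at h1
      nlinarith
    · rw [heq]; ring_nf; exact le_refl _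
    · have h1 : a ≤ (φ s - φ t₀) / (s - t₀) := by
        apply csSup_le hEne
        rintro - ⟨s', ⟨hs'0, hs't⟩, rfl⟩
        exact hconv.slope_mono_adjacent hs'0 hs hs't hgt
      rw [le_div_iff₀ (by linarith)] at h1
      nlinarith

private lemma my_jensen {φ : ℝ → ℝ} (hφ : IsOrliczFunction φ) (S : H →L[ℂ] H)
    (hS : 0 ≤ S) (x : H) (hx : ‖x‖ = 1) :
    φ (re ⟪S x, x⟫_ℂ) ≤ re ⟪cfc φ S x, x⟫_ℂ := by
  obtain ⟨hconv, hcont, hmono, h0, -, -⟩ := hφ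
  have hSsa : IsSelfAdjoint S := IsSelfAdjoint.of_nonneg hS
  have hspec : ∀ t ∈ spectrum ℝ S, 0 ≤ t := fun t ht => spectrum_nonneg_of_nonneg hS ht
  have hsub : spectrum ℝ S ⊆ Set.Ici 0 := fun t ht => hspec t ht
  have ht₀ : 0 ≤ re ⟪S x, x⟫_ℂ := by
    have := my_inner_re_mono hS x
    simpa using this
  obtain ⟨a, b, hab, hline⟩ := my_supporting_line hconv hmono h0 ht₀
  have hop : cfc (fun s => a * s + b) S ≤ cfc φ S := by
    apply cfc_mono (fun t ht => hline t (hspec t ht))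
      ((continuous_const.mul continuous_id).add continuous_const).continuousOn
      (hcont.mono hsub)
  have hcfc : cfc (fun s => a * s + b) S = a • S + algebraMap ℝ (H →L[ℂ] H) b := by
    rw [cfc_add S (fun s => a * s) (fun _ => b)
      (continuous_const.mul continuous_id).continuousOn continuousOn_const,
      cfc_const b S hSsa, cfc_const_mul a (fun s : ℝ => s) S continuous_id.continuousOn,
      cfc_id' (R := ℝ) S hSsa]
  have hlow := my_inner_re_mono (hcfc ▸ hop) x
  refine le_trans (le_of_eq ?_) hlow
  rw [ContinuousLinearMap.add_apply, inner_add_left, map_add,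
    ContinuousLinearMap.smul_apply, Algebra.algebraMap_eq_smul_one,
    ContinuousLinearMap.smul_apply, ContinuousLinearMap.one_apply,
    RCLike.real_smul_eq_coe_smul (K := ℂ) b, inner_smul_real_left, smul_re,
    inner_self_eq_norm_sq, RCLike.real_smul_eq_coe_smul (K := ℂ) a, inner_smul_real_left,
    smul_re, hx]
  rw [← hab]; ring

private lemma my_kato [Nontrivial H] (A : H →L[ℂ] H) (x : H) (hx : ‖x‖ = 1) :
    ‖(⟪A x, x⟫_ℂ : ℂ)‖ ≤
      (re ⟪absOp A x, x⟫_ℂ + re ⟪absOp (ContinuousLinearMap.adjoint A) x, x⟫_ℂ) / 2 := by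
  set s := re ⟪absOp A x, x⟫_ℂ with hsdef
  set t := re ⟪absOp (ContinuousLinearMap.adjoint A) x, x⟫_ℂ with htdef
  have hs : 0 ≤ s := by
    have h0 := my_inner_re_mono (my_absOp_nonneg A) x
    rw [ContinuousLinearMap.zero_apply, inner_zero_left, map_zero] at h0; exact h0
  have ht : 0 ≤ t := by
    have h0 := my_inner_re_mono (my_absOp_nonneg (ContinuousLinearMap.adjoint A)) x
    rw [ContinuousLinearMap.zero_apply, inner_zero_left, map_zero] at h0; exact h0
  have hsq : ‖(⟪A x, x⟫_ℂ : ℂ)‖ ^ 2 ≤ s * t := by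
    refine le_of_forall_pos_le_add (fun δ hδ => ?_)
    rcases eq_or_lt_of_le ht with h0 | hpos
    · have hk := my_kato_eps A x 1 one_pos
      rw [← htdef, ← hsdef, ← h0] at hk
      nlinarith
    · have hε : (0:ℝ) < (δ / t) ^ 2 := by positivity
      have hk := my_kato_eps A x ((δ / t) ^ 2) hε
      rw [← htdef, ← hsdef, Real.sqrt_sq (by positivity), hx] at hk
      have : (s + δ / t * 1 ^ 2) * t = s * t + δ := by
        field_simp
      rw [this] at hk
      exact hk
  have h1 : ‖(⟪A x, x⟫_ℂ : ℂ)‖ ≤ Real.sqrt (s * t) := by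
    rw [← Real.sqrt_sq (norm_nonneg (⟪A x, x⟫_ℂ : ℂ))]
    exact Real.sqrt_le_sqrt hsq
  have h2 : Real.sqrt (s * t) ≤ (s + t) / 2 := by
    rw [show (s + t) / 2 = Real.sqrt (((s + t) / 2) ^ 2) from (Real.sqrt_sq (by positivity)).symm]
    exact Real.sqrt_le_sqrt (by nlinarith [sq_nonneg (s - t)])
  linarith

private lemma my_pointwise (A : H →L[ℂ] H) {φ : ℝ → ℝ} (hφ : IsOrliczFunction φ)
    (x : H) (hx : ‖x‖ = 1) :
    φ ‖(⟪A x, x⟫_ℂ : ℂ)‖ ≤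
      (1 / 2) * ‖cfc φ (absOp A) + cfc φ (absOp (ContinuousLinearMap.adjoint A))‖ := by
  have hnt : Nontrivial H := by
    refine ⟨⟨x, 0, fun h => ?_⟩⟩
    rw [h] at hx; simp at hx
  have hconv := hφ.1
  have hmono := hφ.2.2.1
  set s := re ⟪absOp A x, x⟫_ℂ with hsdef
  set t := re ⟪absOp (ContinuousLinearMap.adjoint A) x, x⟫_ℂ with htdef
  have hs : 0 ≤ s := by
    have h0 := my_inner_re_mono (my_absOp_nonneg A) x
    rw [ContinuousLinearMap.zero_apply, inner_zero_left, map_zero] at h0; exact h0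
  have ht : 0 ≤ t := by
    have h0 := my_inner_re_mono (my_absOp_nonneg (ContinuousLinearMap.adjoint A)) x
    rw [ContinuousLinearMap.zero_apply, inner_zero_left, map_zero] at h0; exact h0
  have hk := my_kato A x hx
  have step1 : φ ‖(⟪A x, x⟫_ℂ : ℂ)‖ ≤ φ ((s + t) / 2) :=
    hmono (Set.mem_Ici.mpr (norm_nonneg _)) (Set.mem_Ici.mpr (by positivity)) hk
  have step2 : φ ((s + t) / 2) ≤ (φ s + φ t) / 2 := by
    have := hconv.2 (Set.mem_Ici.mpr hs) (Set.mem_Ici.mpr ht)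
      (by norm_num : (0:ℝ) ≤ 1/2) (by norm_num : (0:ℝ) ≤ 1/2) (by norm_num)
    simp only [smul_eq_mul] at this
    calc φ ((s + t) / 2) = φ (1/2 * s + 1/2 * t) := by ring_nf
      _ ≤ 1/2 * φ s + 1/2 * φ t := this
      _ = (φ s + φ t) / 2 := by ring
  have step3 : φ s ≤ re ⟪cfc φ (absOp A) x, x⟫_ℂ :=
    my_jensen hφ (absOp A) (my_absOp_nonneg A) x hx
  have step4 : φ t ≤ re ⟪cfc φ (absOp (ContinuousLinearMap.adjoint A)) x, x⟫_ℂ :=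
    my_jensen hφ (absOp (ContinuousLinearMap.adjoint A))
      (my_absOp_nonneg (ContinuousLinearMap.adjoint A)) x hx
  set T := cfc φ (absOp A) + cfc φ (absOp (ContinuousLinearMap.adjoint A)) with hT
  have step5 : re ⟪cfc φ (absOp A) x, x⟫_ℂ +
      re ⟪cfc φ (absOp (ContinuousLinearMap.adjoint A)) x, x⟫_ℂ ≤ ‖T‖ := by
    have h1 : re ⟪T x, x⟫_ℂ ≤ ‖T‖ := by
      calc re ⟪T x, x⟫_ℂ ≤ ‖(⟪T x, x⟫_ℂ : ℂ)‖ := RCLike.re_le_norm _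
        _ ≤ ‖T x‖ * ‖x‖ := norm_inner_le_norm _ _
        _ ≤ (‖T‖ * ‖x‖) * ‖x‖ := by gcongr; exact T.le_opNorm x
        _ = ‖T‖ := by rw [hx]; ring
    rw [hT, ContinuousLinearMap.add_apply, inner_add_left, map_add] at h1
    exact h1
  linarith


end Aux

variable {H : Type*} [NormedAddCommGroup H] [InnerProductSpace ℂ H] [CompleteSpace H]

open scoped InnerProductSpace in
open RCLike in
theorem stmt10 (A : H →L[ℂ] H) (φ : ℝ → ℝ) (hφ : IsOrliczFunction φ) :
    φ (numRad A) ≤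
      (1 / 2) * ‖cfc φ (absOp A) + cfc φ (absOp (ContinuousLinearMap.adjoint A))‖ := by
  have hC : (0:ℝ) ≤ (1 / 2) * ‖cfc φ (absOp A) + cfc φ (absOp (ContinuousLinearMap.adjoint A))‖ :=
    by positivity
  by_cases hne : Nonempty {x : H // ‖x‖ = 1}
  · set f : {x : H // ‖x‖ = 1} → ℝ := fun x => ‖(⟪A x.1, x.1⟫_ℂ : ℂ)‖ with hf
    have hbdd : BddAbove (Set.range f) := by
      refine ⟨‖A‖, ?_⟩
      rintro - ⟨y, rfl⟩
      calc ‖(⟪A y.1, y.1⟫_ℂ : ℂ)‖ ≤ ‖A y.1‖ * ‖y.1‖ := norm_inner_le_norm _ _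
        _ ≤ (‖A‖ * ‖y.1‖) * ‖y.1‖ := by gcongr; exact A.le_opNorm y.1
        _ = ‖A‖ := by rw [y.2]; ring
    have hN : numRad A = sSup (Set.range f) := rfl
    have hNmem : numRad A ∈ closure (Set.range f) := by
      rw [hN]
      exact csSup_mem_closure (Set.range_nonempty f) hbdd
    obtain ⟨u, hu, hulim⟩ := mem_closure_iff_seq_limit.mp hNmem
    have hN0 : 0 ≤ numRad A := by
      obtain ⟨x0⟩ := hne
      have h1 : f x0 ≤ numRad A := by rw [hN]; exact le_csSup hbdd ⟨x0, rfl⟩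
      exact le_trans (norm_nonneg _) h1
    have htend : Filter.Tendsto (fun n => φ (u n)) Filter.atTop (nhds (φ (numRad A))) := by
      have hcw : ContinuousWithinAt φ (Set.Ici 0) (numRad A) := hφ.2.1 (numRad A) hN0
      apply hcw.tendsto.comp
      rw [tendsto_nhdsWithin_iff]
      refine ⟨hulim, Filter.Eventually.of_forall (fun n => ?_)⟩
      obtain ⟨y, hy⟩ := hu n
      rw [← hy]
      exact norm_nonneg _
    refine le_of_tendsto htend (Filter.Eventually.of_forall (fun n => ?_))
    obtain ⟨y, hy⟩ := hu n
    rw [← hy]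
    exact my_pointwise A hφ y.1 y.2
  · have hempty : IsEmpty {x : H // ‖x‖ = 1} := not_nonempty_iff.mp hne
    have hzero : numRad A = 0 := by
      rw [numRad]
      exact Real.iSup_of_isEmpty _
    rw [hzero, hφ.2.2.2.1]
    exact hC
end

section
/- Let A ∈ B(H), φ an Orlicz function, and α ∈ (0,1). Then φ(w(A)²) ≤ ‖α·φ(|A|^{1/α}) + (1−α)·φ(|A*|^{1/(1−α)})‖. -/
set_option maxHeartbeats 1000000

variable {H : Type*} [NormedAddCommGroup H] [InnerProductSpace ℂ H] [CompleteSpace H]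

section Aux

open ContinuousLinearMap Set Topology Polynomial

set_option linter.unusedSectionVars false


open Set in
lemma support_line {ψ : ℝ → ℝ} (hc : ConvexOn ℝ (Ici 0) ψ) {s : ℝ} (hs : 0 < s) :
    ∃ c : ℝ, ∀ t ∈ Ici (0:ℝ), ψ s + c * (t - s) ≤ ψ t := by
  set sl : ℝ → ℝ := fun u => (ψ u - ψ s) / (u - s) with hsl
  have hmem : ∀ u : ℝ, 0 ≤ u → u ∈ Ici (0:ℝ) := fun u hu => hu
  have hBdd : BddAbove (sl '' Ico 0 s) := by
    refine ⟨sl (s + 1), ?_⟩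
    rintro y ⟨u, hu, rfl⟩
    exact hc.secant_mono (hmem s hs.le) (hmem u hu.1) (hmem (s+1) (by linarith))
      (ne_of_lt hu.2) (by linarith) (by linarith [hu.2.le])
  have hne : ((sl '' Ico 0 s)).Nonempty := ⟨sl 0, 0, ⟨le_refl _, hs⟩, rfl⟩
  refine ⟨sSup (sl '' Ico 0 s), fun t ht => ?_⟩
  rcases lt_trichotomy t s with h | h | h
  · have hle : sl t ≤ sSup (sl '' Ico 0 s) := le_csSup hBdd ⟨t, ⟨ht, h⟩, rfl⟩
    have : sSup (sl '' Ico 0 s) * (t - s) ≤ sl t * (t - s) := by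
      apply mul_le_mul_of_nonpos_right hle (by linarith)
    have h2 : sl t * (t - s) = ψ t - ψ s :=
      div_mul_cancel₀ _ (by intro hh; rw [sub_eq_zero] at hh; exact absurd hh (ne_of_lt h))
    linarith
  · simp [h]
  · have hle : sSup (sl '' Ico 0 s) ≤ sl t := by
      apply csSup_le hne
      rintro y ⟨u, hu, rfl⟩
      exact hc.secant_mono (hmem s hs.le) (hmem u hu.1) (hmem t (by linarith))
        (ne_of_lt hu.2) (ne_of_gt h) (by linarith [hu.2.le])
    have : sSup (sl '' Ico 0 s) * (t - s) ≤ sl t * (t - s) :=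
      mul_le_mul_of_nonneg_right hle (by linarith)
    have h2 : sl t * (t - s) = ψ t - ψ s :=
      div_mul_cancel₀ _ (by intro hh; rw [sub_eq_zero] at hh; exact absurd hh (ne_of_gt h))
    linarith

local notation "⟪" x ", " y "⟫" => (inner ℂ x y : ℂ)

lemma rin_nonneg {P : H →L[ℂ] H} (h : 0 ≤ P) (x : H) : 0 ≤ RCLike.re ⟪P x, x⟫ := by
  have := ((ContinuousLinearMap.nonneg_iff_isPositive P).mp h).inner_nonneg_left x
  exact (RCLike.nonneg_iff.mp this).1

lemma rin_mono {P Q : H →L[ℂ] H} (h : P ≤ Q) (x : H) :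
    RCLike.re ⟪P x, x⟫ ≤ RCLike.re ⟪Q x, x⟫ := by
  have := rin_nonneg (sub_nonneg.mpr h) x
  simp only [ContinuousLinearMap.sub_apply, inner_sub_left, map_sub] at this
  linarith

lemma rin_smul (c : ℝ) (P : H →L[ℂ] H) (x : H) :
    RCLike.re ⟪(c • P) x, x⟫ = c * RCLike.re ⟪P x, x⟫ := by
  rw [ContinuousLinearMap.smul_apply]
  have : (c • P x) = ((c:ℂ) • P x) := by simp [Complex.coe_smul]
  rw [this, inner_smul_left]
  simp

lemma rin_one (x : H) (hx : ‖x‖ = 1) : RCLike.re ⟪(1 : H →L[ℂ] H) x, x⟫ = 1 := by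
  simp only [ContinuousLinearMap.one_apply]
  rw [inner_self_eq_norm_sq_to_K]
  simp [hx]

lemma rin_le_norm (P : H →L[ℂ] H) (x : H) (hx : ‖x‖ = 1) :
    RCLike.re ⟪P x, x⟫ ≤ ‖P‖ := by
  calc RCLike.re ⟪P x, x⟫ ≤ ‖⟪P x, x⟫‖ := RCLike.re_le_norm _
    _ ≤ ‖P x‖ * ‖x‖ := norm_inner_le_norm _ _
    _ ≤ (‖P‖ * ‖x‖) * ‖x‖ := by
        have := P.le_opNorm x; nlinarith [norm_nonneg x, norm_nonneg (P x)]
    _ = ‖P‖ := by rw [hx]; ring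

lemma jensen_op {T : H →L[ℂ] H} (hT : IsSelfAdjoint T) (hTpos : (0 : H →L[ℂ] H) ≤ T)
    {ψ : ℝ → ℝ} (hc : ConvexOn ℝ (Ici 0) ψ) (hcont : ContinuousOn ψ (Ici 0))
    (hmono : MonotoneOn ψ (Ici 0)) (hψ0 : ψ 0 = 0) (x : H) (hx : ‖x‖ = 1) :
    ψ (RCLike.re ⟪T x, x⟫) ≤ RCLike.re ⟪cfc ψ T x, x⟫ := by
  have hspec : spectrum ℝ T ⊆ Ici 0 := fun t ht => spectrum_nonneg_of_nonneg hTpos ht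
  have hcont' : ContinuousOn ψ (spectrum ℝ T) := hcont.mono hspec
  have hs0 : 0 ≤ RCLike.re ⟪T x, x⟫ := rin_nonneg hTpos x
  rcases eq_or_lt_of_le hs0 with h0 | h0
  · rw [← h0, hψ0]
    refine rin_nonneg (cfc_nonneg fun t ht => ?_) x
    rw [← hψ0]
    exact hmono (Set.mem_Ici.mpr (le_refl 0)) (hspec ht) (hspec ht)
  · set s : ℝ := RCLike.re ⟪T x, x⟫ with hsdef
    obtain ⟨c, hcsupp⟩ := support_line hc h0
    have key : cfc (fun t : ℝ => c * t + (ψ s - c * s)) T ≤ cfc ψ T := by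
      apply cfc_mono (fun t ht => by have := hcsupp t (hspec ht); linarith)
        (by fun_prop) hcont'
    have hrw : cfc (fun t : ℝ => c * t + (ψ s - c * s)) T
        = c • T + (ψ s - c * s) • (1 : H →L[ℂ] H) := by
      rw [cfc_add T (fun t => c * t) (fun _ => ψ s - c * s),
        cfc_const_mul c (fun t : ℝ => t) T, cfc_id' ℝ T, cfc_const (ψ s - c * s) T,
        Algebra.algebraMap_eq_smul_one]
    rw [hrw] at key
    have := rin_mono key x
    rw [ContinuousLinearMap.add_apply, inner_add_left, map_add, rin_smul, rin_smul] at this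
    rw [rin_one x hx] at this
    calc ψ s = c * s + (ψ s - c * s) * 1 := by ring
    _ ≤ RCLike.re ⟪cfc ψ T x, x⟫ := this

lemma intertwine (A : H →L[ℂ] H) (f : ℝ → ℝ) (hf : Continuous f) :
    A * cfc f (adjoint A * A) = cfc f (A * adjoint A) * A := by
  set T := adjoint A * A with hTdef
  set S := A * adjoint A with hSdef
  have hT : IsSelfAdjoint T := by rw [hTdef, ← star_eq_adjoint]; exact IsSelfAdjoint.star_mul_self A
  have hS : IsSelfAdjoint S := by
    rw [hSdef, ← star_eq_adjoint]; exact IsSelfAdjoint.mul_star_self A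
  have key_pow : ∀ n : ℕ, A * T ^ n = S ^ n * A := by
    intro n
    induction n with
    | zero => simp
    | succ n ih =>
      have h1 : A * T = S * A := by rw [hTdef, hSdef]; exact (mul_assoc A (adjoint A) A).symm
      calc A * T ^ (n + 1) = A * (T * T ^ n) := by rw [pow_succ']
      _ = (A * T) * T ^ n := (mul_assoc _ _ _).symm
      _ = (S * A) * T ^ n := by rw [h1]
      _ = S * (A * T ^ n) := mul_assoc _ _ _
      _ = S * (S ^ n * A) := by rw [ih]
      _ = (S * S ^ n) * A := (mul_assoc _ _ _).symm
      _ = S ^ (n + 1) * A := by rw [← pow_succ']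
  have key_poly : ∀ p : ℝ[X], A * aeval T p = aeval S p * A := by
    intro p
    induction p using Polynomial.induction_on with
    | C r => simp only [aeval_C]; exact (Algebra.commutes r A).symm
    | add p q hp hq => simp only [map_add, mul_add, add_mul, hp, hq]
    | monomial n r _ =>
      simp only [map_mul, aeval_C, map_pow, aeval_X]
      calc A * (algebraMap ℝ _ r * T ^ (n + 1))
          = algebraMap ℝ _ r * (A * T ^ (n + 1)) := by
            rw [← mul_assoc, ← Algebra.commutes r A, mul_assoc]
      _ = algebraMap ℝ _ r * (S ^ (n + 1) * A) := by rw [key_pow]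
      _ = algebraMap ℝ _ r * S ^ (n + 1) * A := by rw [mul_assoc]
  set M : ℝ := max (‖T‖ * ‖(1 : H →L[ℂ] H)‖) (‖S‖ * ‖(1 : H →L[ℂ] H)‖) with hM
  have hMnn : 0 ≤ M :=
    le_trans (mul_nonneg (norm_nonneg T) (norm_nonneg _)) (le_max_left _ _)
  have hσT : spectrum ℝ T ⊆ Icc (-M) M := by
    intro t ht
    have h1 := spectrum.norm_le_norm_mul_of_mem ht
    rw [Real.norm_eq_abs] at h1
    have h2 : |t| ≤ M := h1.trans (le_max_left _ _)
    exact abs_le.mp h2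
  have hσS : spectrum ℝ S ⊆ Icc (-M) M := by
    intro t ht
    have h1 := spectrum.norm_le_norm_mul_of_mem ht
    rw [Real.norm_eq_abs] at h1
    have h2 : |t| ≤ M := h1.trans (le_max_right _ _)
    exact abs_le.mp h2
  have main : ∀ ε : ℝ, 0 < ε → ‖A * cfc f T - cfc f S * A‖ ≤ 2 * ‖A‖ * ε := by
    intro ε hε
    -- Weierstrass approximation on Icc (-M) M
    obtain ⟨p, hp⟩ : ∃ p : ℝ[X], ∀ t ∈ Icc (-M) M, |f t - p.eval t| < ε := by
      have htop := polynomialFunctions_closure_eq_top (-M) M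
      set K : Set ℝ := Icc (-M) M
      set F : C(K, ℝ) := ContinuousMap.restrict K ⟨f, hf⟩ with hF
      have hmem : F ∈ (polynomialFunctions K).topologicalClosure := by rw [htop]; trivial
      have hmem2 : F ∈ closure ((polynomialFunctions K) : Set C(K, ℝ)) := hmem
      rw [Metric.mem_closure_iff] at hmem2
      obtain ⟨g, hg, hdist⟩ := hmem2 ε hε
      rw [polynomialFunctions_coe] at hg
      obtain ⟨p, rfl⟩ := hg
      refine ⟨p, fun t ht => ?_⟩
      have := ContinuousMap.dist_apply_le_dist (f := F) (g := (Polynomial.toContinuousMapOnAlgHom K) p) ⟨t, ht⟩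
      have h2 : dist (F ⟨t, ht⟩) (((Polynomial.toContinuousMapOnAlgHom K) p) ⟨t, ht⟩) < ε :=
        lt_of_le_of_lt this hdist
      simpa [hF, Real.dist_eq, ContinuousMap.restrict, Polynomial.toContinuousMapOn,
        Polynomial.toContinuousMap] using h2
    have c1 : ‖cfc f T - cfc p.eval T‖ ≤ ε := by
      rw [← cfc_sub f p.eval T (hf.continuousOn) (p.continuous.continuousOn)]
      exact norm_cfc_le hε.le fun t ht => by
        rw [Real.norm_eq_abs]; exact (hp t (hσT ht)).le
    have c2 : ‖cfc p.eval S - cfc f S‖ ≤ ε := by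
      rw [← cfc_sub p.eval f S (p.continuous.continuousOn) (hf.continuousOn)]
      exact norm_cfc_le hε.le fun t ht => by
        rw [Real.norm_eq_abs, abs_sub_comm]; exact (hp t (hσS ht)).le
    have c3 : A * cfc p.eval T = cfc p.eval S * A := by
      rw [cfc_polynomial p T hT, cfc_polynomial p S hS]; exact key_poly p
    calc ‖A * cfc f T - cfc f S * A‖
        = ‖A * (cfc f T - cfc p.eval T) + (cfc p.eval S - cfc f S) * A‖ := by
          congr 1
          rw [mul_sub, sub_mul, c3]
          abel
    _ ≤ ‖A * (cfc f T - cfc p.eval T)‖ + ‖(cfc p.eval S - cfc f S) * A‖ := norm_add_le _ _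
    _ ≤ ‖A‖ * ε + ε * ‖A‖ := by
        gcongr
        · exact le_trans (norm_mul_le _ _) (by gcongr)
        · exact le_trans (norm_mul_le _ _) (by gcongr)
    _ = 2 * ‖A‖ * ε := by ring
  have hzero : ‖A * cfc f T - cfc f S * A‖ ≤ 0 := by
    by_contra hlt
    push_neg at hlt
    rcases eq_or_lt_of_le (norm_nonneg A) with hA0 | hA0
    · have : A = 0 := by rwa [eq_comm, norm_eq_zero] at hA0
      simp [this] at hlt
    · have := main (‖A * cfc f T - cfc f S * A‖ / (4 * ‖A‖)) (by positivity)
      have h4 : 2 * ‖A‖ * (‖A * cfc f T - cfc f S * A‖ / (4 * ‖A‖))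
          = ‖A * cfc f T - cfc f S * A‖ / 2 := by field_simp; ring
      rw [h4] at this
      linarith
  rw [← sub_eq_zero]
  exact norm_le_zero_iff.mp hzero

lemma mixed_schwarz (A : H →L[ℂ] H) (x : H) (hx : ‖x‖ = 1) :
    ‖⟪A x, x⟫‖ ^ 2 ≤
      RCLike.re ⟪absOp A x, x⟫ * RCLike.re ⟪absOp (adjoint A) x, x⟫ := by
  set T := adjoint A * A with hTdef
  set S := A * adjoint A with hSdef
  have hT : IsSelfAdjoint T := by rw [hTdef, ← star_eq_adjoint]; exact .star_mul_self A
  have hS : IsSelfAdjoint S := by rw [hSdef, ← star_eq_adjoint]; exact .mul_star_self A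
  have habs2 : absOp (adjoint A) = cfc Real.sqrt S := by
    rw [absOp, adjoint_adjoint]
  set a : ℝ := RCLike.re ⟪absOp A x, x⟫ with hadef
  set b : ℝ := RCLike.re ⟪absOp (adjoint A) x, x⟫ with hbdef
  have hb0 : 0 ≤ b := by
    apply rin_nonneg
    rw [absOp]
    exact cfc_nonneg fun t _ => Real.sqrt_nonneg t
  have ha0 : 0 ≤ a := by
    apply rin_nonneg
    rw [absOp]
    exact cfc_nonneg fun t _ => Real.sqrt_nonneg t
  have hσS : spectrum ℝ S ⊆ Ici 0 := fun t ht =>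
    spectrum_nonneg_of_nonneg (by rw [hSdef, ← star_eq_adjoint]; exact mul_star_self_nonneg A) ht
  -- main ε-estimate
  have key : ∀ ε : ℝ, 0 < ε → ‖⟪A x, x⟫‖ ^ 2 ≤ (a + ε) * b := by
    intro ε hε
    set e : ℝ → ℝ := fun s => (Real.sqrt s + ε) ^ (1/2 : ℝ) with hedef
    set fi : ℝ → ℝ := fun s => (Real.sqrt s + ε) ^ (-(1/2) : ℝ) with hfidef
    have hbase : ∀ s : ℝ, 0 < Real.sqrt s + ε := fun s => by
      have := Real.sqrt_nonneg s; linarith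
    have hce : Continuous e :=
      (Real.continuous_sqrt.add continuous_const).rpow_const fun s => Or.inl (hbase s).ne'
    have hcfi : Continuous fi :=
      (Real.continuous_sqrt.add continuous_const).rpow_const fun s => Or.inl (hbase s).ne'
    set E : H →L[ℂ] H := cfc e T with hEdef
    set F : H →L[ℂ] H := cfc fi T with hFdef
    have hEsa : IsSelfAdjoint E := cfc_predicate e T
    have hFsa : IsSelfAdjoint F := cfc_predicate fi T
    have hFE : F * E = 1 := by
      rw [hEdef, hFdef, ← cfc_mul fi e T hcfi.continuousOn hce.continuousOn]
      have : (fun s => fi s * e s) = fun _ : ℝ => (1:ℝ) := funext fun s => by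
        rw [hfidef, hedef, ← Real.rpow_add (hbase s)]
        norm_num
      rw [this]
      calc cfc (fun _ : ℝ => (1:ℝ)) T = algebraMap ℝ _ 1 := cfc_const 1 T hT
      _ = 1 := map_one _
    have hAeq : A = (A * F) * E := by rw [mul_assoc, hFE, mul_one]
    have hEE : E * E = absOp A + ε • 1 := by
      rw [hEdef, ← cfc_mul e e T hce.continuousOn hce.continuousOn]
      have : (fun s => e s * e s) = fun s : ℝ => Real.sqrt s + ε := funext fun s => by
        rw [hedef, ← Real.rpow_add (hbase s)]
        norm_num
      rw [this, cfc_add T Real.sqrt (fun _ => ε) Real.continuous_sqrt.continuousOn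
        continuous_const.continuousOn, cfc_const ε T hT, Algebra.algebraMap_eq_smul_one, absOp]
    have hFF : F * F = cfc (fun s => (Real.sqrt s + ε)⁻¹) T := by
      rw [hFdef, ← cfc_mul fi fi T hcfi.continuousOn hcfi.continuousOn]
      apply cfc_congr
      intro s _
      rw [hfidef]
      simp only
      rw [← Real.rpow_add (hbase s)]
      norm_num
      rw [Real.rpow_neg_one]
    -- |⟨Ax,x⟩| ≤ ‖E x‖ * ‖adjoint (A*F) x‖
    have step1 : ‖⟪A x, x⟫‖ ≤ ‖E x‖ * ‖adjoint (A * F) x‖ := by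
      have h1 : ⟪A x, x⟫ = ⟪E x, adjoint (A * F) x⟫ := by
        conv_lhs => rw [hAeq]
        rw [ContinuousLinearMap.mul_apply, ← ContinuousLinearMap.adjoint_inner_right]
      rw [h1]
      exact norm_inner_le_norm _ _
    have hEx : ‖E x‖ ^ 2 = a + ε := by
      have h1 : (‖E x‖:ℝ) ^ 2 = RCLike.re ⟪E x, E x⟫ := by
        rw [@inner_self_eq_norm_sq ℂ]
      have h2 : ⟪E x, E x⟫ = ⟪(E * E) x, x⟫ := by
        have h3 := ContinuousLinearMap.adjoint_inner_left E x (E x)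
        rw [hEsa.adjoint_eq] at h3
        rw [ContinuousLinearMap.mul_apply]
        exact h3.symm
      rw [h1, h2, hEE, ContinuousLinearMap.add_apply, inner_add_left, map_add, rin_smul,
        rin_one x hx, hadef]
      ring
    have hMx : ‖adjoint (A * F) x‖ ^ 2 ≤ b := by
      have h1 : (‖adjoint (A * F) x‖:ℝ) ^ 2 = RCLike.re ⟪(A * F) (adjoint (A * F) x), x⟫ := by
        have hI : RCLike.re ⟪adjoint (A * F) x, adjoint (A * F) x⟫
            = ‖adjoint (A * F) x‖ ^ 2 := inner_self_eq_norm_sq _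
        have hJ := ContinuousLinearMap.adjoint_inner_left (A * F) (adjoint (A * F) x) x
        rw [← hI, hJ, inner_re_symm]
      have h2 : (A * F) (adjoint (A * F) x) = ((A * F) * adjoint (A * F)) x := rfl
      have h3 : (A * F) * adjoint (A * F) = cfc (fun s => (Real.sqrt s + ε)⁻¹ * s) S := by
        have hadj : adjoint (A * F) = F * adjoint A := by
          rw [← star_eq_adjoint, ← star_eq_adjoint, star_mul, hFsa.star_eq]
        rw [hadj]
        calc A * F * (F * adjoint A) = A * (F * F) * adjoint A := by
              rw [mul_assoc, mul_assoc, mul_assoc]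
        _ = A * cfc (fun s => (Real.sqrt s + ε)⁻¹) T * adjoint A := by rw [hFF]
        _ = cfc (fun s => (Real.sqrt s + ε)⁻¹) S * A * adjoint A := by
              rw [intertwine A (fun s => (Real.sqrt s + ε)⁻¹) ((Real.continuous_sqrt.add continuous_const).inv₀
                fun s => (hbase s).ne')]
        _ = cfc (fun s => (Real.sqrt s + ε)⁻¹) S * S := by rw [mul_assoc]
        _ = cfc (fun s => (Real.sqrt s + ε)⁻¹) S * cfc (fun s : ℝ => s) S := by
              rw [cfc_id' ℝ S hS]
        _ = cfc (fun s => (Real.sqrt s + ε)⁻¹ * s) S := by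
              rw [← cfc_mul (fun s => (Real.sqrt s + ε)⁻¹) (fun s : ℝ => s) S
                (((Real.continuous_sqrt.add continuous_const).inv₀
                  fun s => (hbase s).ne')).continuousOn
                (continuous_id.continuousOn : ContinuousOn (fun s : ℝ => s) _)]
      have h4 : cfc (fun s => (Real.sqrt s + ε)⁻¹ * s) S ≤ cfc Real.sqrt S := by
        refine cfc_mono (fun t ht => ?_)
          ((((Real.continuous_sqrt.add continuous_const).inv₀
            fun s => (hbase s).ne').mul continuous_id).continuousOn)
          Real.continuous_sqrt.continuousOn
        have ht0 : 0 ≤ t := hσS ht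
        have hsq : Real.sqrt t * Real.sqrt t = t := Real.mul_self_sqrt ht0
        rw [inv_mul_eq_div, div_le_iff₀ (hbase t)]
        nlinarith [Real.sqrt_nonneg t]
      rw [h1, h2, h3]
      calc RCLike.re ⟪(cfc (fun s => (Real.sqrt s + ε)⁻¹ * s) S) x, x⟫
          ≤ RCLike.re ⟪(cfc Real.sqrt S) x, x⟫ := rin_mono h4 x
      _ = b := by rw [hbdef, habs2]
    calc ‖⟪A x, x⟫‖ ^ 2 ≤ (‖E x‖ * ‖adjoint (A * F) x‖) ^ 2 := by
          have := norm_nonneg (⟪A x, x⟫); nlinarith [step1]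
    _ = ‖E x‖ ^ 2 * ‖adjoint (A * F) x‖ ^ 2 := by ring
    _ ≤ (a + ε) * b := by
          rw [hEx]
          have : (0:ℝ) ≤ a + ε := by linarith
          exact mul_le_mul_of_nonneg_left hMx this
  -- conclude
  rcases eq_or_lt_of_le hb0 with hb | hb
  · have := key 1 one_pos
    rw [← hb] at this ⊢
    simpa using this
  · apply le_of_forall_pos_le_add
    intro δ hδ
    have := key (δ / b) (by positivity)
    calc ‖⟪A x, x⟫‖ ^ 2 ≤ (a + δ / b) * b := this
    _ = a * b + δ := by field_simp

-- rpow helper facts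
lemma rpow_props {p : ℝ} (hp : 1 ≤ p) :
    ConvexOn ℝ (Ici 0) (fun t : ℝ => t ^ p) ∧ ContinuousOn (fun t : ℝ => t ^ p) (Ici 0) ∧
    MonotoneOn (fun t : ℝ => t ^ p) (Ici 0) ∧ (fun t : ℝ => t ^ p) 0 = 0 := by
  refine ⟨convexOn_rpow hp, ?_, ?_, ?_⟩
  · intro t ht
    exact (Real.continuousAt_rpow_const t p (Or.inr (by linarith))).continuousWithinAt
  · exact fun s hs t ht hst => Real.rpow_le_rpow hs hst (by linarith)
  · simp only
    exact Real.zero_rpow (by linarith)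

lemma unit_bound (A : H →L[ℂ] H) (φ : ℝ → ℝ) (hφ : IsOrliczFunction φ)
    (α : ℝ) (hα : α ∈ Set.Ioo (0 : ℝ) 1) (x : H) (hx : ‖x‖ = 1) :
    φ (‖⟪A x, x⟫‖ ^ 2) ≤
      ‖α • cfc φ (cfc (fun t : ℝ => t ^ (1 / α)) (absOp A)) +
        (1 - α) • cfc φ (cfc (fun t : ℝ => t ^ (1 / (1 - α)))
          (absOp (ContinuousLinearMap.adjoint A)))‖ := by
  obtain ⟨hφc, hφcont, hφm, hφ0, _, _⟩ := hφ
  obtain ⟨hα0, hα1⟩ := hα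
  have h1α : (0:ℝ) < 1 - α := by linarith
  set p : ℝ := 1 / α with hpdef
  set q : ℝ := 1 / (1 - α) with hqdef
  have hp1 : 1 ≤ p := by rw [hpdef, le_div_iff₀ hα0, one_mul]; exact hα1.le
  have hq1 : 1 ≤ q := by rw [hqdef, le_div_iff₀ h1α, one_mul]; linarith
  obtain ⟨hpcvx, hpcont, hpm, hp0⟩ := rpow_props hp1
  obtain ⟨hqcvx, hqcont, hqm, hq0⟩ := rpow_props hq1
  -- positivity of absOps
  have habsA_sa : IsSelfAdjoint (absOp A) := cfc_predicate _ _
  have habsA_pos : (0:H →L[ℂ] H) ≤ absOp A := cfc_nonneg fun t _ => Real.sqrt_nonneg t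
  have habsA'_sa : IsSelfAdjoint (absOp (adjoint A)) := cfc_predicate _ _
  have habsA'_pos : (0:H →L[ℂ] H) ≤ absOp (adjoint A) :=
    cfc_nonneg fun t _ => Real.sqrt_nonneg t
  set a : ℝ := RCLike.re ⟪absOp A x, x⟫ with hadef
  set b : ℝ := RCLike.re ⟪absOp (adjoint A) x, x⟫ with hbdef
  have ha0 : 0 ≤ a := rin_nonneg habsA_pos x
  have hb0 : 0 ≤ b := rin_nonneg habsA'_pos x
  set B : H →L[ℂ] H := cfc (fun t : ℝ => t ^ p) (absOp A) with hBdef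
  set C : H →L[ℂ] H := cfc (fun t : ℝ => t ^ q) (absOp (adjoint A)) with hCdef
  have hB_sa : IsSelfAdjoint B := cfc_predicate _ _
  have hB_pos : (0:H →L[ℂ] H) ≤ B := by
    refine cfc_nonneg fun t ht => Real.rpow_nonneg ?_ p
    exact spectrum_nonneg_of_nonneg habsA_pos ht
  have hC_sa : IsSelfAdjoint C := cfc_predicate _ _
  have hC_pos : (0:H →L[ℂ] H) ≤ C := by
    refine cfc_nonneg fun t ht => Real.rpow_nonneg ?_ q
    exact spectrum_nonneg_of_nonneg habsA'_pos ht
  -- McCarthy steps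
  have hMc1 : a ^ p ≤ RCLike.re ⟪B x, x⟫ :=
    jensen_op habsA_sa habsA_pos hpcvx hpcont hpm hp0 x hx
  have hMc2 : b ^ q ≤ RCLike.re ⟪C x, x⟫ :=
    jensen_op habsA'_sa habsA'_pos hqcvx hqcont hqm hq0 x hx
  have hBx0 : 0 ≤ RCLike.re ⟪B x, x⟫ := rin_nonneg hB_pos x
  have hCx0 : 0 ≤ RCLike.re ⟪C x, x⟫ := rin_nonneg hC_pos x
  -- Jensen with φ
  have hJ1 : φ (RCLike.re ⟪B x, x⟫) ≤ RCLike.re ⟪cfc φ B x, x⟫ :=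
    jensen_op hB_sa hB_pos hφc hφcont hφm hφ0 x hx
  have hJ2 : φ (RCLike.re ⟪C x, x⟫) ≤ RCLike.re ⟪cfc φ C x, x⟫ :=
    jensen_op hC_sa hC_pos hφc hφcont hφm hφ0 x hx
  -- Young
  have hpq : Real.HolderConjugate p q :=
    Real.holderConjugate_one_div hα0 h1α (by ring)
  have hyoung : a * b ≤ α * a ^ p + (1 - α) * b ^ q := by
    have := Real.young_inequality_of_nonneg ha0 hb0 hpq
    have hpeq : a ^ p / p = α * a ^ p := by rw [hpdef]; field_simp
    have hqeq : b ^ q / q = (1 - α) * b ^ q := by rw [hqdef]; field_simp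
    linarith
  -- mixed Schwarz
  have hms : ‖⟪A x, x⟫‖ ^ 2 ≤ a * b := mixed_schwarz A x hx
  -- chain
  have hab0 : (0:ℝ) ≤ a * b := mul_nonneg ha0 hb0
  have hsum0 : (0:ℝ) ≤ α * a ^ p + (1 - α) * b ^ q := by
    have := Real.rpow_nonneg ha0 p
    have := Real.rpow_nonneg hb0 q
    nlinarith
  have step1 : φ (‖⟪A x, x⟫‖ ^ 2) ≤ φ (α * a ^ p + (1 - α) * b ^ q) :=
    hφm (mem_Ici.mpr (sq_nonneg _)) hsum0 (hms.trans hyoung)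
  have step2 : φ (α * a ^ p + (1 - α) * b ^ q) ≤ α * φ (a ^ p) + (1 - α) * φ (b ^ q) :=
    hφc.2 (Real.rpow_nonneg ha0 p) (Real.rpow_nonneg hb0 q) hα0.le h1α.le (by ring)
  have step3 : α * φ (a ^ p) + (1 - α) * φ (b ^ q)
      ≤ α * RCLike.re ⟪cfc φ B x, x⟫ + (1 - α) * RCLike.re ⟪cfc φ C x, x⟫ := by
    have m1 : φ (a ^ p) ≤ RCLike.re ⟪cfc φ B x, x⟫ :=
      le_trans (hφm (Real.rpow_nonneg ha0 p) hBx0 hMc1) hJ1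
    have m2 : φ (b ^ q) ≤ RCLike.re ⟪cfc φ C x, x⟫ :=
      le_trans (hφm (Real.rpow_nonneg hb0 q) hCx0 hMc2) hJ2
    nlinarith
  have step4 : α * RCLike.re ⟪cfc φ B x, x⟫ + (1 - α) * RCLike.re ⟪cfc φ C x, x⟫
      = RCLike.re ⟪(α • cfc φ B + (1 - α) • cfc φ C) x, x⟫ := by
    rw [ContinuousLinearMap.add_apply, inner_add_left, map_add, rin_smul, rin_smul]
  have step5 := rin_le_norm (α • cfc φ B + (1 - α) • cfc φ C) x hx
  rw [hBdef, hCdef] at *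
  linarith [step1, step2, step3, step5, step4.le, step4.ge]

theorem stmt12 (A : H →L[ℂ] H) (φ : ℝ → ℝ) (hφ : IsOrliczFunction φ)
    (α : ℝ) (hα : α ∈ Set.Ioo (0 : ℝ) 1) :
    φ (numRad A ^ 2) ≤
      ‖α • cfc φ (cfc (fun t : ℝ => t ^ (1 / α)) (absOp A)) +
        (1 - α) • cfc φ (cfc (fun t : ℝ => t ^ (1 / (1 - α)))
          (absOp (ContinuousLinearMap.adjoint A)))‖ := by
  obtain ⟨hφc, hφcont, hφm, hφ0, hφpos, hφtop⟩ := hφ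
  set R : ℝ := ‖α • cfc φ (cfc (fun t : ℝ => t ^ (1 / α)) (absOp A)) +
        (1 - α) • cfc φ (cfc (fun t : ℝ => t ^ (1 / (1 - α)))
          (absOp (ContinuousLinearMap.adjoint A)))‖ with hRdef
  have hR0 : 0 ≤ R := norm_nonneg _
  set g : {x : H // ‖x‖ = 1} → ℝ := fun z => ‖⟪A z.1, z.1⟫‖ with hgdef
  have hg0 : ∀ z, 0 ≤ g z := fun z => norm_nonneg _
  have hgb : ∀ z, g z ≤ ‖A‖ := by
    intro z
    calc g z ≤ ‖A z.1‖ * ‖z.1‖ := norm_inner_le_norm _ _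
    _ ≤ (‖A‖ * ‖z.1‖) * ‖z.1‖ := by gcongr; exact A.le_opNorm z.1
    _ = ‖A‖ := by rw [z.2]; ring
  have hstep : ∀ z : {x : H // ‖x‖ = 1}, φ (g z ^ 2) ≤ R :=
    fun z => unit_bound A φ ⟨hφc, hφcont, hφm, hφ0, hφpos, hφtop⟩ α hα z.1 z.2
  rcases isEmpty_or_nonempty {x : H // ‖x‖ = 1} with hemp | hne
  · rw [numRad, Real.iSup_of_isEmpty]
    simpa [hφ0] using hR0
  · have hbdd : BddAbove (range g) := ⟨‖A‖, by rintro y ⟨z, rfl⟩; exact hgb z⟩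
    have hnr : numRad A = sSup (range g) := rfl
    obtain ⟨u, hu_mono, hu_tend, hu_mem⟩ :=
      exists_seq_tendsto_sSup (range_nonempty g) hbdd
    have hw0 : 0 ≤ numRad A := by
      obtain ⟨z⟩ := hne
      exact le_trans (hg0 z) (le_ciSup hbdd z)
    have hsq_tend : Filter.Tendsto (fun n => (u n) ^ 2) Filter.atTop (𝓝 (numRad A ^ 2)) := by
      rw [hnr]
      exact (hu_tend.pow 2)
    have hφcw : ContinuousWithinAt φ (Ici 0) (numRad A ^ 2) := hφcont _ (mem_Ici.mpr (sq_nonneg _))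
    have htend : Filter.Tendsto (fun n => φ ((u n) ^ 2)) Filter.atTop (𝓝 (φ (numRad A ^ 2))) := by
      apply hφcw.tendsto.comp
      rw [tendsto_nhdsWithin_iff]
      exact ⟨hsq_tend, Filter.Eventually.of_forall fun n => sq_nonneg (u n)⟩
    refine le_of_tendsto htend (Filter.Eventually.of_forall fun n => ?_)
    obtain ⟨z, hz⟩ := hu_mem n
    rw [← hz]
    exact hstep z

end Aux
end

section
/- Let A ∈ B(H), φ an Orlicz function, and α ∈ (0,1). Then φ(w(A)²) ≤ ‖α·φ(|A|²) + (1−α)·φ(|A*|²)‖. -/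
/-- Supporting line for a convex monotone function on `[0,∞)`. -/
lemma exists_affine_minorant {φ : ℝ → ℝ} (hc : ConvexOn ℝ (Set.Ici 0) φ)
    (hm : MonotoneOn φ (Set.Ici 0)) {u : ℝ} (hu : 0 ≤ u) :
    ∃ a b : ℝ, (∀ t : ℝ, 0 ≤ t → a * t + b ≤ φ t) ∧ a * u + b = φ u := by
  rcases eq_or_lt_of_le hu with h | h
  · exact ⟨0, φ 0, fun t ht => by simpa using hm (le_refl (0:ℝ)) ht ht, by rw [← h]; ring⟩
  · set S : Set ℝ := (fun s => (φ u - φ s) / (u - s)) '' Set.Ico 0 u with hS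
    have hne : S.Nonempty := ⟨_, ⟨0, ⟨le_refl _, h⟩, rfl⟩⟩
    have hub : ∀ y ∈ S, y ≤ (φ (u+1) - φ u) / (u + 1 - u) := by
      rintro y ⟨s, hs, rfl⟩
      exact hc.slope_mono_adjacent hs.1 (Set.mem_Ici.mpr (by linarith)) hs.2 (by linarith)
    have hbdd : BddAbove S := ⟨_, hub⟩
    set a : ℝ := sSup S with ha
    refine ⟨a, φ u - a * u, fun t ht => ?_, by ring⟩
    rcases lt_trichotomy t u with htu | htu | htu
    · have hmem : (φ u - φ t) / (u - t) ≤ a := le_csSup hbdd ⟨t, ⟨ht, htu⟩, rfl⟩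
      have h1 : φ u - φ t ≤ a * (u - t) := by
        have := (div_le_iff₀ (by linarith : (0:ℝ) < u - t)).mp hmem
        linarith
      linarith
    · subst htu; linarith
    · have hge : a ≤ (φ t - φ u) / (t - u) := by
        apply csSup_le hne
        rintro y ⟨s, hs, rfl⟩
        exact hc.slope_mono_adjacent hs.1 (Set.mem_Ici.mpr (by linarith)) hs.2 htu
      have h1 : a * (t - u) ≤ φ t - φ u := by
        have := (le_div_iff₀ (by linarith : (0:ℝ) < t - u)).mp hge
        linarith
      linarith

variable {H : Type*} [NormedAddCommGroup H] [InnerProductSpace ℂ H] [CompleteSpace H]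

example (T : H →L[ℂ] H) (hT : 0 ≤ T) (x : H) :
    0 ≤ RCLike.re (inner ℂ (T x) x : ℂ) :=
  ((ContinuousLinearMap.nonneg_iff_isPositive T).mp hT).re_inner_nonneg_left x

/-- Jensen's operator inequality via supporting lines. -/
lemma jensen_cfc {φ : ℝ → ℝ} (hc : ConvexOn ℝ (Set.Ici 0) φ)
    (hcont : ContinuousOn φ (Set.Ici 0)) (hm : MonotoneOn φ (Set.Ici 0))
    (T : H →L[ℂ] H) (hT : 0 ≤ T) (x : H) (hx : ‖x‖ = 1) :
    φ (RCLike.re (inner ℂ (T x) x : ℂ)) ≤ RCLike.re (inner ℂ (cfc φ T x) x : ℂ) := by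
  have hspec : ∀ t ∈ spectrum ℝ T, (0:ℝ) ≤ t := fun t ht => spectrum_nonneg_of_nonneg hT ht
  have hu : 0 ≤ RCLike.re (inner ℂ (T x) x : ℂ) :=
    ((ContinuousLinearMap.nonneg_iff_isPositive T).mp hT).re_inner_nonneg_left x
  obtain ⟨a, b, hab, habu⟩ := exists_affine_minorant hc hm hu
  set u := RCLike.re (inner ℂ (T x) x : ℂ)
  have hle : a • T + b • (1 : H →L[ℂ] H) ≤ cfc φ T := by
    have h1 : cfc (fun t : ℝ => a * t + b) T = a • T + b • 1 := by
      rw [cfc_add T (fun t => a * t) (fun _ => b) (by fun_prop) (by fun_prop)]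
      rw [cfc_const_mul a (fun t : ℝ => t) T (by fun_prop), cfc_id' (R := ℝ) T,
        cfc_const b T]
      congr 1
    rw [← h1]
    exact cfc_mono (fun t ht => hab t (hspec t ht)) (by fun_prop)
      (hcont.mono (fun t ht => Set.mem_Ici.mpr (hspec t ht)))
  have hpos := (ContinuousLinearMap.nonneg_iff_isPositive _).mp
    (sub_nonneg.mpr hle)
  have h2 := hpos.re_inner_nonneg_left x
  have h3 : RCLike.re (inner ℂ ((a • T + b • (1 : H →L[ℂ] H)) x) x : ℂ) = a * u + b := by
    have e1 : ((a • T + b • (1 : H →L[ℂ] H)) x) = a • T x + b • x := by simp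
    rw [e1, inner_add_left, RCLike.real_smul_eq_coe_smul (K := ℂ) a,
      RCLike.real_smul_eq_coe_smul (K := ℂ) b, inner_smul_left, inner_smul_left]
    simp only [map_add, RCLike.conj_ofReal, RCLike.mul_re, RCLike.ofReal_re, RCLike.ofReal_im,
      inner_self_im, inner_self_eq_norm_sq, hx]
    simp [u]
  rw [← habu]
  have h4 : RCLike.re (inner ℂ ((cfc φ T - (a • T + b • (1 : H →L[ℂ] H))) x) x : ℂ) =
      RCLike.re (inner ℂ (cfc φ T x) x : ℂ) - (a * u + b) := by
    rw [← h3]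
    simp [ContinuousLinearMap.sub_apply, inner_sub_left]
  rw [h4] at h2
  linarith
section Main

variable {H : Type*} [NormedAddCommGroup H] [InnerProductSpace ℂ H] [CompleteSpace H]

lemma key_bound {φ : ℝ → ℝ} (hc : ConvexOn ℝ (Set.Ici 0) φ)
    (hcont : ContinuousOn φ (Set.Ici 0)) (hm : MonotoneOn φ (Set.Ici 0))
    (A : H →L[ℂ] H) {α : ℝ} (hα : α ∈ Set.Ioo (0:ℝ) 1) (x : H) (hx : ‖x‖ = 1) :
    φ (‖(inner ℂ (A x) x : ℂ)‖ ^ 2) ≤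
      ‖α • cfc φ (ContinuousLinearMap.adjoint A * A) +
        (1 - α) • cfc φ (A * ContinuousLinearMap.adjoint A)‖ := by
  obtain ⟨hα0, hα1⟩ := hα
  set T₁ := ContinuousLinearMap.adjoint A * A with hT₁def
  set T₂ := A * ContinuousLinearMap.adjoint A with hT₂def
  have hT₁ : 0 ≤ T₁ := by
    rw [hT₁def, ← ContinuousLinearMap.star_eq_adjoint]
    exact star_mul_self_nonneg A
  have hT₂ : 0 ≤ T₂ := by
    rw [hT₂def, ← ContinuousLinearMap.star_eq_adjoint]
    exact mul_star_self_nonneg A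
  have e1 : RCLike.re (inner ℂ (T₁ x) x : ℂ) = ‖A x‖ ^ 2 := by
    have : (inner ℂ (T₁ x) x : ℂ) = inner ℂ (A x) (A x) := by
      rw [hT₁def, ContinuousLinearMap.mul_apply, ContinuousLinearMap.adjoint_inner_left]
    rw [this, inner_self_eq_norm_sq]
  have e2 : RCLike.re (inner ℂ (T₂ x) x : ℂ) = ‖ContinuousLinearMap.adjoint A x‖ ^ 2 := by
    have : (inner ℂ (T₂ x) x : ℂ) =
        inner ℂ (ContinuousLinearMap.adjoint A x) (ContinuousLinearMap.adjoint A x) := by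
      conv_lhs => rw [hT₂def, ContinuousLinearMap.mul_apply,
        ← ContinuousLinearMap.adjoint_adjoint A, ContinuousLinearMap.adjoint_inner_left]
      rw [ContinuousLinearMap.adjoint_adjoint]
    rw [this, inner_self_eq_norm_sq]
  set u₁ := ‖A x‖ ^ 2
  set u₂ := ‖ContinuousLinearMap.adjoint A x‖ ^ 2
  set s := ‖(inner ℂ (A x) x : ℂ)‖ ^ 2 with hsdef
  have hs1 : s ≤ u₁ := by
    have h := norm_inner_le_norm (𝕜 := ℂ) (A x) x
    rw [hx, mul_one] at h
    exact pow_le_pow_left₀ (norm_nonneg _) h 2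
  have hs2 : s ≤ u₂ := by
    have hswap : ‖(inner ℂ (A x) x : ℂ)‖ = ‖(inner ℂ (ContinuousLinearMap.adjoint A x) x : ℂ)‖ := by
      rw [norm_inner_symm (𝕜 := ℂ) (A x) x, ← ContinuousLinearMap.adjoint_inner_left]
    have h := norm_inner_le_norm (𝕜 := ℂ) (ContinuousLinearMap.adjoint A x) x
    rw [hx, mul_one] at h
    rw [hsdef, hswap]
    exact pow_le_pow_left₀ (norm_nonneg _) h 2
  have hs0 : 0 ≤ s := by positivity
  have hu₁0 : (0:ℝ) ≤ u₁ := by positivity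
  have hu₂0 : (0:ℝ) ≤ u₂ := by positivity
  have hmin : s ≤ α * u₁ + (1 - α) * u₂ := by nlinarith
  have hmix0 : (0:ℝ) ≤ α * u₁ + (1 - α) * u₂ := by nlinarith
  have step1 : φ s ≤ φ (α * u₁ + (1 - α) * u₂) := hm hs0 hmix0 hmin
  have step2 : φ (α * u₁ + (1 - α) * u₂) ≤ α * φ u₁ + (1 - α) * φ u₂ := by
    have h : φ (α • u₁ + (1 - α) • u₂) ≤ α • φ u₁ + (1 - α) • φ u₂ :=
      hc.2 (Set.mem_Ici.mpr hu₁0) (Set.mem_Ici.mpr hu₂0) (le_of_lt hα0) (by linarith) (by ring)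
    simpa using h
  have step3 : φ u₁ ≤ RCLike.re (inner ℂ (cfc φ T₁ x) x : ℂ) := by
    rw [← e1]; exact jensen_cfc hc hcont hm T₁ hT₁ x hx
  have step4 : φ u₂ ≤ RCLike.re (inner ℂ (cfc φ T₂ x) x : ℂ) := by
    rw [← e2]; exact jensen_cfc hc hcont hm T₂ hT₂ x hx
  set B := α • cfc φ T₁ + (1 - α) • cfc φ T₂ with hBdef
  have hBval : RCLike.re (inner ℂ (B x) x : ℂ) =
      α * RCLike.re (inner ℂ (cfc φ T₁ x) x : ℂ)
        + (1 - α) * RCLike.re (inner ℂ (cfc φ T₂ x) x : ℂ) := by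
    have e : B x = α • (cfc φ T₁ x) + (1 - α) • (cfc φ T₂ x) := by simp [hBdef]
    rw [e, inner_add_left, RCLike.real_smul_eq_coe_smul (K := ℂ) α,
      RCLike.real_smul_eq_coe_smul (K := ℂ) (1 - α), inner_smul_left, inner_smul_left]
    simp [RCLike.conj_ofReal, RCLike.mul_re]
  have hfin : RCLike.re (inner ℂ (B x) x : ℂ) ≤ ‖B‖ := by
    calc RCLike.re (inner ℂ (B x) x : ℂ) ≤ ‖(inner ℂ (B x) x : ℂ)‖ := RCLike.re_le_norm _
    _ ≤ ‖B x‖ * ‖x‖ := norm_inner_le_norm _ _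
    _ ≤ ‖B‖ * ‖x‖ * ‖x‖ := by
        gcongr
        exact B.le_opNorm x
    _ = ‖B‖ := by rw [hx]; ring
  calc φ s ≤ α * φ u₁ + (1 - α) * φ u₂ := le_trans step1 step2
  _ ≤ α * RCLike.re (inner ℂ (cfc φ T₁ x) x : ℂ)
        + (1 - α) * RCLike.re (inner ℂ (cfc φ T₂ x) x : ℂ) := by
      have h1 : (0:ℝ) ≤ α := le_of_lt hα0
      have h2 : (0:ℝ) ≤ 1 - α := by linarith
      nlinarith
  _ = RCLike.re (inner ℂ (B x) x : ℂ) := hBval.symm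
  _ ≤ ‖B‖ := hfin

end Main

theorem stmt13 (A : H →L[ℂ] H) (φ : ℝ → ℝ) (hφ : IsOrliczFunction φ)
    (α : ℝ) (hα : α ∈ Set.Ioo (0 : ℝ) 1) :
    φ (numRad A ^ 2) ≤
      ‖α • cfc φ (ContinuousLinearMap.adjoint A * A) +
        (1 - α) • cfc φ (A * ContinuousLinearMap.adjoint A)‖ := by
  obtain ⟨hc, hcont, hm, h0, -, -⟩ := hφ
  set M := ‖α • cfc φ (ContinuousLinearMap.adjoint A * A) +
      (1 - α) • cfc φ (A * ContinuousLinearMap.adjoint A)‖ with hM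
  have hM0 : 0 ≤ M := norm_nonneg _
  by_cases hne : Nonempty {x : H // ‖x‖ = 1}
  · set f : {x : H // ‖x‖ = 1} → ℝ := fun z => ‖(inner ℂ (A z.1) z.1 : ℂ)‖ with hf
    have hfnn : ∀ z, 0 ≤ f z := fun z => norm_nonneg _
    have hbdd : BddAbove (Set.range f) := by
      refine ⟨‖A‖, ?_⟩
      rintro y ⟨z, rfl⟩
      calc f z ≤ ‖A z.1‖ * ‖z.1‖ := norm_inner_le_norm _ _
      _ ≤ ‖A‖ * ‖z.1‖ * ‖z.1‖ := by gcongr; exact A.le_opNorm _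
      _ = ‖A‖ := by rw [z.2]; ring
    have hcsup : numRad A = ⨆ z, f z := rfl
    set c := numRad A with hcdef
    have hc0 : 0 ≤ c := le_trans (hfnn hne.some) (hcsup ▸ le_ciSup hbdd hne.some)
    have hseq : ∀ n : ℕ, ∃ z, c - 1/((n:ℝ)+1) < f z := by
      intro n
      apply exists_lt_of_lt_ciSup
      rw [← hcsup]
      have : (0:ℝ) < 1/((n:ℝ)+1) := by positivity
      linarith
    choose z hz using hseq
    have h1 : ∀ n, f (z n) ≤ c := fun n => hcsup ▸ le_ciSup hbdd (z n)
    have htend : Filter.Tendsto (fun n => f (z n)) Filter.atTop (nhds c) := by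
      have hlow : Filter.Tendsto (fun n : ℕ => c - 1/((n:ℝ)+1)) Filter.atTop (nhds c) := by
        have h := tendsto_one_div_add_atTop_nhds_zero_nat (𝕜 := ℝ)
        simpa using Filter.Tendsto.sub (tendsto_const_nhds (x := c)) h
      exact tendsto_of_tendsto_of_tendsto_of_le_of_le hlow tendsto_const_nhds
        (fun n => le_of_lt (hz n)) h1
    have hg : ContinuousOn (fun t : ℝ => φ (t^2)) (Set.Ici 0) :=
      hcont.comp (continuous_pow 2).continuousOn
        (fun t ht => Set.mem_Ici.mpr (by positivity))
    have hgc := hg.continuousWithinAt (Set.mem_Ici.mpr hc0)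
    have htend2 : Filter.Tendsto (fun n => φ (f (z n) ^ 2)) Filter.atTop (nhds (φ (c^2))) :=
      hgc.tendsto.comp (tendsto_nhdsWithin_of_tendsto_nhds_of_eventually_within _ htend
        (Filter.Eventually.of_forall fun n => Set.mem_Ici.mpr (hfnn _)))
    exact le_of_tendsto htend2 (Filter.Eventually.of_forall fun n =>
      key_bound hc hcont hm A hα (z n).1 (z n).2)
  · haveI : IsEmpty {x : H // ‖x‖ = 1} := not_nonempty_iff.mp hne
    have hz : numRad A = 0 := by
      rw [numRad, Real.iSup_of_isEmpty]
    rw [hz]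
    norm_num [h0]
    exact hM0
end

section
/- Let A ∈ B(H) and φ an Orlicz function. Then φ(w(A)²) ≤ (1/4)·‖φ(|A|²) + φ(|A*|²)‖ + (1/2)·φ(w(A²)). -/
variable {H : Type*} [NormedAddCommGroup H] [InnerProductSpace ℂ H] [CompleteSpace H]

private lemma support_line_s14 {φ : ℝ → ℝ} (hc : ConvexOn ℝ (Set.Ici 0) φ)
    (hm : MonotoneOn φ (Set.Ici 0)) (h0 : φ 0 = 0) {r : ℝ} (hr : 0 ≤ r) :
    ∃ a b : ℝ, a * r + b = φ r ∧ ∀ t, 0 ≤ t → a * t + b ≤ φ t := by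
  rcases eq_or_lt_of_le hr with rfl | hr
  · refine ⟨0, 0, by simp [h0], fun t ht => ?_⟩
    simpa [h0] using hm (Set.mem_Ici.mpr le_rfl) (Set.mem_Ici.mpr ht) ht
  · set S : Set ℝ := (fun t => (φ r - φ t) / (r - t)) '' Set.Ico 0 r with hS
    have hSne : S.Nonempty := ⟨_, ⟨0, ⟨le_rfl, hr⟩, rfl⟩⟩
    have hbdd : BddAbove S := by
      refine ⟨(φ (r + 1) - φ r) / ((r + 1) - r), fun y hy => ?_⟩
      obtain ⟨t, ht, rfl⟩ := hy
      exact hc.slope_mono_adjacent (Set.mem_Ici.mpr ht.1)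
        (Set.mem_Ici.mpr (by linarith [hr.le])) ht.2 (by linarith)
    set a := sSup S with ha
    refine ⟨a, φ r - a * r, by ring, fun t ht => ?_⟩
    rcases lt_trichotomy t r with h | h | h
    · have h1 : (φ r - φ t) / (r - t) ≤ a :=
        le_csSup hbdd ⟨t, ⟨ht, h⟩, rfl⟩
      have h2 : φ r - φ t ≤ a * (r - t) := by
        rw [div_le_iff₀ (by linarith)] at h1; linarith
      linarith
    · subst h; linarith
    · have h1 : a ≤ (φ t - φ r) / (t - r) := by
        refine csSup_le hSne fun y hy => ?_
        obtain ⟨t', ht', rfl⟩ := hy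
        exact hc.slope_mono_adjacent (Set.mem_Ici.mpr ht'.1)
          (Set.mem_Ici.mpr (by linarith)) ht'.2 h
      rw [le_div_iff₀ (by linarith)] at h1
      linarith

private lemma jensen_inner {φ : ℝ → ℝ} (hc : ConvexOn ℝ (Set.Ici 0) φ)
    (hm : MonotoneOn φ (Set.Ici 0)) (hcont : ContinuousOn φ (Set.Ici 0)) (h0 : φ 0 = 0)
    (T : H →L[ℂ] H) (hT : 0 ≤ T) {x : H} (hx : ‖x‖ = 1) :
    φ (RCLike.re (inner ℂ (T x) x : ℂ)) ≤ RCLike.re (inner ℂ (cfc φ T x) x : ℂ) := by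
  have hTsa : IsSelfAdjoint T := .of_nonneg hT
  have hspec : spectrum ℝ T ⊆ Set.Ici 0 := fun t ht => spectrum_nonneg_of_nonneg hT ht
  have hTpos : T.IsPositive := (ContinuousLinearMap.nonneg_iff_isPositive T).mp hT
  have hr : (0:ℝ) ≤ RCLike.re (inner ℂ (T x) x : ℂ) := (RCLike.nonneg_iff.mp (hTpos.inner_nonneg_left x)).1
  obtain ⟨a, b, heq, hline⟩ := support_line_s14 hc hm h0 hr
  have key : cfc (fun t : ℝ => a * t + b) T ≤ cfc φ T :=
    cfc_mono (fun t ht => hline t (hspec ht)) (by fun_prop) (hcont.mono hspec)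
  rw [cfc_add _ _ _, cfc_const_mul _ _ _, cfc_id' ℝ T, cfc_const b T] at key
  rw [ContinuousLinearMap.le_def] at key
  have h2 := (RCLike.nonneg_iff.mp (key.inner_nonneg_left x)).1
  have h3 : RCLike.re (inner ℂ ((a • T + algebraMap ℝ (H →L[ℂ] H) b) x) x : ℂ)
      = a * RCLike.re (inner ℂ (T x) x : ℂ) + b := by
    have hxx : RCLike.re (inner ℂ x x : ℂ) = 1 := by
      rw [inner_self_eq_norm_sq (𝕜 := ℂ)]; simp [hx]
    simp [ContinuousLinearMap.add_apply, inner_add_left, Algebra.algebraMap_eq_smul_one,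
      ContinuousLinearMap.smul_apply, ContinuousLinearMap.one_apply,
      inner_smul_real_left, RCLike.smul_re, hxx]
    simp [hx]
  have h4 : RCLike.re (inner ℂ ((cfc φ T - (a • T + algebraMap ℝ (H →L[ℂ] H) b)) x) x : ℂ)
      = RCLike.re (inner ℂ (cfc φ T x) x : ℂ)
        - RCLike.re (inner ℂ ((a • T + algebraMap ℝ (H →L[ℂ] H) b) x) x : ℂ) := by
    simp [ContinuousLinearMap.sub_apply, inner_sub_left]
  rw [h4, h3] at h2
  linarith [heq]

private lemma buzano {e : H} (he : ‖e‖ = 1) (u v : H) :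
    ‖(inner ℂ u e : ℂ) * (inner ℂ e v : ℂ)‖ ≤ (‖u‖ * ‖v‖ + ‖(inner ℂ u v : ℂ)‖) / 2 := by
  set w : H := ((2 : ℂ) * (inner ℂ e u : ℂ)) • e - u with hw
  have hconj2 : (starRingEnd ℂ) 2 = 2 := map_ofNat _ 2
  have hwn : ‖w‖ = ‖u‖ := by
    have hc : (inner ℂ (((2 : ℂ) * (inner ℂ e u : ℂ)) • e) u : ℂ)
        = 2 * ((‖(inner ℂ e u : ℂ)‖ : ℝ) : ℂ) ^ 2 := by
      rw [inner_smul_left, map_mul, hconj2, mul_assoc, RCLike.conj_mul]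
      norm_num
    have h1 : ‖w‖ ^ 2 = ‖u‖ ^ 2 := by
      rw [hw, @norm_sub_sq ℂ, hc, norm_smul]
      simp [he, norm_mul, ← Complex.ofReal_pow, Complex.ofReal_re]
      ring
    nlinarith [norm_nonneg w, norm_nonneg u]
  have hinner : (inner ℂ w v : ℂ) = 2 * (inner ℂ u e : ℂ) * (inner ℂ e v : ℂ) - inner ℂ u v := by
    rw [hw, inner_sub_left, inner_smul_left, map_mul, hconj2, ← inner_conj_symm u e]
  have h2 : ‖(2 : ℂ) * (inner ℂ u e : ℂ) * (inner ℂ e v : ℂ)‖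
      ≤ ‖(inner ℂ w v : ℂ)‖ + ‖(inner ℂ u v : ℂ)‖ := by
    calc ‖(2 : ℂ) * (inner ℂ u e : ℂ) * (inner ℂ e v : ℂ)‖
        = ‖(inner ℂ w v : ℂ) + (inner ℂ u v : ℂ)‖ := by rw [hinner]; ring_nf
      _ ≤ _ := norm_add_le _ _
  have h3 : ‖(inner ℂ w v : ℂ)‖ ≤ ‖u‖ * ‖v‖ := hwn ▸ norm_inner_le_norm w v
  have h4 : ‖(2 : ℂ) * (inner ℂ u e : ℂ) * (inner ℂ e v : ℂ)‖
      = 2 * ‖(inner ℂ u e : ℂ) * (inner ℂ e v : ℂ)‖ := by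
    rw [mul_assoc, norm_mul]; simp
  linarith

private lemma numRad_bddAbove (A : H →L[ℂ] H) :
    BddAbove (Set.range fun x : {x : H // ‖x‖ = 1} => ‖(inner ℂ (A x.1) x.1 : ℂ)‖) := by
  refine ⟨‖A‖, fun y hy => ?_⟩
  obtain ⟨x, rfl⟩ := hy
  calc ‖(inner ℂ (A x.1) x.1 : ℂ)‖ ≤ ‖A x.1‖ * ‖x.1‖ := norm_inner_le_norm _ _
    _ ≤ (‖A‖ * ‖x.1‖) * ‖x.1‖ := by
        have := A.le_opNorm x.1
        have h0 := norm_nonneg x.1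
        nlinarith [norm_nonneg (A x.1)]
    _ = ‖A‖ := by rw [x.2]; ring

private lemma le_numRad (A : H →L[ℂ] H) (x : {x : H // ‖x‖ = 1}) :
    ‖(inner ℂ (A x.1) x.1 : ℂ)‖ ≤ numRad A :=
  le_ciSup (numRad_bddAbove A) x

private lemma numRad_nonneg (A : H →L[ℂ] H) : 0 ≤ numRad A :=
  Real.iSup_nonneg fun _ => norm_nonneg _

set_option maxHeartbeats 1000000 in
theorem stmt14 (A : H →L[ℂ] H) (φ : ℝ → ℝ) (hφ : IsOrliczFunction φ) :
    φ (numRad A ^ 2) ≤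
      (1 / 4) * ‖cfc φ (ContinuousLinearMap.adjoint A * A) +
        cfc φ (A * ContinuousLinearMap.adjoint A)‖ + (1 / 2) * φ (numRad (A * A)) := by
  obtain ⟨hc, hcont, hm, h0, -, -⟩ := hφ
  rcases subsingleton_or_nontrivial H with hH | hH
  · have hE : IsEmpty {x : H // ‖x‖ = 1} := ⟨fun x => by
      have hx := x.2; rw [Subsingleton.elim x.1 0] at hx; simp at hx⟩
    have hsub : Subsingleton (H →L[ℂ] H) :=
      ⟨fun f g => ContinuousLinearMap.ext fun x => Subsingleton.elim _ _⟩
    have h1 : numRad A = 0 := Real.iSup_of_isEmpty _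
    have h2 : numRad (A * A) = 0 := Real.iSup_of_isEmpty _
    have h4 : (cfc φ (ContinuousLinearMap.adjoint A * A) +
        cfc φ (A * ContinuousLinearMap.adjoint A)) = 0 := Subsingleton.elim _ _
    rw [h1, h2, h4]
    simp [h0]
  · have hne : Nonempty {x : H // ‖x‖ = 1} := by
      obtain ⟨x, hx⟩ := exists_norm_eq H (zero_le_one (α := ℝ))
      exact ⟨⟨x, hx⟩⟩
    set B := ContinuousLinearMap.adjoint A * A with hBdef
    set C := A * ContinuousLinearMap.adjoint A with hCdef
    have hB : (0 : H →L[ℂ] H) ≤ B := by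
      rw [hBdef, ← ContinuousLinearMap.star_eq_adjoint]; exact star_mul_self_nonneg A
    have hC : (0 : H →L[ℂ] H) ≤ C := by
      rw [hCdef, ← ContinuousLinearMap.star_eq_adjoint]; exact mul_star_self_nonneg A
    set K : ℝ := (1 / 4) * ‖cfc φ B + cfc φ C‖ + (1 / 2) * φ (numRad (A * A)) with hK
    have key : ∀ x : {x : H // ‖x‖ = 1}, φ (‖(inner ℂ (A x.1) x.1 : ℂ)‖ ^ 2) ≤ K := by
      rintro ⟨x, hx⟩
      set s : ℝ := RCLike.re (inner ℂ (B x) x : ℂ) with hsdef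
      set t : ℝ := RCLike.re (inner ℂ (C x) x : ℂ) with htdef
      have hs : s = ‖A x‖ ^ 2 := by
        rw [hsdef, hBdef]
        rw [show ((ContinuousLinearMap.adjoint A * A) x) =
          ContinuousLinearMap.adjoint A (A x) from rfl]
        rw [ContinuousLinearMap.adjoint_inner_left, inner_self_eq_norm_sq (𝕜 := ℂ)]
      have ht : t = ‖ContinuousLinearMap.adjoint A x‖ ^ 2 := by
        rw [htdef, hCdef]
        rw [show ((A * ContinuousLinearMap.adjoint A) x) =
          A (ContinuousLinearMap.adjoint A x) from rfl]
        rw [← ContinuousLinearMap.adjoint_inner_right, inner_self_eq_norm_sq (𝕜 := ℂ)]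
      set v : ℝ := ‖(inner ℂ (A x) x : ℂ)‖ with hvdef
      set u₀ : ℝ := numRad (A * A) with hudef
      have hu₀ : 0 ≤ u₀ := numRad_nonneg _
      -- Buzano step
      have hbz := buzano hx (A x) (ContinuousLinearMap.adjoint A x)
      have hswap : (inner ℂ x (ContinuousLinearMap.adjoint A x) : ℂ) = inner ℂ (A x) x :=
        ContinuousLinearMap.adjoint_inner_right A x x
      have hA2 : (inner ℂ (A x) (ContinuousLinearMap.adjoint A x) : ℂ)
          = inner ℂ ((A * A) x) x := ContinuousLinearMap.adjoint_inner_right A (A x) x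
      rw [hswap, hA2] at hbz
      have hnr : ‖(inner ℂ ((A * A) x) x : ℂ)‖ ≤ u₀ := le_numRad (A * A) ⟨x, hx⟩
      have hv2 : v ^ 2 ≤ (s + t) / 4 + u₀ / 2 := by
        have h5 : ‖(inner ℂ (A x) x : ℂ) * (inner ℂ (A x) x : ℂ)‖ = v ^ 2 := by
          rw [norm_mul]; ring
        rw [h5] at hbz
        have hAM : ‖A x‖ * ‖ContinuousLinearMap.adjoint A x‖ ≤ (s + t) / 2 := by
          rw [hs, ht]
          nlinarith [sq_nonneg (‖A x‖ - ‖ContinuousLinearMap.adjoint A x‖)]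
        nlinarith
      -- positivity facts
      have hs0 : 0 ≤ s := hs ▸ sq_nonneg _
      have ht0 : 0 ≤ t := ht ▸ sq_nonneg _
      -- convexity splitting
      have step1 : φ (v ^ 2) ≤ φ ((s + t) / 4 + u₀ / 2) :=
        hm (Set.mem_Ici.mpr (sq_nonneg v)) (Set.mem_Ici.mpr (by linarith)) hv2
      have step2 : φ ((s + t) / 4 + u₀ / 2) ≤ (1/2) * φ ((s + t) / 2) + (1/2) * φ u₀ := by
        have h6 := hc.2 (Set.mem_Ici.mpr (by linarith : (0:ℝ) ≤ (s + t) / 2))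
          (Set.mem_Ici.mpr hu₀) (by norm_num : (0:ℝ) ≤ 1/2) (by norm_num : (0:ℝ) ≤ 1/2)
          (by norm_num)
        simp only [smul_eq_mul] at h6
        have he : (1/2 : ℝ) * ((s + t) / 2) + (1/2) * u₀ = (s + t) / 4 + u₀ / 2 := by ring
        rw [he] at h6
        exact h6
      have step3 : φ ((s + t) / 2) ≤ (1/2) * φ s + (1/2) * φ t := by
        have h6 := hc.2 (Set.mem_Ici.mpr hs0) (Set.mem_Ici.mpr ht0)
          (by norm_num : (0:ℝ) ≤ 1/2) (by norm_num : (0:ℝ) ≤ 1/2) (by norm_num)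
        simp only [smul_eq_mul] at h6
        have he : (1/2 : ℝ) * s + (1/2) * t = (s + t) / 2 := by ring
        rw [he] at h6
        exact h6
      -- Jensen steps
      have j1 : φ s ≤ RCLike.re (inner ℂ (cfc φ B x) x : ℂ) :=
        jensen_inner hc hm hcont h0 B hB hx
      have j2 : φ t ≤ RCLike.re (inner ℂ (cfc φ C x) x : ℂ) :=
        jensen_inner hc hm hcont h0 C hC hx
      -- norm bound
      have hnorm : RCLike.re (inner ℂ (cfc φ B x) x : ℂ) + RCLike.re (inner ℂ (cfc φ C x) x : ℂ)
          ≤ ‖cfc φ B + cfc φ C‖ := by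
        have e1 : RCLike.re (inner ℂ (cfc φ B x) x : ℂ) + RCLike.re (inner ℂ (cfc φ C x) x : ℂ)
            = RCLike.re (inner ℂ ((cfc φ B + cfc φ C) x) x : ℂ) := by
          simp [ContinuousLinearMap.add_apply, inner_add_left]
        rw [e1]
        calc RCLike.re (inner ℂ ((cfc φ B + cfc φ C) x) x : ℂ)
            ≤ ‖(inner ℂ ((cfc φ B + cfc φ C) x) x : ℂ)‖ := RCLike.re_le_norm _
          _ ≤ ‖(cfc φ B + cfc φ C) x‖ * ‖x‖ := norm_inner_le_norm _ _
          _ ≤ (‖cfc φ B + cfc φ C‖ * ‖x‖) * ‖x‖ := by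
              have := (cfc φ B + cfc φ C).le_opNorm x
              nlinarith [norm_nonneg ((cfc φ B + cfc φ C) x), norm_nonneg x]
          _ = ‖cfc φ B + cfc φ C‖ := by rw [hx]; ring
      rw [hK]
      linarith
    -- sup step
    set ψ : ℝ → ℝ := fun r => φ (max r 0 ^ 2) with hψdef
    have hψm : Monotone ψ := fun r₁ r₂ h12 =>
      hm (Set.mem_Ici.mpr (sq_nonneg _)) (Set.mem_Ici.mpr (sq_nonneg _))
        (pow_le_pow_left₀ (le_max_right r₁ 0) (max_le_max h12 le_rfl) 2)
    have hψc : Continuous ψ := by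
      refine hcont.comp_continuous ?_ (fun r => Set.mem_Ici.mpr (sq_nonneg _))
      fun_prop
    have hL : φ (numRad A ^ 2) = ψ (numRad A) := by
      rw [hψdef]
      simp only [max_eq_left (numRad_nonneg A)]
    rw [hL, show numRad A = ⨆ x : {x : H // ‖x‖ = 1}, ‖(inner ℂ (A x.1) x.1 : ℂ)‖ from rfl]
    rw [hψm.map_ciSup_of_continuousAt hψc.continuousAt (numRad_bddAbove A)]
    refine ciSup_le fun x => ?_
    have e2 : ψ ‖(inner ℂ (A x.1) x.1 : ℂ)‖ = φ (‖(inner ℂ (A x.1) x.1 : ℂ)‖ ^ 2) := by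
      rw [hψdef]; simp only [max_eq_left (norm_nonneg _)]
    rw [e2]
    exact key x
end
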